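/- arXiv:2103.10261 — 4 statements merged into one kernel-verified Lean document; each statement's English description precedes it below -/
import Mathlib

section
/- Let d ≥ 2 be a real number and let Φ₁, Φ₂ be Schwartz functions on ℝ. Then there exist nonnegative Schwartz functions Ψ₁ on ℝ and Ψ₂ on ℝ² such that for all x ∈ ℝ with |x| ≥ 1 and all c ∈ ℝ∖{0}: | ∫_{ℝ∖{0}} Φ₁(x/v) |v|^{−d} Φ₂(c − v) dv | ≤ Ψ₁(x/c) |c|^{−d} + Ψ₂(x, c); in particular the integral on the left converges absolutely. (Lemma 9.3(i) of the paper, archimedean case F = ℝ.) -/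
open MeasureTheory Real Set Function
open scoped ContDiff

set_option maxHeartbeats 2000000
set_option synthInstance.maxHeartbeats 100000

noncomputable section

private lemma one_add_pow_le (t : ℝ) (ht : 0 ≤ t) (j : ℕ) : (1+t)^j ≤ 2^j * (1+t^j) := by
  rcases le_total t 1 with h | h
  · have h1 : (1+t)^j ≤ 2^j := pow_le_pow_left₀ (by linarith) (by linarith) j
    have h2 : (0:ℝ) ≤ t^j := pow_nonneg ht j
    nlinarith [pow_pos (show (0:ℝ) < 2 by norm_num) j]
  · have h1 : (1+t)^j ≤ (2*t)^j := pow_le_pow_left₀ (by linarith) (by linarith) j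
    rw [mul_pow] at h1
    nlinarith [pow_pos (show (0:ℝ) < 2 by norm_num) j, pow_nonneg ht j]

private lemma peetre (c v : ℝ) : 1 + |v| ≤ (1+|c|)*(1+|c-v|) := by
  have h : |v| ≤ |c| + |c - v| := by
    have := abs_sub_abs_le_abs_sub c (c - v)
    have h2 : c - (c - v) = v := by ring
    rw [h2] at this
    have h3 := abs_sub (c) (c-v)
    nlinarith [abs_nonneg (c-v), abs_nonneg c, abs_sub_abs_le_abs_sub v c, abs_sub_comm v c,
      abs_nonneg v, abs_add_le c (v - c), abs_sub_comm (v) (c)]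
  nlinarith [abs_nonneg c, abs_nonneg (c-v), mul_nonneg (abs_nonneg c) (abs_nonneg (c-v))]

private lemma decay_const (Φ : SchwartzMap ℝ ℂ) (k : ℕ) :
    ∃ Dk : ℝ, 0 ≤ Dk ∧ ∀ u : ℝ, ‖Φ u‖ * (1+|u|)^k ≤ Dk := by
  have hb : ∀ u : ℝ, ‖Φ u‖ * (1+|u|)^k ≤
      2^k * ((Finset.Iic ((k,0) : ℕ × ℕ)).sup fun m => SchwartzMap.seminorm ℝ m.1 m.2) Φ := by
    intro u
    have h := SchwartzMap.one_add_le_sup_seminorm_apply (𝕜 := ℝ) (m := ((k,0) : ℕ × ℕ))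
      le_rfl le_rfl Φ u
    rw [norm_iteratedFDeriv_zero, Real.norm_eq_abs] at h
    rw [mul_comm]
    exact h
  refine ⟨_, ?_, hb⟩
  refine le_trans ?_ (hb 0)
  positivity

private lemma rpow_half_bound (d a b : ℝ) (hd : 0 ≤ d) (ha : 0 < a) (hab : a/2 ≤ b) :
    b ^ (-d) ≤ 2 ^ d * a ^ (-d) := by
  have hb : 0 < b := lt_of_lt_of_le (by positivity) hab
  rw [Real.rpow_neg hb.le, Real.rpow_neg ha.le]
  have h1 : (a/2) ^ d ≤ b ^ d := Real.rpow_le_rpow (by positivity) hab hd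
  have h2 : (b ^ d)⁻¹ ≤ ((a/2) ^ d)⁻¹ := by
    exact inv_anti₀ (Real.rpow_pos_of_pos (by positivity) d) h1
  refine h2.trans ?_
  rw [Real.div_rpow ha.le (by norm_num : (0:ℝ) ≤ 2), inv_div, div_eq_mul_inv]

-- main pointwise bound
private lemma norm_f_le (d : ℝ) (hd : 2 ≤ d) (Φ₁ Φ₂ : SchwartzMap ℝ ℂ) (j : ℕ) (hdj : d ≤ (j:ℝ))
    (Dj : ℝ) (hDj : ∀ u : ℝ, ‖Φ₁ u‖ * (1+|u|)^j ≤ Dj) (x c v : ℝ) (hx : 1 ≤ |x|) :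
    ‖Φ₁ (x / v) * ((|v| ^ (-d) : ℝ) : ℂ) * Φ₂ (c - v)‖ ≤
      Dj * 2^j / (1+|x|)^j * ((1+|v|)^j * ‖Φ₂ (c-v)‖) := by
  have hDj0 : 0 ≤ Dj := le_trans (by positivity) (hDj 0)
  have hxpos : (0:ℝ) < 1 + |x| := by positivity
  rw [norm_mul, norm_mul, Complex.norm_real, Real.norm_eq_abs,
    abs_of_nonneg (Real.rpow_nonneg (abs_nonneg v) _)]
  rcases eq_or_ne v 0 with rfl | hv
  · rw [abs_zero, Real.zero_rpow (by linarith : -d ≠ 0)]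
    rw [mul_zero, zero_mul]
    positivity
  · have hva : 0 < |v| := abs_pos.mpr hv
    have h1 : ‖Φ₁ (x/v)‖ ≤ Dj / (1+|x/v|)^j := by
      rw [le_div_iff₀ (by positivity)]
      exact hDj (x/v)
    have h2 : |v| ^ (-d) / (1+|x/v|)^j ≤ 2^j * (1+|v|)^j / (1+|x|)^j := by
      have hxv : |x/v| = |x| / |v| := abs_div x v
      have hb : (1+|x|) / (2*|v|) ≤ 1 + |x/v| := by
        rw [hxv, div_le_iff₀ (by positivity)]
        have hexp : (1 + |x|/|v|) * (2*|v|) = 2*|v| + 2*|x| := by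
          field_simp
        rw [hexp]
        nlinarith
      have hbpos : (0:ℝ) < (1+|x|) / (2*|v|) := by positivity
      have hinv : (1+|x/v|)⁻¹ ≤ 2*|v|/(1+|x|) := by
        have := inv_anti₀ hbpos hb
        rwa [inv_div] at this
      have hinvpow : ((1+|x/v|)^j)⁻¹ ≤ (2*|v|)^j/(1+|x|)^j := by
        rw [← inv_pow, ← div_pow]
        exact pow_le_pow_left₀ (by positivity) hinv j
      have hrw : |v| ^ (-d) / (1+|x/v|)^j = |v| ^ (-d) * ((1+|x/v|)^j)⁻¹ := div_eq_mul_inv _ _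
      rw [hrw]
      have step1 : |v| ^ (-d) * ((1+|x/v|)^j)⁻¹ ≤ |v| ^ (-d) * ((2*|v|)^j/(1+|x|)^j) :=
        mul_le_mul_of_nonneg_left hinvpow (Real.rpow_nonneg (abs_nonneg v) _)
      refine step1.trans ?_
      rw [mul_pow, div_eq_mul_inv, div_eq_mul_inv]
      have hvpow : |v| ^ (-d) * (2^j * |v|^j) = 2^j * |v| ^ ((j:ℝ) - d) := by
        rw [← Real.rpow_natCast |v| j,
          show |v| ^ (-d) * ((2:ℝ)^j * |v| ^ ((j:ℕ):ℝ)) = 2^j * (|v| ^ (-d) * |v| ^ ((j:ℕ):ℝ)) from by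
            ring,
          ← Real.rpow_add hva, show (-d) + ((j:ℕ):ℝ) = ((j:ℕ):ℝ) - d from by ring]
      rw [← mul_assoc, hvpow]
      have hle : |v| ^ ((j:ℝ) - d) ≤ (1+|v|)^j := by
        have e1 : |v| ^ ((j:ℝ) - d) ≤ (1+|v|) ^ ((j:ℝ) - d) :=
          Real.rpow_le_rpow (abs_nonneg v) (by linarith) (by linarith)
        have e2 : (1+|v|) ^ ((j:ℝ) - d) ≤ (1+|v|) ^ ((j:ℝ)) :=
          Real.rpow_le_rpow_of_exponent_le (by linarith) (by linarith)
        have e3 : (1+|v|) ^ ((j:ℝ)) = (1+|v|)^j := Real.rpow_natCast _ j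
        linarith
      have h2j : (0:ℝ) ≤ 2^j := by positivity
      have hinvx : (0:ℝ) ≤ ((1+|x|)^j)⁻¹ := by positivity
      calc 2^j * |v| ^ ((j:ℝ) - d) * ((1+|x|)^j)⁻¹
          ≤ 2^j * (1+|v|)^j * ((1+|x|)^j)⁻¹ := by
            refine mul_le_mul_of_nonneg_right ?_ hinvx
            exact mul_le_mul_of_nonneg_left hle h2j
        _ = 2^j * (1+|v|)^j * ((1+|x|)^j)⁻¹ := rfl
    -- assemble
    have hΦ₂ : (0:ℝ) ≤ ‖Φ₂ (c-v)‖ := norm_nonneg _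
    calc ‖Φ₁ (x/v)‖ * |v| ^ (-d) * ‖Φ₂ (c-v)‖
        ≤ (Dj / (1+|x/v|)^j) * |v| ^ (-d) * ‖Φ₂ (c-v)‖ := by
          refine mul_le_mul_of_nonneg_right ?_ hΦ₂
          exact mul_le_mul_of_nonneg_right h1 (Real.rpow_nonneg (abs_nonneg v) _)
      _ = Dj * (|v| ^ (-d) / (1+|x/v|)^j) * ‖Φ₂ (c-v)‖ := by ring
      _ ≤ Dj * (2^j * (1+|v|)^j / (1+|x|)^j) * ‖Φ₂ (c-v)‖ := by
          refine mul_le_mul_of_nonneg_right ?_ hΦ₂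
          exact mul_le_mul_of_nonneg_left h2 hDj0
      _ = Dj * 2^j / (1+|x|)^j * ((1+|v|)^j * ‖Φ₂ (c-v)‖) := by ring

lemma exists_schwartz_majorant (C : ℕ → ℝ) (hC : ∀ k, 0 ≤ C k) :
    ∃ ψ : SchwartzMap ℝ ℝ, (∀ t, 0 ≤ ψ t) ∧
      ∀ (r t : ℝ), (∀ k : ℕ, r ≤ C k / (1 + t ^ 2) ^ k) → r ≤ ψ t := by
  classical
  set u : ℝ → ℝ := fun y => ⨅ k : ℕ, (3:ℝ) ^ k * C k / (1 + y ^ 2) ^ k with hu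
  have hpos : ∀ y : ℝ, (0:ℝ) < 1 + y ^ 2 := fun y => by positivity
  have hBdd : ∀ y : ℝ, BddBelow (Set.range fun k : ℕ => (3:ℝ) ^ k * C k / (1 + y ^ 2) ^ k) := by
    intro y
    refine ⟨0, ?_⟩
    rintro _ ⟨k, rfl⟩
    have := hC k
    positivity
  have hu_nonneg : ∀ y, 0 ≤ u y := by
    intro y
    refine le_ciInf fun k => ?_
    have := hC k
    positivity
  have hu_le : ∀ (k : ℕ) (y : ℝ), u y ≤ (3:ℝ) ^ k * C k / (1 + y ^ 2) ^ k :=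
    fun k y => ciInf_le (hBdd y) k
  have hu_meas : Measurable u := by
    refine Measurable.iInf fun k => ?_
    have : Continuous fun y : ℝ => (3:ℝ) ^ k * C k / (1 + y ^ 2) ^ k := by
      refine continuous_const.div (by continuity) fun y => ?_
      exact (pow_pos (hpos y) k).ne'
    exact this.measurable
  have hu_bdd : ∀ y, ‖u y‖ ≤ C 0 := by
    intro y
    rw [Real.norm_eq_abs, abs_of_nonneg (hu_nonneg y)]
    simpa using hu_le 0 y
  have hu_loc : LocallyIntegrable u volume := by
    intro x
    rcases exists_compact_mem_nhds x with ⟨K, hK, hKx⟩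
    refine ⟨K, hKx, ?_⟩
    exact Measure.integrableOn_of_bounded hK.measure_lt_top.ne
      hu_meas.aestronglyMeasurable (ae_of_all _ hu_bdd)
  -- the key comparison
  have key : ∀ t y : ℝ, |t - y| ≤ 1 → 1 + t ^ 2 ≤ 3 * (1 + y ^ 2) := by
    intro t y h
    have h' : (t - y) ^ 2 ≤ 1 := by
      rw [← sq_abs]
      exact pow_le_one₀ (abs_nonneg _) h
    nlinarith [sq_nonneg (t - 2 * y)]
  -- bump function
  let b : ContDiffBump (0:ℝ) := ⟨1/2, 1, by norm_num, by norm_num⟩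
  set ρ : ℝ → ℝ := b.normed volume with hρ
  have hρ_cd : ContDiff ℝ ∞ ρ := b.contDiff_normed
  have hρ_cs : HasCompactSupport ρ := b.hasCompactSupport_normed
  have hρ_supp : support ρ = Metric.ball (0:ℝ) 1 := by
    simpa using b.support_normed_eq
  have hρ_nonneg : ∀ y, 0 ≤ ρ y := fun y => b.nonneg_normed y
  have hρ_int : ∫ y, ρ y = 1 := b.integral_normed
  -- iterated derivatives of ρ
  have hρn_cd : ∀ n : ℕ, ContDiff ℝ ∞ (iteratedDeriv n ρ) := by
    intro n
    rw [iteratedDeriv_eq_iterate]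
    exact hρ_cd.iterate_deriv n
  have hρn_supp : ∀ n : ℕ, support (iteratedDeriv n ρ) ⊆ Metric.closedBall (0:ℝ) 1 := by
    intro n
    induction n with
    | zero =>
      rw [iteratedDeriv_zero, hρ_supp]
      exact Metric.ball_subset_closedBall
    | succ n ih =>
      intro y hy
      rw [iteratedDeriv_succ] at hy
      have := support_deriv_subset hy
      have h2 : tsupport (iteratedDeriv n ρ) ⊆ Metric.closedBall (0:ℝ) 1 :=
        closure_minimal ih Metric.isClosed_closedBall
      exact h2 this
  have hρn_cs : ∀ n : ℕ, HasCompactSupport (iteratedDeriv n ρ) := by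
    intro n
    exact HasCompactSupport.intro (isCompact_closedBall (0:ℝ) 1) fun y hy =>
      notMem_support.mp (fun hs => hy (hρn_supp n hs))
  have hρn_int : ∀ n : ℕ, Integrable (iteratedDeriv n ρ) :=
    fun n => (hρn_cd n).continuous.integrable_of_hasCompactSupport (hρn_cs n)
  -- the convolution
  set L : ℝ →L[ℝ] ℝ →L[ℝ] ℝ := ContinuousLinearMap.lsmul ℝ ℝ with hL
  set ψf : ℝ → ℝ := convolution u ρ L volume with hψf
  have hψ_smooth : ContDiff ℝ ∞ ψf :=
    HasCompactSupport.contDiff_convolution_right L hρ_cs hu_loc hρ_cd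
  have hconv : ∀ n : ℕ, iteratedDeriv n ψf = convolution u (iteratedDeriv n ρ) L volume := by
    intro n
    induction n with
    | zero => simp [iteratedDeriv_zero, hψf]
    | succ n ih =>
      funext t
      rw [iteratedDeriv_succ, ih]
      have hd := HasCompactSupport.hasDerivAt_convolution_right L hu_loc (hρn_cs n)
        ((hρn_cd n).of_le (mod_cast le_top)) t
      rw [hd.deriv, ← iteratedDeriv_succ]
  -- pointwise bound for a convolution with any of the iterated derivatives
  have hbound : ∀ (k n : ℕ) (t : ℝ),
      ‖convolution u (iteratedDeriv n ρ) L volume t‖ ≤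
        (9:ℝ) ^ k * C k / (1 + t ^ 2) ^ k * ∫ y, ‖iteratedDeriv n ρ y‖ := by
    intro k n t
    have hgint : Integrable (fun y : ℝ => (9:ℝ) ^ k * C k / (1 + t ^ 2) ^ k
        * ‖iteratedDeriv n ρ (t - y)‖) := by
      exact (((hρn_int n).norm).comp_sub_left t).const_mul _
    rw [convolution_lsmul]
    refine le_trans (norm_integral_le_of_norm_le hgint (ae_of_all _ fun y => ?_)) ?_
    · rw [norm_smul, Real.norm_eq_abs (u y), abs_of_nonneg (hu_nonneg y)]
      by_cases h1 : |t - y| ≤ 1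
      · have h2 : u y ≤ (9:ℝ) ^ k * C k / (1 + t ^ 2) ^ k := by
          refine (hu_le k y).trans ?_
          rw [div_le_div_iff₀ (pow_pos (hpos y) k) (pow_pos (hpos t) k)]
          have h3 : (1 + t ^ 2) ^ k ≤ 3 ^ k * (1 + y ^ 2) ^ k := by
            rw [← mul_pow]
            exact pow_le_pow_left₀ (le_of_lt (hpos t)) (key t y h1) k
          have h9 : (9:ℝ) ^ k = 3 ^ k * 3 ^ k := by rw [← mul_pow]; norm_num
          calc (3:ℝ) ^ k * C k * (1 + t ^ 2) ^ k ≤ 3 ^ k * C k * (3 ^ k * (1 + y ^ 2) ^ k) := by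
                have : (0:ℝ) ≤ 3 ^ k * C k := by have := hC k; positivity
                exact mul_le_mul_of_nonneg_left h3 this
            _ = 9 ^ k * C k * (1 + y ^ 2) ^ k := by rw [h9]; ring
        exact mul_le_mul_of_nonneg_right h2 (norm_nonneg _)
      · have h0 : iteratedDeriv n ρ (t - y) = 0 := by
          by_contra h2
          have := hρn_supp n (mem_support.mpr h2)
          rw [Metric.mem_closedBall, dist_zero_right, Real.norm_eq_abs] at this
          exact h1 this
        rw [h0, norm_zero, mul_zero]
        have := hC k
        positivity
    · rw [MeasureTheory.integral_const_mul]
      have : ∫ y, ‖iteratedDeriv n ρ (t - y)‖ = ∫ y, ‖iteratedDeriv n ρ y‖ :=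
        integral_sub_left_eq_self (fun y => ‖iteratedDeriv n ρ y‖) volume t
      rw [this]
  -- assemble the SchwartzMap
  have hdecay : ∀ k n : ℕ, ∃ Cb : ℝ, ∀ t : ℝ, ‖t‖ ^ k * ‖iteratedFDeriv ℝ n ψf t‖ ≤ Cb := by
    intro k n
    refine ⟨(9:ℝ) ^ k * C k * ∫ y, ‖iteratedDeriv n ρ y‖, fun t => ?_⟩
    have h1 : ‖iteratedFDeriv ℝ n ψf t‖ = ‖iteratedDeriv n ψf t‖ :=
      norm_iteratedFDeriv_eq_norm_iteratedDeriv
    rw [h1, hconv n]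
    have h2 := hbound k n t
    have hIn : 0 ≤ ∫ y, ‖iteratedDeriv n ρ y‖ := integral_nonneg fun y => norm_nonneg _
    have h3 : ‖t‖ ^ k ≤ (1 + t ^ 2) ^ k := by
      refine pow_le_pow_left₀ (norm_nonneg _) ?_ k
      rw [Real.norm_eq_abs]
      nlinarith [sq_nonneg (|t| - 1), sq_abs t]
    calc ‖t‖ ^ k * ‖convolution u (iteratedDeriv n ρ) L volume t‖
        ≤ (1 + t ^ 2) ^ k * ((9:ℝ) ^ k * C k / (1 + t ^ 2) ^ k * ∫ y, ‖iteratedDeriv n ρ y‖) := by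
          exact mul_le_mul h3 h2 (norm_nonneg _) (le_of_lt (pow_pos (hpos t) k))
      _ = (9:ℝ) ^ k * C k * ∫ y, ‖iteratedDeriv n ρ y‖ := by
          have ha : ((1:ℝ) + t ^ 2) ^ k ≠ 0 := (pow_pos (hpos t) k).ne'
          rw [div_mul_eq_mul_div, mul_comm, div_mul_cancel₀ _ ha]
  have hnn : ∀ t, 0 ≤ ψf t := by
    intro t
    rw [hψf, convolution_lsmul]
    exact integral_nonneg fun y => mul_nonneg (hu_nonneg y) (hρ_nonneg _)
  have hdom : ∀ (r t : ℝ), (∀ k : ℕ, r ≤ C k / (1 + t ^ 2) ^ k) → r ≤ ψf t := by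
    intro r t hr
    have hρt_int : Integrable (fun y : ℝ => ρ (t - y)) :=
      (hρ_cd.continuous.integrable_of_hasCompactSupport hρ_cs).comp_sub_left t
    have huρ_int : Integrable (fun y : ℝ => u y * ρ (t - y)) := by
      refine Integrable.mono' (hρt_int.const_mul (C 0)) ?_ (ae_of_all _ fun y => ?_)
      · exact (hu_meas.aestronglyMeasurable.mul
          ((hρ_cd.continuous.comp (continuous_const.sub continuous_id)).aestronglyMeasurable))
      · rw [Real.norm_eq_abs, abs_mul, abs_of_nonneg (hu_nonneg y), abs_of_nonneg (hρ_nonneg _)]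
        exact mul_le_mul_of_nonneg_right ((hu_bdd y).trans_eq' (by
          rw [Real.norm_eq_abs, abs_of_nonneg (hu_nonneg y)]) |>.trans_eq rfl) (hρ_nonneg _)
    have step : ∀ y : ℝ, r * ρ (t - y) ≤ u y * ρ (t - y) := by
      intro y
      by_cases h0 : ρ (t - y) = 0
      · rw [h0, mul_zero, mul_zero]
      · have hmem : t - y ∈ support ρ := mem_support.mpr h0
        rw [hρ_supp, Metric.mem_ball, dist_zero_right, Real.norm_eq_abs] at hmem
        have hru : r ≤ u y := by
          refine le_ciInf fun k => ?_
          refine (hr k).trans ?_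
          rw [div_le_div_iff₀ (pow_pos (hpos t) k) (pow_pos (hpos y) k)]
          have h3 : (1 + y ^ 2) ^ k ≤ 3 ^ k * (1 + t ^ 2) ^ k := by
            rw [← mul_pow]
            refine pow_le_pow_left₀ (le_of_lt (hpos y)) ?_ k
            exact key y t (by rw [abs_sub_comm]; exact le_of_lt hmem)
          calc C k * (1 + y ^ 2) ^ k ≤ C k * (3 ^ k * (1 + t ^ 2) ^ k) :=
                mul_le_mul_of_nonneg_left h3 (hC k)
            _ = 3 ^ k * C k * (1 + t ^ 2) ^ k := by ring
        exact mul_le_mul_of_nonneg_right hru (hρ_nonneg _)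
    have : r * ∫ y, ρ (t - y) ≤ ∫ y, u y * ρ (t - y) := by
      rw [← MeasureTheory.integral_const_mul]
      exact integral_mono (hρt_int.const_mul r) huρ_int step
    have hint1 : ∫ y, ρ (t - y) = 1 := by
      rw [integral_sub_left_eq_self ρ volume t]; exact hρ_int
    rw [hint1, mul_one] at this
    refine this.trans ?_
    rw [hψf, convolution_lsmul]
    simp [smul_eq_mul]
  exact ⟨⟨ψf, hψ_smooth, hdecay⟩, hnn, hdom⟩

private lemma quad_temperate : Function.HasTemperateGrowth (fun p : ℝ × ℝ => p.1 * p.1 + p.2 * p.2) := by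
  classical
  set B : (ℝ×ℝ) →L[ℝ] (ℝ×ℝ) →L[ℝ] ℝ :=
    (ContinuousLinearMap.mul ℝ ℝ).bilinearComp (ContinuousLinearMap.fst ℝ ℝ ℝ)
      (ContinuousLinearMap.fst ℝ ℝ ℝ) +
    (ContinuousLinearMap.mul ℝ ℝ).bilinearComp (ContinuousLinearMap.snd ℝ ℝ ℝ)
      (ContinuousLinearMap.snd ℝ ℝ ℝ) with hB
  have hgderiv : ∀ p : ℝ×ℝ, HasFDerivAt (fun p : ℝ×ℝ => p.1 * p.1 + p.2 * p.2) (((2:ℝ) • B) p) p := by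
    intro p
    have h1 : HasFDerivAt (fun p : ℝ×ℝ => p.1 * p.1 + p.2 * p.2)
        ((p.1 • (ContinuousLinearMap.fst ℝ ℝ ℝ) + p.1 • (ContinuousLinearMap.fst ℝ ℝ ℝ)) +
         (p.2 • (ContinuousLinearMap.snd ℝ ℝ ℝ) + p.2 • (ContinuousLinearMap.snd ℝ ℝ ℝ))) p :=
      ((hasFDerivAt_fst (p := p)).mul (hasFDerivAt_fst (p := p))).add
        ((hasFDerivAt_snd (p := p)).mul (hasFDerivAt_snd (p := p)))
    convert h1 using 1
    refine ContinuousLinearMap.ext fun q => ?_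
    simp only [hB, ContinuousLinearMap.smul_apply, ContinuousLinearMap.add_apply,
      ContinuousLinearMap.bilinearComp_apply, ContinuousLinearMap.mul_apply',
      ContinuousLinearMap.coe_fst', ContinuousLinearMap.coe_snd', smul_eq_mul]
    ring
  apply Function.HasTemperateGrowth.of_fderiv (k := 2) (C := 2)
  · have hfd : (fderiv ℝ fun p : ℝ×ℝ => p.1 * p.1 + p.2 * p.2) = ⇑((2:ℝ) • B) :=
      funext fun p => (hgderiv p).fderiv
    rw [hfd]
    exact ((2:ℝ) • B).hasTemperateGrowth
  · exact fun p => (hgderiv p).differentiableAt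
  · intro p
    have h1 : |p.1| ≤ ‖p‖ := by
      rw [← Real.norm_eq_abs]; exact norm_fst_le p
    have h2 : |p.2| ≤ ‖p‖ := by
      rw [← Real.norm_eq_abs]; exact norm_snd_le p
    have h0 : (0:ℝ) ≤ ‖p‖ := norm_nonneg p
    rw [Real.norm_eq_abs, abs_of_nonneg (by nlinarith [mul_self_nonneg p.1, mul_self_nonneg p.2])]
    nlinarith [mul_self_le_mul_self (abs_nonneg p.1) h1, mul_self_le_mul_self (abs_nonneg p.2) h2,
      abs_mul_abs_self p.1, abs_mul_abs_self p.2]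

/-- Lemma 9.3(i) (archimedean case `F = ℝ`). -/
theorem stmt5
    (d : ℝ) (hd : 2 ≤ d) (Φ₁ Φ₂ : SchwartzMap ℝ ℂ) :
    ∃ Ψ₁ : SchwartzMap ℝ ℝ, ∃ Ψ₂ : SchwartzMap (ℝ × ℝ) ℝ,
      (∀ x, 0 ≤ Ψ₁ x) ∧ (∀ p, 0 ≤ Ψ₂ p) ∧
      ∀ x c : ℝ, 1 ≤ |x| → c ≠ 0 →
        Integrable (fun v : ℝ => Φ₁ (x / v) * ((|v| ^ (-d) : ℝ) : ℂ) * Φ₂ (c - v)) ∧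
        ‖∫ v : ℝ, Φ₁ (x / v) * ((|v| ^ (-d) : ℝ) : ℂ) * Φ₂ (c - v)‖
          ≤ Ψ₁ (x / c) * |c| ^ (-d) + Ψ₂ (x, c) := by
  classical
  have hd0 : (0:ℝ) ≤ d := by linarith
  choose D hD0 hD using decay_const Φ₁
  choose Eb hEb0 hEb using decay_const Φ₂
  set N : ℕ := ⌈d⌉₊ with hN
  have hdN : d ≤ (N:ℝ) := Nat.le_ceil d
  set IΦ₂ : ℝ := ∫ w : ℝ, ‖Φ₂ w‖ with hIΦ₂
  have hΦ₂int : Integrable (fun w : ℝ => ‖Φ₂ w‖) := Φ₂.integrable.norm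
  have hIΦ₂0 : 0 ≤ IΦ₂ := integral_nonneg fun w => norm_nonneg _
  have hΩint : ∀ k : ℕ, Integrable (fun w : ℝ => (((1:ℝ)+|w|)^(4*k+2))⁻¹) := by
    intro k
    have hr : ((Module.finrank ℝ ℝ : ℕ) : ℝ) < ((4*k+2 : ℕ) : ℝ) := by
      rw [Module.finrank_self]
      push_cast
      have h0 : (0:ℝ) ≤ (k:ℝ) := Nat.cast_nonneg k
      linarith
    have h := integrable_one_add_norm (E := ℝ) (μ := volume) hr
    refine h.congr (ae_of_all _ fun w => ?_)
    show (1+‖w‖) ^ (-((4*k+2:ℕ):ℝ)) = ((1+|w|)^(4*k+2))⁻¹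
    rw [Real.rpow_neg (by positivity), Real.rpow_natCast, Real.norm_eq_abs]
  set Ω : ℕ → ℝ := fun k => ∫ w : ℝ, (((1:ℝ)+|w|)^(4*k+2))⁻¹ with hΩ
  have hΩ0 : ∀ k, 0 ≤ Ω k := fun k => integral_nonneg fun w => by positivity
  obtain ⟨Ψ₁, hΨ₁0, hΨ₁⟩ := exists_schwartz_majorant
    (fun k => D (2*k) * (3/2:ℝ)^(2*k) * (2:ℝ)^d * IΦ₂)
    (fun k => by have := hD0 (2*k); positivity)
  obtain ⟨ψ₂, hψ₂0, hψ₂⟩ := exists_schwartz_majorant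
    (fun k => D (4*k+N) * 2^(4*k+N) * Eb (2*(8*k+N+2)) * 2^(8*k+N+2) * Ω k)
    (fun k => by have := hD0 (4*k+N); have := hEb0 (2*(8*k+N+2)); have := hΩ0 k; positivity)
  have hup : ∃ (kk : ℕ) (CC : ℝ), ∀ p : ℝ×ℝ,
      ‖p‖ ≤ CC * (1 + ‖p.1*p.1+p.2*p.2‖)^kk := by
    refine ⟨1, 1, fun p => ?_⟩
    have hs0 : (0:ℝ) ≤ p.1*p.1+p.2*p.2 := by nlinarith [mul_self_nonneg p.1, mul_self_nonneg p.2]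
    rw [pow_one, one_mul, Real.norm_eq_abs, abs_of_nonneg hs0]
    have h1 : ‖p‖ = max ‖p.1‖ ‖p.2‖ := rfl
    rw [h1, Real.norm_eq_abs, Real.norm_eq_abs]
    refine max_le ?_ ?_ <;>
      nlinarith [abs_mul_abs_self p.1, abs_mul_abs_self p.2, abs_nonneg p.1, abs_nonneg p.2,
        mul_self_nonneg p.1, mul_self_nonneg p.2, mul_self_nonneg (|p.1| - 1), mul_self_nonneg (|p.2| - 1)]
  set Ψ₂ : SchwartzMap (ℝ × ℝ) ℝ := SchwartzMap.compCLM ℝ quad_temperate hup ψ₂ with hΨ₂def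
  have hΨ₂app : ∀ p : ℝ×ℝ, Ψ₂ p = ψ₂ (p.1*p.1+p.2*p.2) := by
    intro p
    rw [hΨ₂def, SchwartzMap.compCLM_apply]
    rfl
  refine ⟨Ψ₁, Ψ₂, hΨ₁0, fun p => by rw [hΨ₂app]; exact hψ₂0 _, ?_⟩
  intro x c hx hc
  have hcpos : 0 < |c| := abs_pos.mpr hc
  have hxpos : (0:ℝ) < 1 + |x| := by positivity
  set f : ℝ → ℂ := fun v : ℝ => Φ₁ (x / v) * ((|v| ^ (-d) : ℝ) : ℂ) * Φ₂ (c - v) with hf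
  -- integrability pieces
  have hbase : ∀ j : ℕ, Integrable (fun w : ℝ => (1+|w|)^j * ‖Φ₂ w‖) := by
    intro j
    refine Integrable.mono'
      (((Φ₂.integrable.norm).add (Φ₂.integrable_pow_mul volume j)).const_mul (2^j)) ?_
      (ae_of_all _ fun w => ?_)
    · exact (((continuous_const.add continuous_abs).pow j).mul
        Φ₂.continuous.norm).aestronglyMeasurable
    · rw [Real.norm_eq_abs, abs_of_nonneg (by positivity)]
      have h1 := one_add_pow_le |w| (abs_nonneg w) j
      have h2 : (1+|w|)^j * ‖Φ₂ w‖ ≤ 2^j*(1+|w|^j) * ‖Φ₂ w‖ :=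
        mul_le_mul_of_nonneg_right h1 (norm_nonneg _)
      refine h2.trans (le_of_eq ?_)
      simp only [Pi.add_apply, Real.norm_eq_abs]
      ring
  have hshift : ∀ j : ℕ, Integrable (fun v : ℝ => (1+|v|)^j * ‖Φ₂ (c - v)‖) := by
    intro j
    refine Integrable.mono' (((hbase j).comp_sub_left c).const_mul ((1+|c|)^j)) ?_
      (ae_of_all _ fun v => ?_)
    · exact (((continuous_const.add continuous_abs).pow j).mul
        ((Φ₂.continuous.comp (continuous_const.sub continuous_id)).norm)).aestronglyMeasurable
    · rw [Real.norm_eq_abs, abs_of_nonneg (by positivity)]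
      have hp : (1+|v|)^j ≤ ((1+|c|)*(1+|c-v|))^j :=
        pow_le_pow_left₀ (by positivity) (peetre c v) j
      rw [mul_pow] at hp
      have := mul_le_mul_of_nonneg_right hp (norm_nonneg (Φ₂ (c-v)))
      refine this.trans (le_of_eq ?_)
      ring
  have hf_meas : AEStronglyMeasurable f volume := by
    have m1 : Measurable fun v : ℝ => Φ₁ (x / v) :=
      Φ₁.continuous.measurable.comp (measurable_const.div measurable_id)
    have m2 : Measurable fun v : ℝ => ((|v| ^ (-d) : ℝ) : ℂ) := by
      refine Complex.measurable_ofReal.comp ?_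
      have heq : (fun v : ℝ => |v| ^ (-d)) =
          fun v => if v = 0 then 0 else Real.exp (Real.log |v| * (-d)) := by
        funext v
        split_ifs with h
        · rw [h, abs_zero, Real.zero_rpow (by linarith : -d ≠ 0)]
        · rw [Real.rpow_def_of_pos (abs_pos.mpr h)]
      rw [heq]
      exact Measurable.ite measurableSet_eq measurable_const
        (Real.measurable_exp.comp ((Real.measurable_log.comp measurable_abs).mul_const _))
    have m3 : Measurable fun v : ℝ => Φ₂ (c - v) :=
      Φ₂.continuous.measurable.comp (measurable_const.sub measurable_id)
    exact ((m1.mul m2).mul m3).aestronglyMeasurable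
  have hstar : ∀ (j : ℕ), d ≤ (j:ℝ) → ∀ v : ℝ, ‖f v‖ ≤
      D j * 2^j / (1+|x|)^j * ((1+|v|)^j * ‖Φ₂ (c-v)‖) := by
    intro j hj v
    simp only [hf]
    exact norm_f_le d hd Φ₁ Φ₂ j hj (D j) (hD j) x c v hx
  have hf_int : Integrable f := by
    refine Integrable.mono' ((hshift N).const_mul (D N * 2^N / (1+|x|)^N)) hf_meas
      (ae_of_all _ fun v => ?_)
    exact hstar N hdN v
  -- split into the two regions
  set A : Set ℝ := {v : ℝ | |c - v| ≤ |c|/2} with hA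
  have hAmeas : MeasurableSet A := by
    have hcl : IsClosed A := isClosed_le (by continuity) continuous_const
    exact hcl.measurableSet
  have hnorm_int : Integrable (fun v => ‖f v‖) := hf_int.norm
  have hsplit : (∫ v, ‖f v‖) = (∫ v in A, ‖f v‖) + ∫ v in Aᶜ, ‖f v‖ :=
    (integral_add_compl hAmeas hnorm_int).symm
  have hΦ₂shift : Integrable (fun v : ℝ => ‖Φ₂ (c - v)‖) := hΦ₂int.comp_sub_left c
  have hcd : |c| ^ (-d) * |c| ^ d = 1 := by
    rw [← Real.rpow_add hcpos]
    norm_num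
  -- Part A
  have hPartA : (∫ v in A, ‖f v‖) ≤ Ψ₁ (x/c) * |c| ^ (-d) := by
    have hAk : ∀ k : ℕ, (∫ v in A, ‖f v‖) * |c| ^ d ≤
        (D (2*k) * (3/2:ℝ)^(2*k) * (2:ℝ)^d * IΦ₂) / (1+(x/c)^2)^k := by
      intro k
      have hKpre0 : 0 ≤ D (2*k) * (3/2:ℝ)^(2*k) / (1+(x/c)^2)^k := by
        have := hD0 (2*k); positivity
      have hK0 : 0 ≤ D (2*k) * (3/2:ℝ)^(2*k) / (1+(x/c)^2)^k * ((2:ℝ)^d * |c| ^ (-d)) := by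
        have h2 : (0:ℝ) ≤ (2:ℝ)^d := Real.rpow_nonneg (by norm_num) d
        have h3 : (0:ℝ) ≤ |c| ^ (-d) := Real.rpow_nonneg (abs_nonneg c) _
        positivity
      have hpt : ∀ v ∈ A, ‖f v‖ ≤
          D (2*k) * (3/2:ℝ)^(2*k) / (1+(x/c)^2)^k * ((2:ℝ)^d * |c| ^ (-d)) * ‖Φ₂ (c - v)‖ := by
        intro v hv
        have hvA : |c - v| ≤ |c|/2 := hv
        have hv1 : |c|/2 ≤ |v| := by
          have h1 : |c| - |v| ≤ |c - v| := abs_sub_abs_le_abs_sub c v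
          linarith
        have hv2 : |v| ≤ 3*|c|/2 := by
          have h1 : |v| - |c| ≤ |v - c| := abs_sub_abs_le_abs_sub v c
          rw [abs_sub_comm] at h1
          linarith
        have hvpos : 0 < |v| := lt_of_lt_of_le (by positivity) hv1
        have hΦ₁b : ‖Φ₁ (x/v)‖ ≤ D (2*k) * (3/2:ℝ)^(2*k) / (1+(x/c)^2)^k := by
          have ha : |x/c| ≤ (3/2)*|x/v| := by
            rw [abs_div, abs_div,
              show (3/2:ℝ) * (|x|/|v|) = (3/2*|x|)/|v| from by ring,
              div_le_div_iff₀ hcpos hvpos]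
            nlinarith [hv2, abs_nonneg x]
          have hb2 : 1 + |x/c| ≤ (3/2)*(1+|x/v|) := by
            have := abs_nonneg (x/v)
            linarith
          have hsq : 1 + (x/c)^2 ≤ (1+|x/c|)^2 := by
            nlinarith [sq_abs (x/c), abs_nonneg (x/c)]
          have c1 : (1+(x/c)^2)^k ≤ (1+|x/c|)^(2*k) := by
            have := pow_le_pow_left₀ (by positivity : (0:ℝ) ≤ 1 + (x/c)^2) hsq k
            rwa [← pow_mul] at this
          have c2 : (1+|x/c|)^(2*k) ≤ (3/2:ℝ)^(2*k) * (1+|x/v|)^(2*k) := by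
            have := pow_le_pow_left₀ (by positivity : (0:ℝ) ≤ 1 + |x/c|) hb2 (2*k)
            rwa [mul_pow] at this
          have hstep : ‖Φ₁ (x/v)‖ ≤ D (2*k) / (1+|x/v|)^(2*k) := by
            rw [le_div_iff₀ (by positivity)]
            exact hD (2*k) (x/v)
          refine hstep.trans ?_
          rw [div_le_div_iff₀ (by positivity) (by positivity)]
          calc D (2*k) * (1+(x/c)^2)^k
              ≤ D (2*k) * ((3/2:ℝ)^(2*k) * (1+|x/v|)^(2*k)) :=
                mul_le_mul_of_nonneg_left (c1.trans c2) (hD0 (2*k))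
            _ = D (2*k) * (3/2:ℝ)^(2*k) * (1+|x/v|)^(2*k) := by ring
        have hrpow : |v| ^ (-d) ≤ (2:ℝ)^d * |c| ^ (-d) :=
          rpow_half_bound d |c| |v| hd0 hcpos hv1
        have hfv : ‖f v‖ = ‖Φ₁ (x/v)‖ * |v| ^ (-d) * ‖Φ₂ (c - v)‖ := by
          simp only [hf]
          rw [norm_mul, norm_mul, Complex.norm_real, Real.norm_eq_abs,
            abs_of_nonneg (Real.rpow_nonneg (abs_nonneg v) _)]
        rw [hfv]
        have hv0 : (0:ℝ) ≤ |v| ^ (-d) := Real.rpow_nonneg (abs_nonneg v) _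
        refine mul_le_mul_of_nonneg_right ?_ (norm_nonneg _)
        exact mul_le_mul hΦ₁b hrpow hv0 hKpre0
      have hint1 : (∫ v in A, ‖f v‖) ≤ ∫ v in A,
          D (2*k) * (3/2:ℝ)^(2*k) / (1+(x/c)^2)^k * ((2:ℝ)^d * |c| ^ (-d)) * ‖Φ₂ (c - v)‖ := by
        refine setIntegral_mono_on hnorm_int.integrableOn ?_ hAmeas hpt
        exact (hΦ₂shift.const_mul _).integrableOn
      have hint2 : ∫ v in A,
          D (2*k) * (3/2:ℝ)^(2*k) / (1+(x/c)^2)^k * ((2:ℝ)^d * |c| ^ (-d)) * ‖Φ₂ (c - v)‖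
          = D (2*k) * (3/2:ℝ)^(2*k) / (1+(x/c)^2)^k * ((2:ℝ)^d * |c| ^ (-d)) *
            ∫ v in A, ‖Φ₂ (c - v)‖ := by
        exact integral_const_mul _ _
      have hint3 : (∫ v in A, ‖Φ₂ (c - v)‖) ≤ IΦ₂ := by
        refine le_trans (setIntegral_le_integral hΦ₂shift (ae_of_all _ fun v => norm_nonneg _)) ?_
        rw [hIΦ₂]
        exact le_of_eq (integral_sub_left_eq_self (fun w => ‖Φ₂ w‖) volume c)
      have h4 : (∫ v in A, ‖f v‖) ≤
          D (2*k) * (3/2:ℝ)^(2*k) / (1+(x/c)^2)^k * ((2:ℝ)^d * |c| ^ (-d)) * IΦ₂ := by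
        refine hint1.trans ?_
        rw [hint2]
        exact mul_le_mul_of_nonneg_left hint3 hK0
      have h2 : (0:ℝ) ≤ |c| ^ d := Real.rpow_nonneg (abs_nonneg c) d
      calc (∫ v in A, ‖f v‖) * |c| ^ d
          ≤ (D (2*k) * (3/2:ℝ)^(2*k) / (1+(x/c)^2)^k * ((2:ℝ)^d * |c| ^ (-d)) * IΦ₂) * |c| ^ d :=
            mul_le_mul_of_nonneg_right h4 h2
        _ = (D (2*k) * (3/2:ℝ)^(2*k) * (2:ℝ)^d * IΦ₂) / (1+(x/c)^2)^k * (|c| ^ (-d) * |c| ^ d) := by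
            generalize (2:ℝ)^d = P
            generalize |c| ^ (-d) = Q
            generalize |c| ^ d = R
            ring
        _ = (D (2*k) * (3/2:ℝ)^(2*k) * (2:ℝ)^d * IΦ₂) / (1+(x/c)^2)^k := by
            rw [hcd, mul_one]
    have hr := hΨ₁ ((∫ v in A, ‖f v‖) * |c| ^ d) (x/c) hAk
    have h3 : (0:ℝ) ≤ |c| ^ (-d) := Real.rpow_nonneg (abs_nonneg c) _
    calc (∫ v in A, ‖f v‖) = ((∫ v in A, ‖f v‖) * |c| ^ d) * |c| ^ (-d) := by
          rw [mul_assoc, mul_comm (|c| ^ d), hcd, mul_one]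
      _ ≤ Ψ₁ (x/c) * |c| ^ (-d) := mul_le_mul_of_nonneg_right hr h3
  -- Part B
  have hPartB : (∫ v in Aᶜ, ‖f v‖) ≤ Ψ₂ (x, c) := by
    have hBk : ∀ k : ℕ, (∫ v in Aᶜ, ‖f v‖) ≤
        (D (4*k+N) * 2^(4*k+N) * Eb (2*(8*k+N+2)) * 2^(8*k+N+2) * Ω k) / (1+(x*x+c*c)^2)^k := by
      intro k
      have hdj : d ≤ ((4*k+N : ℕ):ℝ) := by
        push_cast
        have : (0:ℝ) ≤ (k:ℝ) := Nat.cast_nonneg k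
        linarith [hdN]
      set j : ℕ := 4*k+N with hjdef
      set m : ℕ := 8*k+N+2 with hmdef
      have hjm : m = j + (4*k+2) := by omega
      set K : ℝ := D j * 2^j * Eb (2*m) * 2^m * ((1+|c|)^j / ((1+|x|)^j * (1+|c|)^m)) with hK
      have hK0 : 0 ≤ K := by
        have := hD0 j; have := hEb0 (2*m); positivity
      have hpt : ∀ v ∈ Aᶜ, ‖f v‖ ≤ K * ((1+|c-v|)^(4*k+2))⁻¹ := by
        intro v hv
        have hcb : |c|/2 < |c - v| := lt_of_not_ge hv
        have hΦ₂b : ‖Φ₂ (c-v)‖ ≤ Eb (2*m) * 2^m / ((1+|c|)^m * (1+|c-v|)^m) := by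
          rw [le_div_iff₀ (by positivity)]
          calc ‖Φ₂ (c-v)‖ * ((1+|c|)^m * (1+|c-v|)^m)
              ≤ ‖Φ₂ (c-v)‖ * ((2*(1+|c-v|))^m * (1+|c-v|)^m) := by
                refine mul_le_mul_of_nonneg_left
                  (mul_le_mul_of_nonneg_right
                    (pow_le_pow_left₀ (by positivity) (by linarith) m) (by positivity))
                  (norm_nonneg _)
            _ = ‖Φ₂ (c-v)‖ * (1+|c-v|)^(2*m) * 2^m := by
                rw [mul_pow, two_mul, pow_add]
                ring
            _ ≤ Eb (2*m) * 2^m :=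
                mul_le_mul_of_nonneg_right (hEb (2*m) (c-v)) (by positivity)
        have hp : (1+|v|)^j ≤ (1+|c|)^j * (1+|c-v|)^j := by
          have := pow_le_pow_left₀ (by positivity : (0:ℝ) ≤ 1 + |v|) (peetre c v) j
          rwa [mul_pow] at this
        have h1 := hstar j hdj v
        have h2 : (1+|v|)^j * ‖Φ₂ (c-v)‖ ≤
            ((1+|c|)^j * (1+|c-v|)^j) * (Eb (2*m) * 2^m / ((1+|c|)^m * (1+|c-v|)^m)) :=
          mul_le_mul hp hΦ₂b (norm_nonneg _) (by positivity)
        have h3 : D j * 2^j / (1+|x|)^j * ((1+|v|)^j * ‖Φ₂ (c-v)‖) ≤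
            D j * 2^j / (1+|x|)^j *
              (((1+|c|)^j * (1+|c-v|)^j) * (Eb (2*m) * 2^m / ((1+|c|)^m * (1+|c-v|)^m))) := by
          refine mul_le_mul_of_nonneg_left h2 ?_
          have := hD0 j
          positivity
        refine (h1.trans h3).trans (le_of_eq ?_)
        have hsplit2 : (1+|c-v|)^m = (1+|c-v|)^j * (1+|c-v|)^(4*k+2) := by
          rw [hjm, pow_add]
        rw [hK, hsplit2]
        have hcv0 : (0:ℝ) < 1 + |c-v| := by positivity
        field_simp
      have hint1 : (∫ v in Aᶜ, ‖f v‖) ≤ ∫ v in Aᶜ, K * ((1+|c-v|)^(4*k+2))⁻¹ := by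
        refine setIntegral_mono_on hnorm_int.integrableOn ?_ hAmeas.compl hpt
        exact (((hΩint k).comp_sub_left c).const_mul K).integrableOn
      have hint2 : ∫ v in Aᶜ, K * ((1+|c-v|)^(4*k+2))⁻¹
          = K * ∫ v in Aᶜ, ((1+|c-v|)^(4*k+2))⁻¹ := integral_const_mul _ _
      have hint3 : (∫ v in Aᶜ, ((1+|c-v|)^(4*k+2))⁻¹) ≤ Ω k := by
        refine le_trans (setIntegral_le_integral ((hΩint k).comp_sub_left c)
          (ae_of_all _ fun v => by positivity)) ?_
        exact le_of_eq (integral_sub_left_eq_self (fun w => (((1:ℝ)+|w|)^(4*k+2))⁻¹) volume c)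
      have h4 : (∫ v in Aᶜ, ‖f v‖) ≤ K * Ω k := by
        refine hint1.trans ?_
        rw [hint2]
        exact mul_le_mul_of_nonneg_left hint3 hK0
      refine h4.trans ?_
      -- the arithmetic comparison
      have ha0 : (0:ℝ) ≤ |x| := abs_nonneg x
      have hb0 : (0:ℝ) ≤ |c| := abs_nonneg c
      have hs0 : (0:ℝ) ≤ x*x+c*c := by nlinarith [mul_self_nonneg x, mul_self_nonneg c]
      have t2 : 1+(x*x+c*c) ≤ (1+|x|)^2*(1+|c|)^2 := by
        nlinarith [abs_mul_abs_self x, abs_mul_abs_self c, mul_nonneg ha0 hb0,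
          mul_nonneg (mul_nonneg ha0 hb0) (mul_nonneg ha0 hb0), sq_nonneg (|x| * |c|),
          mul_nonneg (mul_nonneg ha0 ha0) hb0, mul_nonneg ha0 (mul_nonneg hb0 hb0)]
      have t4 : 1+(x*x+c*c)^2 ≤ ((1+|x|)*(1+|c|))^4 := by
        have s1 : 1+(x*x+c*c)^2 ≤ (1+(x*x+c*c))^2 := by nlinarith
        have s2 : (1+(x*x+c*c))^2 ≤ ((1+|x|)^2*(1+|c|)^2)^2 :=
          pow_le_pow_left₀ (by positivity) t2 2
        have s3 : ((1+|x|)^2*(1+|c|)^2)^2 = ((1+|x|)*(1+|c|))^4 := by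
          rw [← mul_pow, ← pow_mul]
        linarith
      have core : (1+(x*x+c*c)^2)^k * (1+|c|)^j ≤ (1+|x|)^j * (1+|c|)^m := by
        have u1 : (1+(x*x+c*c)^2)^k ≤ (((1+|x|)*(1+|c|))^4)^k :=
          pow_le_pow_left₀ (by positivity) t4 k
        have u2 : (((1+|x|)*(1+|c|))^4)^k = (1+|x|)^(4*k) * (1+|c|)^(4*k) := by
          rw [mul_pow, mul_pow, ← pow_mul, ← pow_mul]
        have u3 : (1+|x|)^(4*k) ≤ (1+|x|)^j :=
          pow_le_pow_right₀ (by linarith) (by omega)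
        have u4 : (1+|c|)^(4*k) * (1+|c|)^j ≤ (1+|c|)^m := by
          rw [← pow_add]
          exact pow_le_pow_right₀ (by linarith) (by omega)
        calc (1+(x*x+c*c)^2)^k * (1+|c|)^j
            ≤ (1+|x|)^(4*k) * (1+|c|)^(4*k) * (1+|c|)^j := by
              refine mul_le_mul_of_nonneg_right (u1.trans_eq u2) (by positivity)
          _ = (1+|x|)^(4*k) * ((1+|c|)^(4*k) * (1+|c|)^j) := by ring
          _ ≤ (1+|x|)^j * (1+|c|)^m := by
              refine mul_le_mul u3 u4 (by positivity) (by positivity)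
      have hfrac : (1+|c|)^j / ((1+|x|)^j * (1+|c|)^m) ≤ ((1+(x*x+c*c)^2)^k)⁻¹ := by
        rw [div_le_iff₀ (by positivity), inv_mul_eq_div, le_div_iff₀ (by positivity)]
        calc (1+|c|)^j * (1+(x*x+c*c)^2)^k = (1+(x*x+c*c)^2)^k * (1+|c|)^j := by ring
          _ ≤ (1+|x|)^j * (1+|c|)^m := core
      have hP0 : 0 ≤ D j * 2^j * Eb (2*m) * 2^m := by
        have := hD0 j
        have := hEb0 (2*m)
        positivity
      calc K * Ω k
          = (D j * 2^j * Eb (2*m) * 2^m) * ((1+|c|)^j / ((1+|x|)^j * (1+|c|)^m)) * Ω k := by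
            rw [hK]
        _ ≤ (D j * 2^j * Eb (2*m) * 2^m) * ((1+(x*x+c*c)^2)^k)⁻¹ * Ω k :=
            mul_le_mul_of_nonneg_right (mul_le_mul_of_nonneg_left hfrac hP0) (hΩ0 k)
        _ = D j * 2^j * Eb (2*m) * 2^m * Ω k / (1+(x*x+c*c)^2)^k := by
            rw [div_eq_mul_inv]
            ring
    have := hψ₂ (∫ v in Aᶜ, ‖f v‖) (x*x+c*c) hBk
    refine this.trans (le_of_eq ?_)
    rw [hΨ₂app (x, c)]
  -- conclude
  refine ⟨hf_int, ?_⟩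
  calc ‖∫ v : ℝ, f v‖ ≤ ∫ v : ℝ, ‖f v‖ := norm_integral_le_integral_norm f
    _ = (∫ v in A, ‖f v‖) + ∫ v in Aᶜ, ‖f v‖ := hsplit
    _ ≤ Ψ₁ (x / c) * |c| ^ (-d) + Ψ₂ (x, c) := add_le_add hPartA hPartB
end
end

section
/- Let d ≥ 2 be a real number and let Φ be a Schwartz function on ℝ. Then there exists a constant C > 0 such that for all x, c ∈ ℝ with |x| ≥ 1: ∫_ℝ max(|v|, |x|)^{−d} |Φ(c − v)| dv ≤ C · max(|c|, |x|)^{−d}. (Lemma 9.3(iii) of the paper, archimedean case F = ℝ.) -/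
open MeasureTheory

noncomputable section

/-- Lemma 9.3(iii) (archimedean case `F = ℝ`). -/
theorem stmt7
    (d : ℝ) (hd : 2 ≤ d) (Φ : SchwartzMap ℝ ℂ) :
    ∃ C : ℝ, 0 < C ∧
      ∀ x c : ℝ, 1 ≤ |x| →
        ∫⁻ v : ℝ, ENNReal.ofReal (max |v| |x| ^ (-d) * ‖Φ (c - v)‖)
          ≤ ENNReal.ofReal (C * max |c| |x| ^ (-d)) := by
  obtain ⟨K, hKpos, hK⟩ := Φ.decay ⌈d⌉₊ 0
  simp only [norm_iteratedFDeriv_zero] at hK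
  set k : ℕ := ⌈d⌉₊ with hk
  set I : ℝ := ∫ v : ℝ, ‖Φ v‖ with hI
  have hInn : 0 ≤ I := integral_nonneg fun v => norm_nonneg _
  have hΦint : Integrable (fun v : ℝ => Φ v) := Φ.integrable
  refine ⟨2 ^ d * (I + 1) + 4 * K * 2 ^ k * Real.pi + 1, by positivity, ?_⟩
  intro x c hx
  set M : ℝ := max |c| |x| with hM
  clear_value M
  have hM1 : (1 : ℝ) ≤ M := by rw [hM]; exact le_trans hx (le_max_right _ _)
  have hMpos : (0 : ℝ) < M := lt_of_lt_of_le one_pos hM1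
  have h2d1 : (1 : ℝ) ≤ 2 ^ d := Real.one_le_rpow one_le_two (by linarith)
  -- pointwise bound
  have key : ∀ v : ℝ, max |v| |x| ^ (-d) * ‖Φ (c - v)‖ ≤
      M ^ (-d) * (2 ^ d * ‖Φ (c - v)‖) +
      M ^ (-d) * ((4 * K * 2 ^ k) * (1 + v ^ 2)⁻¹) := by
    intro v
    set a : ℝ := max |v| |x| with ha
    clear_value a
    have ha1 : (1 : ℝ) ≤ a := by rw [ha]; exact le_trans hx (le_max_right _ _)
    have hapos : (0 : ℝ) < a := lt_of_lt_of_le one_pos ha1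
    have hadpos : (0 : ℝ) < a ^ d := Real.rpow_pos_of_pos hapos d
    have hand : a ^ (-d) = (a ^ d)⁻¹ := Real.rpow_neg hapos.le d
    have hterm2 : 0 ≤ M ^ (-d) * ((4 * K * 2 ^ k) * (1 + v ^ 2)⁻¹) := by positivity
    have hterm1 : 0 ≤ M ^ (-d) * (2 ^ d * ‖Φ (c - v)‖) := by positivity
    rcases le_or_gt M (2 * |v|) with h | h
    · -- a ≥ M/2
      have haM : M / 2 ≤ a := by rw [ha]; exact le_trans (by linarith : M / 2 ≤ |v|) (le_max_left _ _)
      have hMd : (M / 2) ^ d ≤ a ^ d := Real.rpow_le_rpow (by positivity) haM (by linarith)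
      have heq : (M / 2) ^ d = M ^ d / 2 ^ d := Real.div_rpow hMpos.le (by norm_num : (0:ℝ) ≤ 2) d
      have h1 : a ^ (-d) ≤ M ^ (-d) * 2 ^ d := by
        rw [hand, Real.rpow_neg hMpos.le]
        rw [heq] at hMd
        have hq : (0:ℝ) < M ^ d / 2 ^ d := by positivity
        calc (a ^ d)⁻¹ ≤ (M ^ d / 2 ^ d)⁻¹ := inv_anti₀ hq hMd
          _ = (M ^ d)⁻¹ * 2 ^ d := by
              rw [inv_div, div_eq_mul_inv, mul_comm]
      calc a ^ (-d) * ‖Φ (c - v)‖ ≤ (M ^ (-d) * 2 ^ d) * ‖Φ (c - v)‖ :=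
            mul_le_mul_of_nonneg_right h1 (norm_nonneg _)
        _ = M ^ (-d) * (2 ^ d * ‖Φ (c - v)‖) := by ring
        _ ≤ _ := le_add_of_nonneg_right hterm2
    · rcases le_or_gt |c| |x| with hcx | hcx
      · have hMx : M = |x| := by rw [hM]; exact max_eq_right hcx
        have hMa : M ≤ a := by rw [ha, hMx]; exact le_max_right _ _
        have h1 : a ^ (-d) ≤ M ^ (-d) * 2 ^ d := by
          have := Real.rpow_le_rpow hMpos.le hMa (by linarith : (0:ℝ) ≤ d)
          rw [hand, Real.rpow_neg hMpos.le]
          calc (a ^ d)⁻¹ ≤ (M ^ d)⁻¹ := by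
                apply inv_anti₀ (Real.rpow_pos_of_pos hMpos d) this
            _ ≤ (M ^ d)⁻¹ * 2 ^ d := le_mul_of_one_le_right (by positivity) h2d1
        calc a ^ (-d) * ‖Φ (c - v)‖ ≤ (M ^ (-d) * 2 ^ d) * ‖Φ (c - v)‖ :=
              mul_le_mul_of_nonneg_right h1 (norm_nonneg _)
          _ = M ^ (-d) * (2 ^ d * ‖Φ (c - v)‖) := by ring
          _ ≤ _ := le_add_of_nonneg_right hterm2
      · -- M = |c|, |v| < M/2
        have hMc : M = |c| := by rw [hM]; exact max_eq_left hcx.le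
        have hcv : M / 2 ≤ |c - v| := by
          have h2 : |c| - |v| ≤ |c - v| := abs_sub_abs_le_abs_sub c v
          rw [hMc] at h ⊢
          linarith
        have hcvpos : (0 : ℝ) < |c - v| := lt_of_lt_of_le (by linarith) hcv
        -- Φ bound
        have hΦb : ‖Φ (c - v)‖ ≤ K * 2 ^ k * M ^ (-d) := by
          have hdk : ‖(c - v)‖ ^ k * ‖Φ (c - v)‖ ≤ K := hK (c - v)
          rw [Real.norm_eq_abs] at hdk
          have hM2k : (M / 2) ^ k ≤ |c - v| ^ k := pow_le_pow_left₀ (by positivity) hcv k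
          have hMk : M ^ d ≤ M ^ (k : ℝ) :=
            Real.rpow_le_rpow_of_exponent_le hM1 (Nat.le_ceil d)
          have hMkk : M ^ (k : ℝ) = M ^ k := Real.rpow_natCast M k
          have hpos1 : (0:ℝ) < (M/2) ^ k := by positivity
          have hb1 : ‖Φ (c - v)‖ ≤ K / (M / 2) ^ k := by
            rw [le_div_iff₀ hpos1]
            calc ‖Φ (c - v)‖ * (M / 2) ^ k ≤ ‖Φ (c - v)‖ * |c - v| ^ k :=
                  mul_le_mul_of_nonneg_left hM2k (norm_nonneg _)
              _ ≤ K := by rw [mul_comm]; exact hdk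
          have hb2 : K / (M / 2) ^ k = K * 2 ^ k / M ^ k := by
            rw [div_pow]; field_simp
          rw [hb2] at hb1
          calc ‖Φ (c - v)‖ ≤ K * 2 ^ k / M ^ k := hb1
            _ ≤ K * 2 ^ k * M ^ (-d) := by
                rw [Real.rpow_neg hMpos.le, div_eq_mul_inv]
                apply mul_le_mul_of_nonneg_left _ (by positivity)
                apply inv_anti₀ (Real.rpow_pos_of_pos hMpos d)
                rw [← hMkk]
                exact hMk
        -- a^(-d) ≤ 4 (1+v^2)⁻¹
        have hab : a ^ (-d) ≤ 4 * (1 + v ^ 2)⁻¹ := by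
          have hv2 : 1 + v ^ 2 ≤ 4 * a ^ d := by
            have h2le : a ^ (2:ℝ) ≤ a ^ d := Real.rpow_le_rpow_of_exponent_le ha1 hd
            have h2eq : a ^ (2:ℝ) = a ^ (2:ℕ) := by
              rw [show ((2:ℝ)) = ((2:ℕ):ℝ) by norm_num, Real.rpow_natCast]
            have hva : |v| ≤ a := by rw [ha]; exact le_max_left _ _
            have hv2a : v ^ 2 ≤ a ^ (2:ℕ) := by
              have := sq_abs v
              nlinarith [abs_nonneg v]
            have h1a : (1:ℝ) ≤ a ^ (2:ℕ) := one_le_pow₀ ha1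
            have e1 : 1 + v ^ 2 ≤ 2 * a ^ (2:ℕ) := by nlinarith
            have e2 : (2:ℝ) * a ^ (2:ℕ) ≤ 2 * a ^ d := by rw [← h2eq]; linarith
            refine le_trans (e1.trans e2) ?_
            have h0 : (0:ℝ) ≤ a ^ d := hadpos.le
            linarith [h0]
          rw [hand]
          calc (a ^ d)⁻¹ ≤ ((1 + v ^ 2) / 4)⁻¹ := inv_anti₀ (by positivity) (by linarith)
            _ = 4 * (1 + v ^ 2)⁻¹ := by rw [inv_div, div_eq_mul_inv]
        have hvpos : (0:ℝ) < 1 + v ^ 2 := by positivity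
        calc a ^ (-d) * ‖Φ (c - v)‖ ≤ (4 * (1 + v ^ 2)⁻¹) * (K * 2 ^ k * M ^ (-d)) := by
              apply mul_le_mul hab hΦb (norm_nonneg _) (by positivity)
          _ = M ^ (-d) * ((4 * K * 2 ^ k) * (1 + v ^ 2)⁻¹) := by ring
          _ ≤ _ := le_add_of_nonneg_left hterm1
  -- integral part
  set c1 : ENNReal := ENNReal.ofReal (M ^ (-d) * 2 ^ d) with hc1
  set c2 : ENNReal := ENNReal.ofReal (M ^ (-d) * (4 * K * 2 ^ k)) with hc2
  have key' : ∀ v : ℝ, ENNReal.ofReal (max |v| |x| ^ (-d) * ‖Φ (c - v)‖) ≤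
      c1 * ENNReal.ofReal ‖Φ (c - v)‖ + c2 * ENNReal.ofReal ((1 + v ^ 2)⁻¹) := by
    intro v
    rw [hc1, hc2, ← ENNReal.ofReal_mul (by positivity), ← ENNReal.ofReal_mul (by positivity),
      ← ENNReal.ofReal_add (by positivity) (by positivity)]
    refine ENNReal.ofReal_le_ofReal ?_
    have := key v
    nlinarith [this]
  have m1 : Measurable fun v : ℝ => c1 * ENNReal.ofReal ‖Φ (c - v)‖ := by
    apply Measurable.const_mul
    exact ENNReal.measurable_ofReal.comp
      (Φ.continuous.comp (continuous_const.sub continuous_id)).norm.measurable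
  have hint1 : (∫⁻ v : ℝ, ENNReal.ofReal ‖Φ (c - v)‖) = ENNReal.ofReal I := by
    have hInt : Integrable (fun v : ℝ => ‖Φ (c - v)‖) := (hΦint.comp_sub_left c).norm
    rw [← ofReal_integral_eq_lintegral_ofReal hInt (Filter.Eventually.of_forall fun v => norm_nonneg _)]
    congr 1
    exact integral_sub_left_eq_self (fun v : ℝ => ‖Φ v‖) volume c
  have hint2 : (∫⁻ v : ℝ, ENNReal.ofReal ((1 + v ^ 2)⁻¹)) = ENNReal.ofReal Real.pi := by
    rw [← ofReal_integral_eq_lintegral_ofReal integrable_inv_one_add_sq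
      (Filter.Eventually.of_forall fun v => by positivity), integral_univ_inv_one_add_sq]
  calc ∫⁻ v : ℝ, ENNReal.ofReal (max |v| |x| ^ (-d) * ‖Φ (c - v)‖)
      ≤ ∫⁻ v : ℝ, (c1 * ENNReal.ofReal ‖Φ (c - v)‖ + c2 * ENNReal.ofReal ((1 + v ^ 2)⁻¹)) :=
        lintegral_mono key'
    _ = (∫⁻ v : ℝ, c1 * ENNReal.ofReal ‖Φ (c - v)‖) +
        ∫⁻ v : ℝ, c2 * ENNReal.ofReal ((1 + v ^ 2)⁻¹) := lintegral_add_left m1 _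
    _ = c1 * ENNReal.ofReal I + c2 * ENNReal.ofReal Real.pi := by
        rw [lintegral_const_mul' _ _ ENNReal.ofReal_ne_top,
          lintegral_const_mul' _ _ ENNReal.ofReal_ne_top, hint1, hint2]
    _ ≤ ENNReal.ofReal ((2 ^ d * (I + 1) + 4 * K * 2 ^ k * Real.pi + 1) * M ^ (-d)) := by
        rw [hc1, hc2, ← ENNReal.ofReal_mul (by positivity), ← ENNReal.ofReal_mul (by positivity),
          ← ENNReal.ofReal_add (by positivity) (by positivity)]
        refine ENNReal.ofReal_le_ofReal ?_
        have hZ : (0:ℝ) ≤ M ^ (-d) := (Real.rpow_pos_of_pos hMpos _).le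
        have hpi : (0:ℝ) ≤ Real.pi := Real.pi_nonneg
        have h2k : (0:ℝ) ≤ (2:ℝ) ^ k := by positivity
        nlinarith [mul_nonneg hZ (le_trans zero_le_one h2d1), hZ,
          mul_nonneg (mul_nonneg hKpos.le h2k) hpi, hInn]
end
end

section
/- Let e₁, e₂ > 0 be real numbers, let Φ be a Schwartz function on ℝ, and let ε > 0. Then there is a constant C > 0 (depending on ε, Φ, e₁, e₂) such that for all r₁, r₂ ∈ ℝ∖{0}: ∫_{ℝ^×} |Φ(r₁/a)| max(1, |r₂ a|)^{−e₁} |a|^{e₁−e₂} d^×a is at most C·|r₁|^{e₁−e₂} max(1, |r₁r₂|)^{−e₁} if e₂ > e₁; at most C·|r₂|^{e₂−e₁} max(1, |r₁r₂|)^{−e₂} if e₂ < e₁; and at most C·max(1, |r₁r₂|)^{−e₂} min(1, |r₁r₂|)^{−ε} if e₂ = e₁. (Lemma 9.5 of the paper, archimedean case F = ℝ.) -/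
open MeasureTheory Set
open scoped ENNReal NNReal

noncomputable section

/-- The multiplicative Haar measure `d^×a = da/|a|` on `ℝ^× = ℝ ∖ {0}`. -/
def mulHaar : Measure ℝ := volume.withDensity fun a => ENNReal.ofReal |a|⁻¹

namespace Stmt9Aux

lemma lintegral_abs_set (g : ℝ → ℝ≥0∞) (T : Set ℝ) (hT : MeasurableSet T) :
    ∫⁻ a in {x : ℝ | abs x ∈ T}, g |a| ≤ 2 * ∫⁻ x in T ∩ Ioi 0, g x := by
  set S : Set ℝ := {x : ℝ | abs x ∈ T} with hS
  have hSm : MeasurableSet S := measurable_abs hT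
  have hcov : S ⊆ (S ∩ Iio 0) ∪ (S ∩ Ici 0) := by
    intro x hx
    rcases lt_or_ge x 0 with h | h
    · exact Or.inl ⟨hx, h⟩
    · exact Or.inr ⟨hx, h⟩
  have hneg : ∫⁻ a in S ∩ Iio 0, g |a| = ∫⁻ a in S ∩ Ioi 0, g |a| := by
    have hpre : (fun x : ℝ => -x) ⁻¹' (S ∩ Iio 0) = S ∩ Ioi 0 := by
      ext x
      simp [hS, abs_neg, neg_lt_zero]
    have := (Measure.measurePreserving_neg (volume : Measure ℝ)).setLIntegral_comp_preimage_emb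
      measurableEmbedding_neg (fun x => g |x|) (S ∩ Iio 0)
    rw [hpre] at this
    simpa [abs_neg] using this.symm
  have hIci : ∫⁻ a in S ∩ Ici 0, g |a| ≤ ∫⁻ a in S ∩ Ioi 0, g |a| := by
    have h2 : S ∩ Ici 0 ⊆ (S ∩ Ioi 0) ∪ {0} := by
      intro x ⟨hx1, hx2⟩
      rcases eq_or_lt_of_le (mem_Ici.1 hx2) with h | h
      · exact Or.inr (by simp [← h])
      · exact Or.inl ⟨hx1, h⟩
    calc ∫⁻ a in S ∩ Ici 0, g |a| ≤ ∫⁻ a in (S ∩ Ioi 0) ∪ {0}, g |a| :=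
          lintegral_mono_set h2
      _ ≤ (∫⁻ a in S ∩ Ioi 0, g |a|) + ∫⁻ a in ({0} : Set ℝ), g |a| :=
          lintegral_union_le _ _ _
      _ = ∫⁻ a in S ∩ Ioi 0, g |a| := by
          rw [setLIntegral_measure_zero _ _ (measure_singleton 0)]
          simp
  have hid : ∫⁻ a in S ∩ Ioi 0, g |a| = ∫⁻ x in T ∩ Ioi 0, g x := by
    have hset : S ∩ Ioi 0 = T ∩ Ioi 0 := by
      ext x
      simp only [hS, mem_inter_iff, mem_setOf_eq, mem_Ioi]
      constructor
      · rintro ⟨h1, h2⟩; exact ⟨by rwa [abs_of_pos h2] at h1, h2⟩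
      · rintro ⟨h1, h2⟩; exact ⟨by rwa [abs_of_pos h2], h2⟩
    rw [hset]
    exact setLIntegral_congr_fun (hT.inter measurableSet_Ioi)
      (fun x hx => by rw [abs_of_pos hx.2])
  calc ∫⁻ a in S, g |a| ≤ ∫⁻ a in (S ∩ Iio 0) ∪ (S ∩ Ici 0), g |a| :=
        lintegral_mono_set hcov
    _ ≤ (∫⁻ a in S ∩ Iio 0, g |a|) + ∫⁻ a in S ∩ Ici 0, g |a| :=
        lintegral_union_le _ _ _
    _ ≤ (∫⁻ a in S ∩ Ioi 0, g |a|) + ∫⁻ a in S ∩ Ioi 0, g |a| := by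
        rw [hneg]; exact add_le_add le_rfl hIci
    _ = 2 * ∫⁻ x in T ∩ Ioi 0, g x := by rw [hid, two_mul]

lemma pieceA (K Y β : ℝ) (hK : 0 ≤ K) (hY : 0 < Y) (hβ : 0 < β) :
    ∫⁻ a in {x : ℝ | abs x ∈ Iic Y},
        ENNReal.ofReal (K * |a| ^ β) * ENNReal.ofReal |a|⁻¹
      ≤ ENNReal.ofReal (2 * (K * Y ^ β / β)) := by
  have h := lintegral_abs_set
    (fun t => ENNReal.ofReal (K * t ^ β) * ENNReal.ofReal t⁻¹) (Iic Y) measurableSet_Iic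
  refine le_trans h ?_
  have hset : Iic Y ∩ Ioi 0 = Ioc 0 Y := by
    rw [inter_comm, Ioi_inter_Iic]
  rw [hset]
  have hcong : ∫⁻ x in Ioc (0:ℝ) Y, ENNReal.ofReal (K * x ^ β) * ENNReal.ofReal x⁻¹
      = ∫⁻ x in Ioc (0:ℝ) Y, ENNReal.ofReal (K * x ^ (β - 1)) := by
    refine setLIntegral_congr_fun measurableSet_Ioc (fun x hx => ?_)
    rw [← ENNReal.ofReal_mul (mul_nonneg hK (Real.rpow_nonneg hx.1.le _))]
    congr 1
    rw [mul_assoc, ← Real.rpow_neg_one x, ← Real.rpow_add hx.1]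
    ring_nf
  rw [hcong]
  have hint : IntegrableOn (fun x : ℝ => K * x ^ (β - 1)) (Ioc 0 Y) :=
    ((intervalIntegrable_iff_integrableOn_Ioc_of_le hY.le).1
      (intervalIntegral.intervalIntegrable_rpow' (by linarith))).const_mul K
  rw [← ofReal_integral_eq_lintegral_ofReal hint
    ((ae_restrict_iff' measurableSet_Ioc).2 (Filter.Eventually.of_forall fun x hx =>
      mul_nonneg hK (Real.rpow_nonneg hx.1.le _)))]
  rw [MeasureTheory.integral_const_mul]
  have hval : ∫ x in Ioc (0:ℝ) Y, x ^ (β - 1) = Y ^ β / β := by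
    rw [← intervalIntegral.integral_of_le hY.le,
      integral_rpow (Or.inl (by linarith : (-1:ℝ) < β - 1))]
    rw [Real.zero_rpow (by linarith : β - 1 + 1 ≠ 0)]
    ring_nf
  rw [hval, show (2:ℝ≥0∞) = ENNReal.ofReal 2 from (ENNReal.ofReal_ofNat 2).symm,
    ← ENNReal.ofReal_mul (by norm_num : (0:ℝ) ≤ 2)]
  exact ENNReal.ofReal_le_ofReal (le_of_eq (by ring))

lemma pieceB (K X β : ℝ) (hK : 0 ≤ K) (hX : 0 < X) (hβ : β < 0) :
    ∫⁻ a in {x : ℝ | abs x ∈ Ici X},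
        ENNReal.ofReal (K * |a| ^ β) * ENNReal.ofReal |a|⁻¹
      ≤ ENNReal.ofReal (2 * (K * X ^ β / (-β))) := by
  have h := lintegral_abs_set
    (fun t => ENNReal.ofReal (K * t ^ β) * ENNReal.ofReal t⁻¹) (Ici X) measurableSet_Ici
  refine le_trans h ?_
  have hset : Ici X ∩ Ioi 0 = Ici X := inter_eq_left.2 fun x hx => lt_of_lt_of_le hX hx
  rw [hset, ← Measure.restrict_congr_set Ioi_ae_eq_Ici]
  have hcong : ∫⁻ x in Ioi X, ENNReal.ofReal (K * x ^ β) * ENNReal.ofReal x⁻¹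
      = ∫⁻ x in Ioi X, ENNReal.ofReal (K * x ^ (β - 1)) := by
    refine setLIntegral_congr_fun measurableSet_Ioi (fun x hx => ?_)
    have hx0 : (0:ℝ) < x := lt_trans hX hx
    rw [← ENNReal.ofReal_mul (mul_nonneg hK (Real.rpow_nonneg hx0.le _))]
    congr 1
    rw [mul_assoc, ← Real.rpow_neg_one x, ← Real.rpow_add hx0]
    ring_nf
  rw [hcong]
  have hint : IntegrableOn (fun x : ℝ => K * x ^ (β - 1)) (Ioi X) :=
    (integrableOn_Ioi_rpow_of_lt (by linarith) hX).const_mul K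
  rw [← ofReal_integral_eq_lintegral_ofReal hint
    ((ae_restrict_iff' measurableSet_Ioi).2 (Filter.Eventually.of_forall fun x hx =>
      mul_nonneg hK (Real.rpow_nonneg (lt_trans hX hx).le _)))]
  rw [MeasureTheory.integral_const_mul]
  have hval : ∫ x in Ioi X, x ^ (β - 1) = X ^ β / (-β) := by
    rw [integral_Ioi_rpow_of_lt (by linarith) hX]
    rw [show β - 1 + 1 = β by ring]
    ring_nf
  rw [hval, show (2:ℝ≥0∞) = ENNReal.ofReal 2 from (ENNReal.ofReal_ofNat 2).symm,
    ← ENNReal.ofReal_mul (by norm_num : (0:ℝ) ≤ 2)]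
  exact ENNReal.ofReal_le_ofReal (le_of_eq (by ring))

lemma pieceC (K X Y : ℝ) (hK : 0 ≤ K) (hX : 0 < X) (hXY : X ≤ Y) :
    ∫⁻ a in {x : ℝ | abs x ∈ Icc X Y},
        ENNReal.ofReal K * ENNReal.ofReal |a|⁻¹
      ≤ ENNReal.ofReal (2 * (K * Real.log (Y / X))) := by
  have h := lintegral_abs_set
    (fun t => ENNReal.ofReal K * ENNReal.ofReal t⁻¹) (Icc X Y) measurableSet_Icc
  refine le_trans h ?_
  have hset : Icc X Y ∩ Ioi 0 = Icc X Y :=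
    inter_eq_left.2 fun x hx => lt_of_lt_of_le hX hx.1
  rw [hset, ← Measure.restrict_congr_set Ioc_ae_eq_Icc]
  have hcong : ∫⁻ x in Ioc X Y, ENNReal.ofReal K * ENNReal.ofReal x⁻¹
      = ∫⁻ x in Ioc X Y, ENNReal.ofReal (K * x⁻¹) := by
    refine setLIntegral_congr_fun measurableSet_Ioc (fun x hx => ?_)
    rw [← ENNReal.ofReal_mul hK]
  rw [hcong]
  have hii : IntervalIntegrable (fun x : ℝ => x⁻¹) volume X Y := by
    refine intervalIntegral.intervalIntegrable_inv (fun x hx => ?_) continuousOn_id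
    have := (Set.uIcc_of_le hXY ▸ hx : x ∈ Icc X Y)
    exact ne_of_gt (lt_of_lt_of_le hX this.1)
  have hint : IntegrableOn (fun x : ℝ => K * x⁻¹) (Ioc X Y) :=
    ((intervalIntegrable_iff_integrableOn_Ioc_of_le hXY).1 hii).const_mul K
  rw [← ofReal_integral_eq_lintegral_ofReal hint
    ((ae_restrict_iff' measurableSet_Ioc).2 (Filter.Eventually.of_forall fun x hx =>
      mul_nonneg hK (inv_nonneg.2 (lt_trans hX hx.1).le)))]
  rw [MeasureTheory.integral_const_mul]
  have hval : ∫ x in Ioc X Y, x⁻¹ = Real.log (Y / X) := by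
    rw [← intervalIntegral.integral_of_le hXY]
    rw [← integral_one_div_of_pos hX (lt_of_lt_of_le hX hXY)]
    simp [one_div]
  rw [hval, show (2:ℝ≥0∞) = ENNReal.ofReal 2 from (ENNReal.ofReal_ofNat 2).symm,
    ← ENNReal.ofReal_mul (by norm_num : (0:ℝ) ≤ 2)]

lemma split3 (f : ℝ → ℝ≥0∞) (m M : ℝ) (hmM : m ≤ M) :
    ∫⁻ a, f a ≤ (∫⁻ a in {x : ℝ | abs x ∈ Iic m}, f a)
      + (∫⁻ a in {x : ℝ | abs x ∈ Icc m M}, f a)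
      + ∫⁻ a in {x : ℝ | abs x ∈ Ici M}, f a := by
  have hcov : (univ : Set ℝ) ⊆ {x : ℝ | abs x ∈ Iic m}
      ∪ ({x : ℝ | abs x ∈ Icc m M} ∪ {x : ℝ | abs x ∈ Ici M}) := by
    intro x _
    rcases le_total (abs x) m with h | h
    · exact Or.inl h
    rcases le_total (abs x) M with h' | h'
    · exact Or.inr (Or.inl ⟨h, h'⟩)
    · exact Or.inr (Or.inr h')
  calc ∫⁻ a, f a = ∫⁻ a in univ, f a := (setLIntegral_univ f).symm
    _ ≤ ∫⁻ a in {x : ℝ | abs x ∈ Iic m}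
          ∪ ({x : ℝ | abs x ∈ Icc m M} ∪ {x : ℝ | abs x ∈ Ici M}), f a :=
        lintegral_mono_set hcov
    _ ≤ (∫⁻ a in {x : ℝ | abs x ∈ Iic m}, f a)
        + ∫⁻ a in {x : ℝ | abs x ∈ Icc m M} ∪ {x : ℝ | abs x ∈ Ici M}, f a :=
        lintegral_union_le _ _ _
    _ ≤ (∫⁻ a in {x : ℝ | abs x ∈ Iic m}, f a)
        + ((∫⁻ a in {x : ℝ | abs x ∈ Icc m M}, f a)
          + ∫⁻ a in {x : ℝ | abs x ∈ Ici M}, f a) :=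
        add_le_add le_rfl (lintegral_union_le _ _ _)
    _ = _ := (add_assoc _ _ _).symm

lemma split2 (f : ℝ → ℝ≥0∞) (m : ℝ) :
    ∫⁻ a, f a ≤ (∫⁻ a in {x : ℝ | abs x ∈ Iic m}, f a)
      + ∫⁻ a in {x : ℝ | abs x ∈ Ici m}, f a := by
  have hcov : (univ : Set ℝ) ⊆ {x : ℝ | abs x ∈ Iic m} ∪ {x : ℝ | abs x ∈ Ici m} := by
    intro x _
    rcases le_total (abs x) m with h | h
    · exact Or.inl h
    · exact Or.inr h
  calc ∫⁻ a, f a = ∫⁻ a in univ, f a := (setLIntegral_univ f).symm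
    _ ≤ ∫⁻ a in {x : ℝ | abs x ∈ Iic m} ∪ {x : ℝ | abs x ∈ Ici m}, f a :=
        lintegral_mono_set hcov
    _ ≤ _ := lintegral_union_le _ _ _

lemma regionA (F : ℝ → ℝ) (K Y β : ℝ) (hK : 0 ≤ K) (hY : 0 < Y) (hβ : 0 < β)
    (hp : ∀ a : ℝ, a ≠ 0 → F a ≤ K * |a| ^ β) :
    ∫⁻ a in {x : ℝ | abs x ∈ Iic Y}, ENNReal.ofReal (F a) * ENNReal.ofReal |a|⁻¹
      ≤ ENNReal.ofReal (2 * (K * Y ^ β / β)) := by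
  refine le_trans (setLIntegral_mono (by fun_prop) fun a ha => ?_) (pieceA K Y β hK hY hβ)
  rcases eq_or_ne a 0 with rfl | h0
  · simp
  · exact mul_le_mul_left (ENNReal.ofReal_le_ofReal (hp a h0)) _

lemma regionB (F : ℝ → ℝ) (K X β : ℝ) (hK : 0 ≤ K) (hX : 0 < X) (hβ : β < 0)
    (hp : ∀ a : ℝ, a ≠ 0 → X ≤ |a| → F a ≤ K * |a| ^ β) :
    ∫⁻ a in {x : ℝ | abs x ∈ Ici X}, ENNReal.ofReal (F a) * ENNReal.ofReal |a|⁻¹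
      ≤ ENNReal.ofReal (2 * (K * X ^ β / (-β))) := by
  refine le_trans (setLIntegral_mono (by fun_prop) fun a ha => ?_) (pieceB K X β hK hX hβ)
  rcases eq_or_ne a 0 with rfl | h0
  · simp
  · exact mul_le_mul_left (ENNReal.ofReal_le_ofReal (hp a h0 ha)) _

lemma regionC (F : ℝ → ℝ) (K X Y : ℝ) (hK : 0 ≤ K) (hX : 0 < X) (hXY : X ≤ Y)
    (hp : ∀ a : ℝ, a ≠ 0 → X ≤ |a| → F a ≤ K) :
    ∫⁻ a in {x : ℝ | abs x ∈ Icc X Y}, ENNReal.ofReal (F a) * ENNReal.ofReal |a|⁻¹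
      ≤ ENNReal.ofReal (2 * (K * Real.log (Y / X))) := by
  refine le_trans (setLIntegral_mono (by fun_prop) fun a ha => ?_) (pieceC K X Y hK hX hXY)
  rcases eq_or_ne a 0 with rfl | h0
  · simp
  · exact mul_le_mul_left (ENNReal.ofReal_le_ofReal (hp a h0 ha.1)) _

section Pointwise

variable {φ : ℝ → ℝ} {D N e₁ e₂ r₁ r₂ : ℝ}

lemma ptw2 (hφ0 : ∀ x, 0 ≤ φ x) (hφ1 : ∀ x, φ x ≤ D) (he₁ : 0 ≤ e₁) :
    ∀ a : ℝ, a ≠ 0 →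
      φ (r₁ / a) * max 1 |r₂ * a| ^ (-e₁) * |a| ^ (e₁ - e₂) ≤ D * |a| ^ (e₁ - e₂) := by
  intro a h0
  have hmax : max 1 |r₂ * a| ^ (-e₁) ≤ 1 :=
    Real.rpow_le_one_of_one_le_of_nonpos (le_max_left _ _) (neg_nonpos.2 he₁)
  have hmax0 : (0:ℝ) ≤ max 1 |r₂ * a| ^ (-e₁) :=
    Real.rpow_nonneg (le_trans zero_le_one (le_max_left _ _)) _
  have hD0 : 0 ≤ D := le_trans (hφ0 0) (hφ1 0)
  calc φ (r₁ / a) * max 1 |r₂ * a| ^ (-e₁) * |a| ^ (e₁ - e₂)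
      ≤ (D * 1) * |a| ^ (e₁ - e₂) := by
        apply mul_le_mul_of_nonneg_right _ (Real.rpow_nonneg (abs_nonneg a) _)
        exact mul_le_mul (hφ1 _) hmax hmax0 hD0
    _ = D * |a| ^ (e₁ - e₂) := by rw [mul_one]

lemma phi_decay_bound (hφ2 : ∀ x, x ≠ 0 → φ x ≤ D * |x| ^ (-N)) (h₁ : r₁ ≠ 0) :
    ∀ a : ℝ, a ≠ 0 → φ (r₁ / a) ≤ (D * |r₁| ^ (-N)) * |a| ^ N := by
  intro a h0
  have h := hφ2 (r₁ / a) (div_ne_zero h₁ h0)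
  calc φ (r₁ / a) ≤ D * (|r₁| / |a|) ^ (-N) := by rwa [abs_div] at h
    _ = (D * |r₁| ^ (-N)) * |a| ^ N := by
        rw [Real.div_rpow (abs_nonneg _) (abs_nonneg _), Real.rpow_neg (abs_nonneg a),
          div_inv_eq_mul]
        ring

lemma ptw1 (hφ0 : ∀ x, 0 ≤ φ x) (hφ1 : ∀ x, φ x ≤ D)
    (hφ2 : ∀ x, x ≠ 0 → φ x ≤ D * |x| ^ (-N)) (h₁ : r₁ ≠ 0) (he₁ : 0 ≤ e₁) :
    ∀ a : ℝ, a ≠ 0 →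
      φ (r₁ / a) * max 1 |r₂ * a| ^ (-e₁) * |a| ^ (e₁ - e₂)
        ≤ (D * |r₁| ^ (-N)) * |a| ^ (N + e₁ - e₂) := by
  intro a h0
  have ha : 0 < |a| := abs_pos.2 h0
  have hD0 : 0 ≤ D := le_trans (hφ0 0) (hφ1 0)
  have hmax : max 1 |r₂ * a| ^ (-e₁) ≤ 1 :=
    Real.rpow_le_one_of_one_le_of_nonpos (le_max_left _ _) (neg_nonpos.2 he₁)
  have hmax0 : (0:ℝ) ≤ max 1 |r₂ * a| ^ (-e₁) :=
    Real.rpow_nonneg (le_trans zero_le_one (le_max_left _ _)) _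
  have hK0 : 0 ≤ (D * |r₁| ^ (-N)) * |a| ^ N :=
    mul_nonneg (mul_nonneg hD0 (Real.rpow_nonneg (abs_nonneg _) _))
      (Real.rpow_nonneg (abs_nonneg _) _)
  calc φ (r₁ / a) * max 1 |r₂ * a| ^ (-e₁) * |a| ^ (e₁ - e₂)
      ≤ ((D * |r₁| ^ (-N)) * |a| ^ N * 1) * |a| ^ (e₁ - e₂) := by
        apply mul_le_mul_of_nonneg_right _ (Real.rpow_nonneg (abs_nonneg a) _)
        exact mul_le_mul (phi_decay_bound hφ2 h₁ a h0) hmax hmax0 hK0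
    _ = (D * |r₁| ^ (-N)) * |a| ^ (N + e₁ - e₂) := by
        rw [mul_one, mul_assoc, ← Real.rpow_add ha,
          show N + (e₁ - e₂) = N + e₁ - e₂ from by ring]

lemma max_rpow_eq (e₁ : ℝ) {r₂ a : ℝ} (hr : 1 ≤ |r₂| * |a|) :
    max 1 |r₂ * a| ^ (-e₁) = |r₂| ^ (-e₁) * |a| ^ (-e₁) := by
  rw [abs_mul, max_eq_right hr, Real.mul_rpow (abs_nonneg _) (abs_nonneg _)]

lemma ptw3 (hφ0 : ∀ x, 0 ≤ φ x) (hφ1 : ∀ x, φ x ≤ D) (h₂ : r₂ ≠ 0) :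
    ∀ a : ℝ, a ≠ 0 → |r₂|⁻¹ ≤ |a| →
      φ (r₁ / a) * max 1 |r₂ * a| ^ (-e₁) * |a| ^ (e₁ - e₂)
        ≤ (D * |r₂| ^ (-e₁)) * |a| ^ (-e₂) := by
  intro a h0 hr
  have ha : 0 < |a| := abs_pos.2 h0
  have hr2 : 0 < |r₂| := abs_pos.2 h₂
  have hr' : 1 ≤ |r₂| * |a| := by
    rw [← mul_inv_cancel₀ (ne_of_gt hr2)]
    exact mul_le_mul_of_nonneg_left hr hr2.le
  have hD0 : 0 ≤ D := le_trans (hφ0 0) (hφ1 0)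
  calc φ (r₁ / a) * max 1 |r₂ * a| ^ (-e₁) * |a| ^ (e₁ - e₂)
      ≤ D * (|r₂| ^ (-e₁) * |a| ^ (-e₁)) * |a| ^ (e₁ - e₂) := by
        apply mul_le_mul_of_nonneg_right _ (Real.rpow_nonneg (abs_nonneg a) _)
        rw [max_rpow_eq e₁ hr']
        exact mul_le_mul_of_nonneg_right (hφ1 _)
          (mul_nonneg (Real.rpow_nonneg (abs_nonneg _) _) (Real.rpow_nonneg (abs_nonneg _) _))
    _ = (D * |r₂| ^ (-e₁)) * |a| ^ (-e₂) := by
        rw [show D * (|r₂| ^ (-e₁) * |a| ^ (-e₁)) * |a| ^ (e₁ - e₂)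
            = (D * |r₂| ^ (-e₁)) * (|a| ^ (-e₁) * |a| ^ (e₁ - e₂)) from by ring,
          ← Real.rpow_add ha, show -e₁ + (e₁ - e₂) = -e₂ from by ring]

lemma ptw4 (hφ0 : ∀ x, 0 ≤ φ x) (hφ1 : ∀ x, φ x ≤ D)
    (hφ2 : ∀ x, x ≠ 0 → φ x ≤ D * |x| ^ (-N)) (h₁ : r₁ ≠ 0) (h₂ : r₂ ≠ 0) :
    ∀ a : ℝ, a ≠ 0 → |r₂|⁻¹ ≤ |a| →
      φ (r₁ / a) * max 1 |r₂ * a| ^ (-e₁) * |a| ^ (e₁ - e₂)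
        ≤ (D * |r₁| ^ (-N) * |r₂| ^ (-e₁)) * |a| ^ (N - e₂) := by
  intro a h0 hr
  have ha : 0 < |a| := abs_pos.2 h0
  have hr2 : 0 < |r₂| := abs_pos.2 h₂
  have hr' : 1 ≤ |r₂| * |a| := by
    rw [← mul_inv_cancel₀ (ne_of_gt hr2)]
    exact mul_le_mul_of_nonneg_left hr hr2.le
  have hD0 : 0 ≤ D := le_trans (hφ0 0) (hφ1 0)
  calc φ (r₁ / a) * max 1 |r₂ * a| ^ (-e₁) * |a| ^ (e₁ - e₂)
      ≤ ((D * |r₁| ^ (-N)) * |a| ^ N) * (|r₂| ^ (-e₁) * |a| ^ (-e₁)) * |a| ^ (e₁ - e₂) := by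
        apply mul_le_mul_of_nonneg_right _ (Real.rpow_nonneg (abs_nonneg a) _)
        rw [max_rpow_eq e₁ hr']
        exact mul_le_mul_of_nonneg_right (phi_decay_bound hφ2 h₁ a h0)
          (mul_nonneg (Real.rpow_nonneg (abs_nonneg _) _) (Real.rpow_nonneg (abs_nonneg _) _))
    _ = (D * |r₁| ^ (-N) * |r₂| ^ (-e₁)) * (|a| ^ N * |a| ^ (-e₁) * |a| ^ (e₁ - e₂)) := by ring
    _ = (D * |r₁| ^ (-N) * |r₂| ^ (-e₁)) * |a| ^ (N - e₂) := by
        rw [← Real.rpow_add ha, ← Real.rpow_add ha,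
          show N + -e₁ + (e₁ - e₂) = N - e₂ from by ring]

end Pointwise

lemma regionA' (F : ℝ → ℝ) (K X Y β : ℝ) (hK : 0 ≤ K) (hX : 0 < X) (hXY : X ≤ Y) (hβ : 0 < β)
    (hp : ∀ a : ℝ, a ≠ 0 → X ≤ |a| → F a ≤ K * |a| ^ β) :
    ∫⁻ a in {x : ℝ | abs x ∈ Icc X Y}, ENNReal.ofReal (F a) * ENNReal.ofReal |a|⁻¹
      ≤ ENNReal.ofReal (2 * (K * Y ^ β / β)) := by
  have hY : 0 < Y := lt_of_lt_of_le hX hXY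
  refine le_trans (setLIntegral_mono (μ := volume) (s := {x : ℝ | abs x ∈ Icc X Y})
    (g := fun a => ENNReal.ofReal (K * |a| ^ β) * ENNReal.ofReal |a|⁻¹)
    (by fun_prop) fun a ha => ?_) ?_
  · rcases eq_or_ne a 0 with rfl | h0
    · simp
    · exact mul_le_mul_left (ENNReal.ofReal_le_ofReal (hp a h0 ha.1)) _
  · refine le_trans (lintegral_mono_set fun x hx => ?_) (pieceA K Y β hK hY hβ)
    exact hx.2

section Cases

variable {φ : ℝ → ℝ} {D N e₁ e₂ r₁ r₂ : ℝ}

lemma case_big (he₁ : 0 < e₁) (he₂ : 0 < e₂) (hN₁ : e₂ - e₁ < N) (hN₂ : e₂ < N)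
    (hφ0 : ∀ x, 0 ≤ φ x) (hφ1 : ∀ x, φ x ≤ D)
    (hφ2 : ∀ x, x ≠ 0 → φ x ≤ D * |x| ^ (-N))
    (h₁ : r₁ ≠ 0) (h₂ : r₂ ≠ 0) (hu : 1 ≤ |r₁ * r₂|) :
    (∫⁻ a : ℝ, ENNReal.ofReal (φ (r₁ / a) * max 1 |r₂ * a| ^ (-e₁) * |a| ^ (e₁ - e₂))
        * ENNReal.ofReal |a|⁻¹)
      ≤ ENNReal.ofReal ((2 * D / (N + e₁ - e₂) + 2 * D / (N - e₂) + 2 * D / e₂)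
          * (|r₁| ^ (e₁ - e₂) * |r₁ * r₂| ^ (-e₁))) := by
  set F : ℝ → ℝ := fun a => φ (r₁ / a) * max 1 |r₂ * a| ^ (-e₁) * |a| ^ (e₁ - e₂) with hF
  have hρ : 0 < |r₁| := abs_pos.2 h₁
  have hs : 0 < |r₂| := abs_pos.2 h₂
  have hσ : 0 < |r₂|⁻¹ := inv_pos.2 hs
  have hD0 : 0 ≤ D := le_trans (hφ0 0) (hφ1 0)
  have hu' : 1 ≤ |r₁| * |r₂| := by rwa [← abs_mul]
  have hσρ : |r₂|⁻¹ ≤ |r₁| := by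
    calc |r₂|⁻¹ = |r₂|⁻¹ * 1 := (mul_one _).symm
      _ ≤ |r₂|⁻¹ * (|r₁| * |r₂|) := mul_le_mul_of_nonneg_left hu' hσ.le
      _ = |r₁| * (|r₂|⁻¹ * |r₂|) := by ring
      _ = |r₁| := by rw [inv_mul_cancel₀ (ne_of_gt hs), mul_one]
  set X : ℝ := |r₁| ^ (e₁ - e₂) * |r₁ * r₂| ^ (-e₁) with hX
  have hX0 : 0 < X :=
    mul_pos (Real.rpow_pos_of_pos hρ _) (Real.rpow_pos_of_pos (abs_pos.2 (mul_ne_zero h₁ h₂)) _)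
  have hb1 := regionA F (D * |r₁| ^ (-N)) (|r₂|⁻¹) (N + e₁ - e₂)
    (mul_nonneg hD0 (Real.rpow_nonneg (abs_nonneg _) _)) hσ (by linarith)
    (ptw1 hφ0 hφ1 hφ2 h₁ he₁.le)
  have hb2 := regionA' F (D * |r₁| ^ (-N) * |r₂| ^ (-e₁)) (|r₂|⁻¹) (|r₁|) (N - e₂)
    (mul_nonneg (mul_nonneg hD0 (Real.rpow_nonneg (abs_nonneg _) _))
      (Real.rpow_nonneg (abs_nonneg _) _)) hσ hσρ (by linarith)
    (ptw4 hφ0 hφ1 hφ2 h₁ h₂)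
  have hb3 := regionB F (D * |r₂| ^ (-e₁)) (|r₁|) (-e₂)
    (mul_nonneg hD0 (Real.rpow_nonneg (abs_nonneg _) _)) hρ (by linarith)
    (fun a h0 hXa => ptw3 hφ0 hφ1 h₂ a h0 (le_trans hσρ hXa))
  have key1 : |r₁| ^ (-N) * (|r₂|⁻¹) ^ (N + e₁ - e₂) = X * |r₁ * r₂| ^ (-(N - e₂)) := by
    rw [hX, abs_mul]
    simp only [Real.mul_rpow hρ.le hs.le, Real.inv_rpow hs.le,
      Real.rpow_def_of_pos hρ, Real.rpow_def_of_pos hs, ← Real.exp_neg, ← Real.exp_add]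
    rw [Real.exp_eq_exp]; ring
  have key2' : |r₁| ^ (-N) * |r₂| ^ (-e₁) * |r₁| ^ (N - e₂) = X := by
    rw [hX, abs_mul]
    simp only [Real.mul_rpow hρ.le hs.le, Real.inv_rpow hs.le,
      Real.rpow_def_of_pos hρ, Real.rpow_def_of_pos hs, ← Real.exp_neg, ← Real.exp_add]
    rw [Real.exp_eq_exp]; ring
  have key2 : D * |r₁| ^ (-N) * |r₂| ^ (-e₁) * |r₁| ^ (N - e₂) = D * X := by
    rw [← key2']; ring
  have key3' : |r₂| ^ (-e₁) * |r₁| ^ (-e₂) = X := by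
    rw [hX, abs_mul]
    simp only [Real.mul_rpow hρ.le hs.le, Real.inv_rpow hs.le,
      Real.rpow_def_of_pos hρ, Real.rpow_def_of_pos hs, ← Real.exp_neg, ← Real.exp_add]
    rw [Real.exp_eq_exp]; ring
  have key3 : D * |r₂| ^ (-e₁) * |r₁| ^ (-e₂) = D * X := by
    rw [← key3']; ring
  have hfac : |r₁ * r₂| ^ (-(N - e₂)) ≤ 1 :=
    Real.rpow_le_one_of_one_le_of_nonpos hu (by linarith)
  have hv1 : 2 * ((D * |r₁| ^ (-N)) * (|r₂|⁻¹) ^ (N + e₁ - e₂) / (N + e₁ - e₂))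
      ≤ 2 * D / (N + e₁ - e₂) * X := by
    have h1 : (2 * D / (N + e₁ - e₂)) * (|r₁| ^ (-N) * (|r₂|⁻¹) ^ (N + e₁ - e₂))
        = (2 * D / (N + e₁ - e₂)) * (X * |r₁ * r₂| ^ (-(N - e₂))) := by rw [key1]
    have h2 : (2 * D / (N + e₁ - e₂)) * (X * |r₁ * r₂| ^ (-(N - e₂)))
        ≤ (2 * D / (N + e₁ - e₂)) * (X * 1) := by
      apply mul_le_mul_of_nonneg_left (mul_le_mul_of_nonneg_left hfac hX0.le)
      exact div_nonneg (by linarith) (by linarith)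
    calc 2 * ((D * |r₁| ^ (-N)) * (|r₂|⁻¹) ^ (N + e₁ - e₂) / (N + e₁ - e₂))
        = (2 * D / (N + e₁ - e₂)) * (|r₁| ^ (-N) * (|r₂|⁻¹) ^ (N + e₁ - e₂)) := by ring
      _ ≤ (2 * D / (N + e₁ - e₂)) * (X * 1) := h1 ▸ h2
      _ = 2 * D / (N + e₁ - e₂) * X := by ring
  have hv2 : 2 * ((D * |r₁| ^ (-N) * |r₂| ^ (-e₁)) * |r₁| ^ (N - e₂) / (N - e₂))
      = 2 * D / (N - e₂) * X := by
    have : 2 * ((D * |r₁| ^ (-N) * |r₂| ^ (-e₁)) * |r₁| ^ (N - e₂) / (N - e₂))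
        = 2 * (D * |r₁| ^ (-N) * |r₂| ^ (-e₁) * |r₁| ^ (N - e₂)) / (N - e₂) := by ring
    rw [this, key2]; ring
  have hv3 : 2 * ((D * |r₂| ^ (-e₁)) * |r₁| ^ (-e₂) / (-(-e₂)))
      = 2 * D / e₂ * X := by
    have : 2 * ((D * |r₂| ^ (-e₁)) * |r₁| ^ (-e₂) / (-(-e₂)))
        = 2 * (D * |r₂| ^ (-e₁) * |r₁| ^ (-e₂)) / e₂ := by ring
    rw [this, key3]; ring
  calc (∫⁻ a : ℝ, ENNReal.ofReal (F a) * ENNReal.ofReal |a|⁻¹)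
      ≤ (∫⁻ a in {x : ℝ | abs x ∈ Iic |r₂|⁻¹}, ENNReal.ofReal (F a) * ENNReal.ofReal |a|⁻¹)
        + (∫⁻ a in {x : ℝ | abs x ∈ Icc |r₂|⁻¹ |r₁|}, ENNReal.ofReal (F a) * ENNReal.ofReal |a|⁻¹)
        + ∫⁻ a in {x : ℝ | abs x ∈ Ici |r₁|}, ENNReal.ofReal (F a) * ENNReal.ofReal |a|⁻¹ :=
        split3 _ _ _ hσρ
    _ ≤ ENNReal.ofReal (2 * D / (N + e₁ - e₂) * X) + ENNReal.ofReal (2 * D / (N - e₂) * X)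
        + ENNReal.ofReal (2 * D / e₂ * X) := by
        refine add_le_add (add_le_add (le_trans hb1 (ENNReal.ofReal_le_ofReal hv1))
          (le_trans hb2 (le_of_eq (congrArg ENNReal.ofReal hv2)))) ?_
        exact le_trans hb3 (le_of_eq (congrArg ENNReal.ofReal hv3))
    _ = ENNReal.ofReal (2 * D / (N + e₁ - e₂) * X + 2 * D / (N - e₂) * X + 2 * D / e₂ * X) := by
        rw [← ENNReal.ofReal_add
            (mul_nonneg (div_nonneg (by linarith) (by linarith)) hX0.le)
            (mul_nonneg (div_nonneg (by linarith) (by linarith)) hX0.le),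
          ← ENNReal.ofReal_add
            (add_nonneg (mul_nonneg (div_nonneg (by linarith) (by linarith)) hX0.le)
              (mul_nonneg (div_nonneg (by linarith) (by linarith)) hX0.le))
            (mul_nonneg (div_nonneg (by linarith) (by linarith)) hX0.le)]
    _ ≤ ENNReal.ofReal ((2 * D / (N + e₁ - e₂) + 2 * D / (N - e₂) + 2 * D / e₂) * X) :=
        ENNReal.ofReal_le_ofReal (le_of_eq (by ring))

lemma case_small_lt (he₁ : 0 < e₁) (hlt : e₁ < e₂) (hN₁ : e₂ - e₁ < N) (hN₂ : e₂ < N)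
    (hφ0 : ∀ x, 0 ≤ φ x) (hφ1 : ∀ x, φ x ≤ D)
    (hφ2 : ∀ x, x ≠ 0 → φ x ≤ D * |x| ^ (-N))
    (h₁ : r₁ ≠ 0) (h₂ : r₂ ≠ 0) :
    (∫⁻ a : ℝ, ENNReal.ofReal (φ (r₁ / a) * max 1 |r₂ * a| ^ (-e₁) * |a| ^ (e₁ - e₂))
        * ENNReal.ofReal |a|⁻¹)
      ≤ ENNReal.ofReal ((2 * D / (N + e₁ - e₂) + 2 * D / (e₂ - e₁)) * |r₁| ^ (e₁ - e₂)) := by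
  set F : ℝ → ℝ := fun a => φ (r₁ / a) * max 1 |r₂ * a| ^ (-e₁) * |a| ^ (e₁ - e₂) with hF
  have hρ : 0 < |r₁| := abs_pos.2 h₁
  have hD0 : 0 ≤ D := le_trans (hφ0 0) (hφ1 0)
  have hX0 : (0:ℝ) < |r₁| ^ (e₁ - e₂) := Real.rpow_pos_of_pos hρ _
  have hb1 := regionA F (D * |r₁| ^ (-N)) (|r₁|) (N + e₁ - e₂)
    (mul_nonneg hD0 (Real.rpow_nonneg (abs_nonneg _) _)) hρ (by linarith)
    (ptw1 hφ0 hφ1 hφ2 h₁ he₁.le)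
  have hb2 := regionB F D (|r₁|) (e₁ - e₂) hD0 hρ (by linarith)
    (fun a h0 _ => ptw2 hφ0 hφ1 he₁.le a h0)
  have key1 : |r₁| ^ (-N) * |r₁| ^ (N + e₁ - e₂) = |r₁| ^ (e₁ - e₂) := by
    rw [← Real.rpow_add hρ, show -N + (N + e₁ - e₂) = e₁ - e₂ from by ring]
  have hv1 : 2 * ((D * |r₁| ^ (-N)) * |r₁| ^ (N + e₁ - e₂) / (N + e₁ - e₂))
      = 2 * D / (N + e₁ - e₂) * |r₁| ^ (e₁ - e₂) := by
    rw [show 2 * ((D * |r₁| ^ (-N)) * |r₁| ^ (N + e₁ - e₂) / (N + e₁ - e₂))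
        = 2 * D / (N + e₁ - e₂) * (|r₁| ^ (-N) * |r₁| ^ (N + e₁ - e₂)) from by ring, key1]
  have hv2 : 2 * (D * |r₁| ^ (e₁ - e₂) / (-(e₁ - e₂)))
      = 2 * D / (e₂ - e₁) * |r₁| ^ (e₁ - e₂) := by ring
  calc (∫⁻ a : ℝ, ENNReal.ofReal (F a) * ENNReal.ofReal |a|⁻¹)
      ≤ (∫⁻ a in {x : ℝ | abs x ∈ Iic |r₁|}, ENNReal.ofReal (F a) * ENNReal.ofReal |a|⁻¹)
        + ∫⁻ a in {x : ℝ | abs x ∈ Ici |r₁|}, ENNReal.ofReal (F a) * ENNReal.ofReal |a|⁻¹ :=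
        split2 _ _
    _ ≤ ENNReal.ofReal (2 * D / (N + e₁ - e₂) * |r₁| ^ (e₁ - e₂))
        + ENNReal.ofReal (2 * D / (e₂ - e₁) * |r₁| ^ (e₁ - e₂)) :=
        add_le_add (le_trans hb1 (le_of_eq (congrArg ENNReal.ofReal hv1)))
          (le_trans hb2 (le_of_eq (congrArg ENNReal.ofReal hv2)))
    _ = ENNReal.ofReal (2 * D / (N + e₁ - e₂) * |r₁| ^ (e₁ - e₂)
          + 2 * D / (e₂ - e₁) * |r₁| ^ (e₁ - e₂)) := by
        rw [← ENNReal.ofReal_add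
          (mul_nonneg (div_nonneg (by linarith) (by linarith)) hX0.le)
          (mul_nonneg (div_nonneg (by linarith) (by linarith)) hX0.le)]
    _ ≤ ENNReal.ofReal ((2 * D / (N + e₁ - e₂) + 2 * D / (e₂ - e₁)) * |r₁| ^ (e₁ - e₂)) :=
        ENNReal.ofReal_le_ofReal (le_of_eq (by ring))

lemma case_small_gt (he₂ : 0 < e₂) (hgt : e₂ < e₁) (hN₂ : e₂ < N)
    (hφ0 : ∀ x, 0 ≤ φ x) (hφ1 : ∀ x, φ x ≤ D)
    (hφ2 : ∀ x, x ≠ 0 → φ x ≤ D * |x| ^ (-N))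
    (h₁ : r₁ ≠ 0) (h₂ : r₂ ≠ 0) (hu : |r₁ * r₂| ≤ 1) :
    (∫⁻ a : ℝ, ENNReal.ofReal (φ (r₁ / a) * max 1 |r₂ * a| ^ (-e₁) * |a| ^ (e₁ - e₂))
        * ENNReal.ofReal |a|⁻¹)
      ≤ ENNReal.ofReal ((2 * D / (N + e₁ - e₂) + 2 * D / (e₁ - e₂) + 2 * D / e₂)
          * (|r₁| ^ (e₁ - e₂) * |r₁ * r₂| ^ (e₂ - e₁))) := by
  set F : ℝ → ℝ := fun a => φ (r₁ / a) * max 1 |r₂ * a| ^ (-e₁) * |a| ^ (e₁ - e₂) with hF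
  have he₁ : 0 < e₁ := lt_trans he₂ hgt
  have hρ : 0 < |r₁| := abs_pos.2 h₁
  have hs : 0 < |r₂| := abs_pos.2 h₂
  have hσ : 0 < |r₂|⁻¹ := inv_pos.2 hs
  have hu0 : 0 < |r₁ * r₂| := abs_pos.2 (mul_ne_zero h₁ h₂)
  have hD0 : 0 ≤ D := le_trans (hφ0 0) (hφ1 0)
  have hu' : |r₁| * |r₂| ≤ 1 := by rwa [← abs_mul]
  have hρσ : |r₁| ≤ |r₂|⁻¹ := by
    calc |r₁| = |r₁| * |r₂| * |r₂|⁻¹ := by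
          rw [mul_assoc, mul_inv_cancel₀ (ne_of_gt hs), mul_one]
      _ ≤ 1 * |r₂|⁻¹ := mul_le_mul_of_nonneg_right hu' hσ.le
      _ = |r₂|⁻¹ := one_mul _
  set X : ℝ := |r₁| ^ (e₁ - e₂) * |r₁ * r₂| ^ (e₂ - e₁) with hX
  have hX0 : 0 < X :=
    mul_pos (Real.rpow_pos_of_pos hρ _) (Real.rpow_pos_of_pos hu0 _)
  have honele : (1:ℝ) ≤ |r₁ * r₂| ^ (e₂ - e₁) :=
    Real.one_le_rpow_of_pos_of_le_one_of_nonpos hu0 hu (by linarith)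
  have hb1 := regionA F (D * |r₁| ^ (-N)) (|r₁|) (N + e₁ - e₂)
    (mul_nonneg hD0 (Real.rpow_nonneg (abs_nonneg _) _)) hρ (by linarith)
    (ptw1 hφ0 hφ1 hφ2 h₁ he₁.le)
  have hb2 := regionA' F D (|r₁|) (|r₂|⁻¹) (e₁ - e₂) hD0 hρ hρσ (by linarith)
    (fun a h0 _ => ptw2 hφ0 hφ1 he₁.le a h0)
  have hb3 := regionB F (D * |r₂| ^ (-e₁)) (|r₂|⁻¹) (-e₂)
    (mul_nonneg hD0 (Real.rpow_nonneg (abs_nonneg _) _)) hσ (by linarith)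
    (fun a h0 hXa => ptw3 hφ0 hφ1 h₂ a h0 hXa)
  have key1 : |r₁| ^ (-N) * |r₁| ^ (N + e₁ - e₂) = |r₁| ^ (e₁ - e₂) := by
    rw [← Real.rpow_add hρ, show -N + (N + e₁ - e₂) = e₁ - e₂ from by ring]
  have key2 : (|r₂|⁻¹) ^ (e₁ - e₂) = X := by
    rw [hX, abs_mul]
    simp only [Real.mul_rpow hρ.le hs.le, Real.inv_rpow hs.le,
      Real.rpow_def_of_pos hρ, Real.rpow_def_of_pos hs, ← Real.exp_neg, ← Real.exp_add]
    rw [Real.exp_eq_exp]; ring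
  have key3 : |r₂| ^ (-e₁) * (|r₂|⁻¹) ^ (-e₂) = X := by
    rw [hX, abs_mul]
    simp only [Real.mul_rpow hρ.le hs.le, Real.inv_rpow hs.le,
      Real.rpow_def_of_pos hρ, Real.rpow_def_of_pos hs, ← Real.exp_neg, ← Real.exp_add]
    rw [Real.exp_eq_exp]; ring
  have hv1 : 2 * ((D * |r₁| ^ (-N)) * |r₁| ^ (N + e₁ - e₂) / (N + e₁ - e₂))
      ≤ 2 * D / (N + e₁ - e₂) * X := by
    have h0 : 2 * ((D * |r₁| ^ (-N)) * |r₁| ^ (N + e₁ - e₂) / (N + e₁ - e₂))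
        = 2 * D / (N + e₁ - e₂) * (|r₁| ^ (e₁ - e₂) * 1) := by
      rw [show 2 * ((D * |r₁| ^ (-N)) * |r₁| ^ (N + e₁ - e₂) / (N + e₁ - e₂))
          = 2 * D / (N + e₁ - e₂) * (|r₁| ^ (-N) * |r₁| ^ (N + e₁ - e₂)) from by ring, key1,
        mul_one]
    rw [h0, hX]
    apply mul_le_mul_of_nonneg_left _ (div_nonneg (by linarith) (by linarith))
    exact mul_le_mul_of_nonneg_left honele (Real.rpow_nonneg (abs_nonneg _) _)
  have hv2 : 2 * (D * (|r₂|⁻¹) ^ (e₁ - e₂) / (e₁ - e₂)) = 2 * D / (e₁ - e₂) * X := by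
    rw [show 2 * (D * (|r₂|⁻¹) ^ (e₁ - e₂) / (e₁ - e₂))
        = 2 * D / (e₁ - e₂) * (|r₂|⁻¹) ^ (e₁ - e₂) from by ring, key2]
  have hv3 : 2 * ((D * |r₂| ^ (-e₁)) * (|r₂|⁻¹) ^ (-e₂) / (-(-e₂))) = 2 * D / e₂ * X := by
    rw [show 2 * ((D * |r₂| ^ (-e₁)) * (|r₂|⁻¹) ^ (-e₂) / (-(-e₂)))
        = 2 * D / e₂ * (|r₂| ^ (-e₁) * (|r₂|⁻¹) ^ (-e₂)) from by ring, key3]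
  calc (∫⁻ a : ℝ, ENNReal.ofReal (F a) * ENNReal.ofReal |a|⁻¹)
      ≤ (∫⁻ a in {x : ℝ | abs x ∈ Iic |r₁|}, ENNReal.ofReal (F a) * ENNReal.ofReal |a|⁻¹)
        + (∫⁻ a in {x : ℝ | abs x ∈ Icc |r₁| |r₂|⁻¹}, ENNReal.ofReal (F a) * ENNReal.ofReal |a|⁻¹)
        + ∫⁻ a in {x : ℝ | abs x ∈ Ici |r₂|⁻¹}, ENNReal.ofReal (F a) * ENNReal.ofReal |a|⁻¹ :=
        split3 _ _ _ hρσ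
    _ ≤ ENNReal.ofReal (2 * D / (N + e₁ - e₂) * X) + ENNReal.ofReal (2 * D / (e₁ - e₂) * X)
        + ENNReal.ofReal (2 * D / e₂ * X) := by
        refine add_le_add (add_le_add (le_trans hb1 (ENNReal.ofReal_le_ofReal hv1))
          (le_trans hb2 (le_of_eq (congrArg ENNReal.ofReal hv2)))) ?_
        exact le_trans hb3 (le_of_eq (congrArg ENNReal.ofReal hv3))
    _ = ENNReal.ofReal (2 * D / (N + e₁ - e₂) * X + 2 * D / (e₁ - e₂) * X + 2 * D / e₂ * X) := by
        rw [← ENNReal.ofReal_add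
            (mul_nonneg (div_nonneg (by linarith) (by linarith)) hX0.le)
            (mul_nonneg (div_nonneg (by linarith) (by linarith)) hX0.le),
          ← ENNReal.ofReal_add
            (add_nonneg (mul_nonneg (div_nonneg (by linarith) (by linarith)) hX0.le)
              (mul_nonneg (div_nonneg (by linarith) (by linarith)) hX0.le))
            (mul_nonneg (div_nonneg (by linarith) (by linarith)) hX0.le)]
    _ ≤ ENNReal.ofReal ((2 * D / (N + e₁ - e₂) + 2 * D / (e₁ - e₂) + 2 * D / e₂) * X) :=
        ENNReal.ofReal_le_ofReal (le_of_eq (by ring))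

lemma case_small_eq {e ε : ℝ} (he : 0 < e) (hN : e < N) (hε : 0 < ε)
    (hφ0 : ∀ x, 0 ≤ φ x) (hφ1 : ∀ x, φ x ≤ D)
    (hφ2 : ∀ x, x ≠ 0 → φ x ≤ D * |x| ^ (-N))
    (h₁ : r₁ ≠ 0) (h₂ : r₂ ≠ 0) (hu : |r₁ * r₂| ≤ 1) :
    (∫⁻ a : ℝ, ENNReal.ofReal (φ (r₁ / a) * max 1 |r₂ * a| ^ (-e) * |a| ^ (e - e))
        * ENNReal.ofReal |a|⁻¹)
      ≤ ENNReal.ofReal ((2 * D / N + 2 * D / ε + 2 * D / e)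
          * |r₁ * r₂| ^ (-ε)) := by
  set F : ℝ → ℝ := fun a => φ (r₁ / a) * max 1 |r₂ * a| ^ (-e) * |a| ^ (e - e) with hF
  have hρ : 0 < |r₁| := abs_pos.2 h₁
  have hs : 0 < |r₂| := abs_pos.2 h₂
  have hσ : 0 < |r₂|⁻¹ := inv_pos.2 hs
  have hu0 : 0 < |r₁ * r₂| := abs_pos.2 (mul_ne_zero h₁ h₂)
  have hD0 : 0 ≤ D := le_trans (hφ0 0) (hφ1 0)
  have hu' : |r₁| * |r₂| ≤ 1 := by rwa [← abs_mul]
  have hρσ : |r₁| ≤ |r₂|⁻¹ := by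
    calc |r₁| = |r₁| * |r₂| * |r₂|⁻¹ := by
          rw [mul_assoc, mul_inv_cancel₀ (ne_of_gt hs), mul_one]
      _ ≤ 1 * |r₂|⁻¹ := mul_le_mul_of_nonneg_right hu' hσ.le
      _ = |r₂|⁻¹ := one_mul _
  set X : ℝ := |r₁ * r₂| ^ (-ε) with hX
  have hX0 : 0 < X := Real.rpow_pos_of_pos hu0 _
  have honele : (1:ℝ) ≤ X :=
    Real.one_le_rpow_of_pos_of_le_one_of_nonpos hu0 hu (by linarith)
  have hb1 := regionA F (D * |r₁| ^ (-N)) (|r₁|) (N + e - e)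
    (mul_nonneg hD0 (Real.rpow_nonneg (abs_nonneg _) _)) hρ (by linarith)
    (ptw1 (e₁ := e) (e₂ := e) hφ0 hφ1 hφ2 h₁ he.le)
  have hb2 := regionC F D (|r₁|) (|r₂|⁻¹) hD0 hρ hρσ
    (fun a h0 _ =>
      le_trans (ptw2 (e₁ := e) (e₂ := e) (r₁ := r₁) (r₂ := r₂) hφ0 hφ1 he.le a h0)
        (le_of_eq (by rw [show e - e = 0 from by ring, Real.rpow_zero, mul_one])))
  have hb3 := regionB F (D * |r₂| ^ (-e)) (|r₂|⁻¹) (-e)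
    (mul_nonneg hD0 (Real.rpow_nonneg (abs_nonneg _) _)) hσ (by linarith)
    (fun a h0 hXa => ptw3 (e₁ := e) (e₂ := e) hφ0 hφ1 h₂ a h0 hXa)
  rw [show N + e - e = N from by ring] at hb1
  have key1 : |r₁| ^ (-N) * |r₁| ^ N = 1 := by
    rw [← Real.rpow_add hρ, show -N + N = 0 from by ring, Real.rpow_zero]
  have key3 : |r₂| ^ (-e) * (|r₂|⁻¹) ^ (-e) = 1 := by
    rw [Real.inv_rpow hs.le, ← Real.rpow_neg hs.le, ← Real.rpow_add hs,
      show -e + - -e = 0 from by ring, Real.rpow_zero]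
  have hv1 : 2 * ((D * |r₁| ^ (-N)) * |r₁| ^ N / N) ≤ 2 * D / N * X := by
    have h0 : 2 * ((D * |r₁| ^ (-N)) * |r₁| ^ N / N) = 2 * D / N * 1 := by
      rw [show 2 * ((D * |r₁| ^ (-N)) * |r₁| ^ N / N)
          = 2 * D / N * (|r₁| ^ (-N) * |r₁| ^ N) from by ring, key1]
    rw [h0]
    exact mul_le_mul_of_nonneg_left honele (div_nonneg (by linarith) (by linarith))
  have hv2 : 2 * (D * Real.log (|r₂|⁻¹ / |r₁|)) ≤ 2 * D / ε * X := by
    have hlogarg : |r₂|⁻¹ / |r₁| = |r₁ * r₂|⁻¹ := by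
      rw [abs_mul, mul_inv]
      rw [div_eq_mul_inv, mul_comm]
    have hlog : Real.log (|r₂|⁻¹ / |r₁|) ≤ X / ε := by
      rw [hlogarg, hX]
      calc Real.log |r₁ * r₂|⁻¹ ≤ (|r₁ * r₂|⁻¹) ^ ε / ε :=
            Real.log_le_rpow_div (inv_nonneg.2 hu0.le) hε
        _ = |r₁ * r₂| ^ (-ε) / ε := by
            rw [Real.inv_rpow hu0.le, ← Real.rpow_neg hu0.le]
    calc 2 * (D * Real.log (|r₂|⁻¹ / |r₁|)) ≤ 2 * (D * (X / ε)) := by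
          apply mul_le_mul_of_nonneg_left _ (by norm_num : (0:ℝ) ≤ 2)
          exact mul_le_mul_of_nonneg_left hlog hD0
      _ = 2 * D / ε * X := by ring
  have hv3 : 2 * ((D * |r₂| ^ (-e)) * (|r₂|⁻¹) ^ (-e) / (-(-e))) ≤ 2 * D / e * X := by
    have h0 : 2 * ((D * |r₂| ^ (-e)) * (|r₂|⁻¹) ^ (-e) / (-(-e))) = 2 * D / e * 1 := by
      rw [show 2 * ((D * |r₂| ^ (-e)) * (|r₂|⁻¹) ^ (-e) / (-(-e)))
          = 2 * D / e * (|r₂| ^ (-e) * (|r₂|⁻¹) ^ (-e)) from by ring, key3]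
    rw [h0]
    exact mul_le_mul_of_nonneg_left honele (div_nonneg (by linarith) (by linarith))
  calc (∫⁻ a : ℝ, ENNReal.ofReal (F a) * ENNReal.ofReal |a|⁻¹)
      ≤ (∫⁻ a in {x : ℝ | abs x ∈ Iic |r₁|}, ENNReal.ofReal (F a) * ENNReal.ofReal |a|⁻¹)
        + (∫⁻ a in {x : ℝ | abs x ∈ Icc |r₁| |r₂|⁻¹}, ENNReal.ofReal (F a) * ENNReal.ofReal |a|⁻¹)
        + ∫⁻ a in {x : ℝ | abs x ∈ Ici |r₂|⁻¹}, ENNReal.ofReal (F a) * ENNReal.ofReal |a|⁻¹ :=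
        split3 _ _ _ hρσ
    _ ≤ ENNReal.ofReal (2 * D / N * X) + ENNReal.ofReal (2 * D / ε * X)
        + ENNReal.ofReal (2 * D / e * X) := by
        refine add_le_add (add_le_add (le_trans hb1 (ENNReal.ofReal_le_ofReal hv1))
          (le_trans hb2 (ENNReal.ofReal_le_ofReal hv2))) ?_
        exact le_trans hb3 (ENNReal.ofReal_le_ofReal hv3)
    _ = ENNReal.ofReal (2 * D / N * X + 2 * D / ε * X + 2 * D / e * X) := by
        rw [← ENNReal.ofReal_add
            (mul_nonneg (div_nonneg (by linarith) (by linarith)) hX0.le)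
            (mul_nonneg (div_nonneg (by linarith) (by linarith)) hX0.le),
          ← ENNReal.ofReal_add
            (add_nonneg (mul_nonneg (div_nonneg (by linarith) (by linarith)) hX0.le)
              (mul_nonneg (div_nonneg (by linarith) (by linarith)) hX0.le))
            (mul_nonneg (div_nonneg (by linarith) (by linarith)) hX0.le)]
    _ ≤ ENNReal.ofReal ((2 * D / N + 2 * D / ε + 2 * D / e) * X) :=
        ENNReal.ofReal_le_ofReal (le_of_eq (by ring))

end Cases

end Stmt9Aux

namespace Stmt9Aux

lemma mulHaar_lintegral (f : ℝ → ℝ≥0∞) (hf : Measurable f) :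
    ∫⁻ a, f a ∂mulHaar = ∫⁻ a, f a * ENNReal.ofReal |a|⁻¹ := by
  rw [mulHaar, lintegral_withDensity_eq_lintegral_mul _ (by fun_prop) hf]
  exact lintegral_congr fun a => mul_comm _ _

lemma meas_integrand (Φ : SchwartzMap ℝ ℂ) (e₁ e₂ r₁ r₂ : ℝ) :
    Measurable fun a : ℝ =>
      ENNReal.ofReal (‖Φ (r₁ / a)‖ * max 1 |r₂ * a| ^ (-e₁) * |a| ^ (e₁ - e₂)) := by
  have m1 : Measurable fun a : ℝ => ‖Φ (r₁ / a)‖ :=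
    (Φ.continuous.norm).measurable.comp (measurable_const.div measurable_id)
  have m2 : Measurable fun a : ℝ => max 1 |r₂ * a| ^ (-e₁) := by fun_prop
  have m3 : Measurable fun a : ℝ => |a| ^ (e₁ - e₂) := by fun_prop
  exact ((m1.mul m2).mul m3).ennreal_ofReal

end Stmt9Aux


set_option maxHeartbeats 2000000 in
open Stmt9Aux in
/-- Lemma 9.5 (archimedean case `F = ℝ`). -/
theorem stmt9
    (e₁ e₂ : ℝ) (he₁ : 0 < e₁) (he₂ : 0 < e₂) (Φ : SchwartzMap ℝ ℂ)
    (ε : ℝ) (hε : 0 < ε) :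
    ∃ C : ℝ, 0 < C ∧
      ∀ r₁ r₂ : ℝ, r₁ ≠ 0 → r₂ ≠ 0 →
        (e₁ < e₂ →
          (∫⁻ a : ℝ, ENNReal.ofReal
              (‖Φ (r₁ / a)‖ * max 1 |r₂ * a| ^ (-e₁) * |a| ^ (e₁ - e₂)) ∂mulHaar)
            ≤ ENNReal.ofReal (C * |r₁| ^ (e₁ - e₂) * max 1 |r₁ * r₂| ^ (-e₁))) ∧
        (e₂ < e₁ →
          (∫⁻ a : ℝ, ENNReal.ofReal
              (‖Φ (r₁ / a)‖ * max 1 |r₂ * a| ^ (-e₁) * |a| ^ (e₁ - e₂)) ∂mulHaar)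
            ≤ ENNReal.ofReal (C * |r₂| ^ (e₂ - e₁) * max 1 |r₁ * r₂| ^ (-e₂))) ∧
        (e₁ = e₂ →
          (∫⁻ a : ℝ, ENNReal.ofReal
              (‖Φ (r₁ / a)‖ * max 1 |r₂ * a| ^ (-e₁) * |a| ^ (e₁ - e₂)) ∂mulHaar)
            ≤ ENNReal.ofReal
                (C * max 1 |r₁ * r₂| ^ (-e₂) * min 1 |r₁ * r₂| ^ (-ε))) := by
  obtain ⟨C₀, hC₀pos, hC₀⟩ := Φ.decay 0 0
  obtain ⟨C₁, hC₁pos, hC₁⟩ := Φ.decay (⌈e₂⌉₊ + ⌈e₂ - e₁⌉₊ + 1) 0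
  set N : ℝ := ((⌈e₂⌉₊ + ⌈e₂ - e₁⌉₊ + 1 : ℕ) : ℝ) with hNdef
  set D : ℝ := max C₀ C₁ with hD
  have hDpos : 0 < D := lt_of_lt_of_le hC₀pos (le_max_left _ _)
  set φ : ℝ → ℝ := fun x => ‖Φ x‖ with hφ
  have hφ0 : ∀ x, 0 ≤ φ x := fun x => norm_nonneg _
  have hφ1 : ∀ x, φ x ≤ D := by
    intro x
    have h := hC₀ x
    rw [pow_zero, one_mul, norm_iteratedFDeriv_zero] at h
    exact le_trans h (le_max_left _ _)
  have hφ2 : ∀ x, x ≠ 0 → φ x ≤ D * |x| ^ (-N) := by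
    intro x hx
    have h := hC₁ x
    rw [norm_iteratedFDeriv_zero] at h
    have hxpos : 0 < |x| := abs_pos.2 hx
    have hxN : (0:ℝ) < |x| ^ N := Real.rpow_pos_of_pos hxpos N
    have hnorm : ‖x‖ ^ (⌈e₂⌉₊ + ⌈e₂ - e₁⌉₊ + 1 : ℕ) = |x| ^ N := by
      rw [hNdef, Real.rpow_natCast, Real.norm_eq_abs]
    rw [hnorm] at h
    have hstep : φ x ≤ C₁ * |x| ^ (-N) := by
      rw [Real.rpow_neg (abs_nonneg x), ← div_eq_mul_inv, le_div_iff₀ hxN]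
      calc φ x * |x| ^ N = |x| ^ N * φ x := mul_comm _ _
        _ ≤ C₁ := h
    exact le_trans hstep
      (mul_le_mul_of_nonneg_right (le_max_right _ _) (Real.rpow_nonneg (abs_nonneg _) _))
  have hceil2 : e₂ ≤ (⌈e₂⌉₊ : ℝ) := Nat.le_ceil e₂
  have hceil1 : e₂ - e₁ ≤ (⌈e₂ - e₁⌉₊ : ℝ) := Nat.le_ceil _
  have hcast : N = (⌈e₂⌉₊ : ℝ) + (⌈e₂ - e₁⌉₊ : ℝ) + 1 := by rw [hNdef]; push_cast; ring
  have hN₂ : e₂ < N := by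
    have h0 : (0:ℝ) ≤ (⌈e₂ - e₁⌉₊ : ℝ) := Nat.cast_nonneg _
    linarith
  have hN₁ : e₂ - e₁ < N := by
    have h0 : (0:ℝ) ≤ (⌈e₂⌉₊ : ℝ) := Nat.cast_nonneg _
    linarith
  have hconv : ∀ r₁ r₂ : ℝ,
      (∫⁻ a : ℝ, ENNReal.ofReal
          (‖Φ (r₁ / a)‖ * max 1 |r₂ * a| ^ (-e₁) * |a| ^ (e₁ - e₂)) ∂mulHaar)
        = ∫⁻ a : ℝ, ENNReal.ofReal
            (‖Φ (r₁ / a)‖ * max 1 |r₂ * a| ^ (-e₁) * |a| ^ (e₁ - e₂))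
          * ENNReal.ofReal |a|⁻¹ :=
    fun r₁ r₂ => mulHaar_lintegral _ (meas_integrand Φ e₁ e₂ r₁ r₂)
  rcases lt_trichotomy e₁ e₂ with hlt | heq | hgt
  · -- e₁ < e₂
    have hd1 : (0:ℝ) ≤ 2 * D / (N + e₁ - e₂) := div_nonneg (by linarith) (by linarith)
    have hd2 : (0:ℝ) ≤ 2 * D / (e₂ - e₁) := div_nonneg (by linarith) (by linarith)
    have hd3 : (0:ℝ) ≤ 2 * D / (N - e₂) := div_nonneg (by linarith) (by linarith)
    have hd4 : (0:ℝ) ≤ 2 * D / e₂ := div_nonneg (by linarith) (by linarith)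
    refine ⟨(2 * D / (N + e₁ - e₂) + 2 * D / (e₂ - e₁))
      + (2 * D / (N + e₁ - e₂) + 2 * D / (N - e₂) + 2 * D / e₂) + 1, by linarith, ?_⟩
    intro r₁ r₂ h₁ h₂
    refine ⟨fun _ => ?_, fun h' => absurd h' (by linarith), fun h' => absurd h' (by linarith)⟩
    rw [hconv r₁ r₂]
    have hρc : (0:ℝ) < |r₁| ^ (e₁ - e₂) := Real.rpow_pos_of_pos (abs_pos.2 h₁) _
    rcases le_total |r₁ * r₂| 1 with hu | hu
    · refine le_trans (case_small_lt he₁ hlt hN₁ hN₂ hφ0 hφ1 hφ2 h₁ h₂)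
        (ENNReal.ofReal_le_ofReal ?_)
      rw [max_eq_left hu, Real.one_rpow, mul_one]
      exact mul_le_mul_of_nonneg_right (by linarith) hρc.le
    · refine le_trans (case_big he₁ he₂ hN₁ hN₂ hφ0 hφ1 hφ2 h₁ h₂ hu)
        (ENNReal.ofReal_le_ofReal ?_)
      rw [max_eq_right hu, mul_assoc]
      have hq : (0:ℝ) < |r₁| ^ (e₁ - e₂) * |r₁ * r₂| ^ (-e₁) :=
        mul_pos hρc (Real.rpow_pos_of_pos (abs_pos.2 (mul_ne_zero h₁ h₂)) _)
      exact mul_le_mul_of_nonneg_right (by linarith) hq.le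
  · -- e₁ = e₂
    subst heq
    have hd1 : (0:ℝ) ≤ 2 * D / N := div_nonneg (by linarith) (by linarith)
    have hd2 : (0:ℝ) ≤ 2 * D / ε := div_nonneg (by linarith) (by linarith)
    have hd3 : (0:ℝ) ≤ 2 * D / e₁ := div_nonneg (by linarith) (by linarith)
    have hd4 : (0:ℝ) ≤ 2 * D / (N + e₁ - e₁) := div_nonneg (by linarith) (by linarith)
    have hd5 : (0:ℝ) ≤ 2 * D / (N - e₁) := div_nonneg (by linarith) (by linarith)
    refine ⟨(2 * D / N + 2 * D / ε + 2 * D / e₁)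
      + (2 * D / (N + e₁ - e₁) + 2 * D / (N - e₁) + 2 * D / e₁) + 1, by linarith, ?_⟩
    intro r₁ r₂ h₁ h₂
    refine ⟨fun h' => absurd h' (by linarith), fun h' => absurd h' (by linarith), fun _ => ?_⟩
    rw [hconv r₁ r₂]
    have hu0 : (0:ℝ) < |r₁ * r₂| := abs_pos.2 (mul_ne_zero h₁ h₂)
    rcases le_total |r₁ * r₂| 1 with hu | hu
    · refine le_trans (case_small_eq he₁ hN₂ hε hφ0 hφ1 hφ2 h₁ h₂ hu)
        (ENNReal.ofReal_le_ofReal ?_)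
      rw [max_eq_left hu, Real.one_rpow, mul_one, min_eq_right hu]
      have hq : (0:ℝ) < |r₁ * r₂| ^ (-ε) := Real.rpow_pos_of_pos hu0 _
      exact mul_le_mul_of_nonneg_right (by linarith) hq.le
    · refine le_trans (case_big he₁ he₁ hN₁ hN₂ hφ0 hφ1 hφ2 h₁ h₂ hu)
        (ENNReal.ofReal_le_ofReal ?_)
      rw [max_eq_right hu, min_eq_left hu, Real.one_rpow, mul_one,
        show e₁ - e₁ = 0 from by ring, Real.rpow_zero, one_mul]
      have hq : (0:ℝ) < |r₁ * r₂| ^ (-e₁) := Real.rpow_pos_of_pos hu0 _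
      exact mul_le_mul_of_nonneg_right (by linarith) hq.le
  · -- e₂ < e₁
    have hd1 : (0:ℝ) ≤ 2 * D / (N + e₁ - e₂) := div_nonneg (by linarith) (by linarith)
    have hd2 : (0:ℝ) ≤ 2 * D / (e₁ - e₂) := div_nonneg (by linarith) (by linarith)
    have hd3 : (0:ℝ) ≤ 2 * D / (N - e₂) := div_nonneg (by linarith) (by linarith)
    have hd4 : (0:ℝ) ≤ 2 * D / e₂ := div_nonneg (by linarith) (by linarith)
    refine ⟨(2 * D / (N + e₁ - e₂) + 2 * D / (e₁ - e₂) + 2 * D / e₂)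
      + (2 * D / (N + e₁ - e₂) + 2 * D / (N - e₂) + 2 * D / e₂) + 1, by linarith, ?_⟩
    intro r₁ r₂ h₁ h₂
    refine ⟨fun h' => absurd h' (by linarith), fun _ => ?_, fun h' => absurd h' (by linarith)⟩
    rw [hconv r₁ r₂]
    have hρ : (0:ℝ) < |r₁| := abs_pos.2 h₁
    have hs : (0:ℝ) < |r₂| := abs_pos.2 h₂
    have hu0 : (0:ℝ) < |r₁ * r₂| := abs_pos.2 (mul_ne_zero h₁ h₂)
    have hsc : (0:ℝ) < |r₂| ^ (e₂ - e₁) := Real.rpow_pos_of_pos hs _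
    rcases le_total |r₁ * r₂| 1 with hu | hu
    · refine le_trans (case_small_gt he₂ hgt hN₂ hφ0 hφ1 hφ2 h₁ h₂ hu)
        (ENNReal.ofReal_le_ofReal ?_)
      rw [max_eq_left hu, Real.one_rpow, mul_one]
      have key : |r₁| ^ (e₁ - e₂) * |r₁ * r₂| ^ (e₂ - e₁) = |r₂| ^ (e₂ - e₁) := by
        rw [abs_mul]
        simp only [Real.mul_rpow hρ.le hs.le,
          Real.rpow_def_of_pos hρ, Real.rpow_def_of_pos hs, ← Real.exp_neg, ← Real.exp_add]
        rw [Real.exp_eq_exp]; ring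
      rw [key]
      exact mul_le_mul_of_nonneg_right (by linarith) hsc.le
    · refine le_trans (case_big (lt_trans he₂ hgt) he₂ hN₁ hN₂ hφ0 hφ1 hφ2 h₁ h₂ hu)
        (ENNReal.ofReal_le_ofReal ?_)
      rw [max_eq_right hu]
      have key : |r₂| ^ (e₂ - e₁) * |r₁ * r₂| ^ (-e₂)
          = |r₁| ^ (e₁ - e₂) * |r₁ * r₂| ^ (-e₁) := by
        rw [abs_mul]
        simp only [Real.mul_rpow hρ.le hs.le,
          Real.rpow_def_of_pos hρ, Real.rpow_def_of_pos hs, ← Real.exp_neg, ← Real.exp_add]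
        rw [Real.exp_eq_exp]; ring
      have hq : (0:ℝ) < |r₁| ^ (e₁ - e₂) * |r₁ * r₂| ^ (-e₁) :=
        mul_pos (Real.rpow_pos_of_pos hρ _) (Real.rpow_pos_of_pos hu0 _)
      rw [mul_assoc, key]
      exact mul_le_mul_of_nonneg_right (by linarith) hq.le
end
end

section
/- Let d₁, d₂, d₃ be even integers with dᵢ ≥ 4, let ε ∈ (0, 1/2), and let M₁ be a Schwartz function on ℝ⁴. Then there exist a nonnegative Schwartz function J on ℝ and a constant C > 0 (depending on M₁, ε and the dᵢ) such that for every c ∈ ℝ∖{0}: ∫_{(ℝ^×)³} | M₁( c/[a], a₁c/[a], a₂, a₃ ) | · |[a]/c|^{−d₁/2} · {a}^{d/2−1} d^×a ≤ C · J(c) · |c|^{min(d₁,d₂,d₃)/2 − 1 − ε}. (Lemma 9.6 of the paper, archimedean case F = ℝ.) -/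
open MeasureTheory

noncomputable section

/-- The product measure `d^×a₁ d^×a₂ d^×a₃` on `(ℝ^×)³`. -/
def mulHaar3 : Measure (ℝ × ℝ × ℝ) := mulHaar.prod (mulHaar.prod mulHaar)

open Real Finset Set
open scoped ContDiff ENNReal NNReal


private def gPoly : ℕ → Polynomial ℝ
  | 0 => 1
  | n+1 => (gPoly n).derivative - Polynomial.C 2 * Polynomial.X * gPoly n

private lemma gauss_contDiff : ContDiff ℝ ∞ (fun y : ℝ => Real.exp (-y ^ 2)) :=
  Real.contDiff_exp.comp ((contDiff_id.pow 2).neg)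

private lemma hasDerivAt_polyGauss (q : Polynomial ℝ) (y : ℝ) :
    HasDerivAt (fun y : ℝ => q.eval y * Real.exp (-y ^ 2))
      ((q.derivative.eval y - 2 * y * q.eval y) * Real.exp (-y ^ 2)) y := by
  have h2 : HasDerivAt (fun y : ℝ => Real.exp (-y ^ 2)) (Real.exp (-y ^ 2) * (-(2 * y))) y := by
    have h : HasDerivAt (fun y : ℝ => -y ^ 2) (-(2 * y)) y := by
      exact (hasDerivAt_pow 2 y).neg.congr_deriv (by norm_num)
    exact h.exp
  have := (q.hasDerivAt y).mul h2
  refine HasDerivAt.congr_deriv this ?_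
  ring

private lemma iteratedDeriv_gauss (n : ℕ) :
    iteratedDeriv n (fun y : ℝ => Real.exp (-y ^ 2))
      = fun y => (gPoly n).eval y * Real.exp (-y ^ 2) := by
  induction n with
  | zero => funext y; simp [gPoly]
  | succ n ih =>
    rw [iteratedDeriv_succ, ih]
    funext y
    rw [(hasDerivAt_polyGauss (gPoly n) y).deriv]
    simp [gPoly]

private lemma abs_pow_mul_exp_le (m : ℕ) (y : ℝ) :
    |y| ^ m * Real.exp (-y ^ 2) ≤ 1 + (m.factorial : ℝ) := by
  have hfac : (1 : ℝ) ≤ (m.factorial : ℝ) := by exact_mod_cast m.factorial_pos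
  rcases le_total |y| 1 with hy | hy
  · have h1 : |y| ^ m ≤ 1 := pow_le_one₀ (abs_nonneg y) hy
    have h2 : Real.exp (-y ^ 2) ≤ 1 := by
      rw [Real.exp_le_one_iff]; exact neg_nonpos.mpr (sq_nonneg y)
    nlinarith [pow_nonneg (abs_nonneg y) m, Real.exp_pos (-y ^ 2)]
  · have h1 : |y| ^ m ≤ (y ^ 2) ^ m := by
      rw [← sq_abs, ← pow_mul]
      exact pow_le_pow_right₀ hy (by omega)
    have h2 : (y ^ 2) ^ m ≤ (m.factorial : ℝ) * Real.exp (y ^ 2) := by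
      have hs := Real.sum_le_exp_of_nonneg (sq_nonneg y) (m + 1)
      have hsingle : (y ^ 2) ^ m / (m.factorial : ℝ) ≤ ∑ i ∈ range (m + 1), (y ^ 2) ^ i / (i.factorial : ℝ) := by
        refine Finset.single_le_sum (f := fun i => (y ^ 2) ^ i / (i.factorial : ℝ)) ?_ (self_mem_range_succ m)
        intro i _; positivity
      have := hsingle.trans hs
      rw [div_le_iff₀ (by positivity : (0:ℝ) < (m.factorial : ℝ))] at this
      linarith [this]
    calc |y| ^ m * Real.exp (-y ^ 2) ≤ (y ^ 2) ^ m * Real.exp (-y ^ 2) := by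
          exact mul_le_mul_of_nonneg_right h1 (Real.exp_pos _).le
      _ ≤ (m.factorial : ℝ) * Real.exp (y ^ 2) * Real.exp (-y ^ 2) := by
          exact mul_le_mul_of_nonneg_right h2 (Real.exp_pos _).le
      _ = (m.factorial : ℝ) := by
          rw [mul_assoc, ← Real.exp_add]; simp
      _ ≤ 1 + (m.factorial : ℝ) := by linarith

private lemma gauss_decay (p n : ℕ) : ∃ S : ℝ, 0 ≤ S ∧
    ∀ y : ℝ, |y| ^ p * ‖iteratedDeriv n (fun y : ℝ => Real.exp (-y ^ 2)) y‖ ≤ S := by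
  set q := gPoly n with hq
  refine ⟨∑ i ∈ range (q.natDegree + 1), |q.coeff i| * (1 + ((p + i).factorial : ℝ)),
    by positivity, fun y => ?_⟩
  rw [iteratedDeriv_gauss]
  have hexp : (0:ℝ) < Real.exp (-y ^ 2) := Real.exp_pos _
  have heval : |q.eval y| ≤ ∑ i ∈ range (q.natDegree + 1), |q.coeff i| * |y| ^ i := by
    conv_lhs => rw [Polynomial.eval_eq_sum_range]
    refine (Finset.abs_sum_le_sum_abs _ _).trans ?_
    apply le_of_eq
    refine Finset.sum_congr rfl fun i _ => ?_
    rw [abs_mul, abs_pow]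
  calc |y| ^ p * ‖q.eval y * Real.exp (-y ^ 2)‖
      = |q.eval y| * (|y| ^ p * Real.exp (-y ^ 2)) := by
        rw [norm_mul, Real.norm_eq_abs, Real.norm_eq_abs, abs_of_pos hexp]; ring
    _ ≤ (∑ i ∈ range (q.natDegree + 1), |q.coeff i| * |y| ^ i) * (|y| ^ p * Real.exp (-y ^ 2)) := by
        exact mul_le_mul_of_nonneg_right heval (by positivity)
    _ = ∑ i ∈ range (q.natDegree + 1), |q.coeff i| * (|y| ^ (p + i) * Real.exp (-y ^ 2)) := by
        rw [Finset.sum_mul]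
        refine Finset.sum_congr rfl fun i _ => ?_
        rw [pow_add]; ring
    _ ≤ ∑ i ∈ range (q.natDegree + 1), |q.coeff i| * (1 + ((p + i).factorial : ℝ)) := by
        refine Finset.sum_le_sum fun i _ => ?_
        exact mul_le_mul_of_nonneg_left (abs_pow_mul_exp_le _ _) (abs_nonneg _)

private lemma exists_schwartz_majorant_s10 (C : ℕ → ℝ) (hC : ∀ n, 0 < C n) :
    ∃ J : SchwartzMap ℝ ℝ, (∀ x, 0 ≤ J x) ∧ ∃ K : ℝ, 0 < K ∧
      ∀ x : ℝ, ∃ n : ℕ, C n * ((1 + |x|) ^ n)⁻¹ ≤ K * J x := by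
  set D : ℕ → ℝ := fun n => C n * 2 ^ n with hD
  set b : ℕ → ℝ := fun k =>
    (Finset.range (k + 1)).inf' Finset.nonempty_range_add_one (fun n => D n / 2 ^ (k * n)) with hb
  have hD_pos : ∀ n, 0 < D n := fun n => by
    have := hC n; positivity
  have hb_pos : ∀ k, 0 < b k := by
    intro k
    rw [hb, Finset.lt_inf'_iff]
    intro n _
    have := hD_pos n; positivity
  have hb_le : ∀ n k, n ≤ k → b k ≤ D n / 2 ^ (k * n) := by
    intro n k hnk
    exact Finset.inf'_le _ (Finset.mem_range_succ_iff.mpr hnk)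
  -- summability of `b k * 2^(k*p)` for every `p`
  have hb_sum : ∀ p : ℕ, Summable (fun k => b k * 2 ^ (k * p)) := by
    intro p
    rw [← summable_nat_add_iff (p + 1)]
    refine Summable.of_nonneg_of_le (fun k => by have := (hb_pos (k + (p+1))).le; positivity)
      (fun k => ?_) ((summable_geometric_two).mul_left (D (p + 1)))
    have h1 : b (k + (p+1)) ≤ D (p+1) / 2 ^ ((k + (p+1)) * (p+1)) :=
      hb_le (p+1) (k + (p+1)) (by omega)
    have e1 : (2:ℝ) ^ ((k + (p+1)) * (p+1)) = 2 ^ ((k + (p+1)) * p) * 2 ^ (k + (p+1)) := by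
      have e0 : (k + (p+1)) * (p+1) = (k + (p+1)) * p + (k + (p+1)) := by ring
      rw [e0, pow_add]
    calc b (k + (p+1)) * 2 ^ ((k + (p+1)) * p)
        ≤ (D (p+1) / 2 ^ ((k + (p+1)) * (p+1))) * 2 ^ ((k + (p+1)) * p) := by
          exact mul_le_mul_of_nonneg_right h1 (by positivity)
      _ = D (p+1) / 2 ^ (k + (p+1)) := by
          rw [e1]; field_simp
      _ ≤ D (p+1) * (1 / 2) ^ k := by
          rw [one_div, inv_pow, ← div_eq_mul_inv]
          apply div_le_div_of_nonneg_left (hD_pos _).le (by positivity)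
          exact pow_le_pow_right₀ (by norm_num) (by omega)
  have hb_summable : Summable b := by
    have := hb_sum 0
    simpa using this
  -- the summands
  set f : ℕ → ℝ → ℝ := fun k x => b k • Real.exp (-(((2:ℝ) ^ k)⁻¹ * x) ^ 2) with hf
  have hf_nonneg : ∀ k x, 0 ≤ f k x := fun k x => by
    have := (hb_pos k).le
    simp only [hf, smul_eq_mul]
    positivity
  have hfk : ∀ k, ContDiff ℝ ∞ (f k) := by
    intro k
    exact (gauss_contDiff.comp ((contDiff_const.mul contDiff_id))).const_smul (b k)
  set S : ℕ → ℕ → ℝ := fun p j => (gauss_decay p j).choose with hSdef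
  have hS_nonneg : ∀ p j, 0 ≤ S p j := fun p j => (gauss_decay p j).choose_spec.1
  have hS : ∀ p j y, |y| ^ p * ‖iteratedDeriv j (fun y : ℝ => Real.exp (-y ^ 2)) y‖ ≤ S p j :=
    fun p j => (gauss_decay p j).choose_spec.2
  -- the key uniform derivative bound
  have hkey : ∀ (p j k : ℕ) (x : ℝ),
      |x| ^ p * ‖iteratedFDeriv ℝ j (f k) x‖ ≤ b k * 2 ^ (k * p) * S p j := by
    intro p j k x
    set c : ℝ := ((2:ℝ) ^ k)⁻¹ with hc
    have hc_pos : 0 < c := by positivity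
    have hc_le : c ≤ 1 := by
      rw [hc]
      exact inv_le_one_of_one_le₀ (one_le_pow₀ (by norm_num))
    have hGc : ContDiff ℝ ∞ (fun x : ℝ => Real.exp (-(c * x) ^ 2)) :=
      gauss_contDiff.comp (contDiff_const.mul contDiff_id)
    have e1 : ‖iteratedFDeriv ℝ j (f k) x‖ = b k * ‖iteratedFDeriv ℝ j
        (fun x : ℝ => Real.exp (-(c * x) ^ 2)) x‖ := by
      have : f k = b k • (fun x => Real.exp (-(c * x) ^ 2)) := rfl
      rw [this, iteratedFDeriv_const_smul_apply (hGc.contDiffAt.of_le (by exact_mod_cast le_top))]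
      rw [norm_smul (b k) (iteratedFDeriv ℝ j (fun x : ℝ => Real.exp (-(c * x) ^ 2)) x),
        Real.norm_eq_abs, abs_of_pos (hb_pos k)]
    have e2 : iteratedDeriv j (fun x : ℝ => Real.exp (-(c * x) ^ 2))
        = fun x => c ^ j * iteratedDeriv j (fun y : ℝ => Real.exp (-y ^ 2)) (c * x) := by
      exact iteratedDeriv_comp_const_mul (gauss_contDiff.of_le (by exact_mod_cast le_top)) c
    rw [e1, norm_iteratedFDeriv_eq_norm_iteratedDeriv, e2]
    have habs : |x| ^ p = 2 ^ (k * p) * |c * x| ^ p := by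
      rw [abs_mul, mul_pow, ← mul_assoc, abs_of_pos hc_pos, pow_mul, ← mul_pow]
      rw [hc, mul_inv_cancel₀ (by positivity : ((2:ℝ) ^ k) ≠ 0)]
      simp
    calc |x| ^ p * (b k * ‖c ^ j * iteratedDeriv j (fun y : ℝ => Real.exp (-y ^ 2)) (c * x)‖)
        = b k * 2 ^ (k * p) * (c ^ j *
            (|c * x| ^ p * ‖iteratedDeriv j (fun y : ℝ => Real.exp (-y ^ 2)) (c * x)‖)) := by
          rw [habs, norm_mul, Real.norm_eq_abs (c ^ j), abs_of_pos (pow_pos hc_pos j)]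
          ring
      _ ≤ b k * 2 ^ (k * p) * (1 * S p j) := by
          apply mul_le_mul_of_nonneg_left _ (by have := (hb_pos k).le; positivity)
          apply mul_le_mul (pow_le_one₀ hc_pos.le hc_le) (hS p j (c * x))
            (by positivity) (by norm_num)
      _ = b k * 2 ^ (k * p) * S p j := by ring
  -- hypotheses for the tsum lemmas
  have hv : ∀ j : ℕ, ((j:ℕ∞) ≤ (⊤:ℕ∞)) → Summable (fun k => b k * 2 ^ (k * 0) * S 0 j) :=
    fun j _ => (hb_sum 0).mul_right (S 0 j)
  have h'f : ∀ (j : ℕ) (k : ℕ) (x : ℝ), ((j:ℕ∞) ≤ (⊤:ℕ∞)) →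
      ‖iteratedFDeriv ℝ j (f k) x‖ ≤ b k * 2 ^ (k * 0) * S 0 j := by
    intro j k x _
    simpa using hkey 0 j k x
  have h_cd : ContDiff ℝ ∞ (fun x => ∑' k, f k x) := contDiff_tsum hfk hv h'f
  have h_sum_norm : ∀ (j : ℕ) (x : ℝ), Summable (fun k => ‖iteratedFDeriv ℝ j (f k) x‖) := by
    intro j x
    exact Summable.of_nonneg_of_le (fun k => norm_nonneg _) (fun k => h'f j k x le_top)
      ((hb_sum 0).mul_right (S 0 j))
  have h_decay : ∀ (p j : ℕ), ∃ CC : ℝ, ∀ x : ℝ,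
      ‖x‖ ^ p * ‖iteratedFDeriv ℝ j (fun x => ∑' k, f k x) x‖ ≤ CC := by
    intro p j
    refine ⟨(∑' k, b k * 2 ^ (k * p)) * S p j, fun x => ?_⟩
    rw [iteratedFDeriv_tsum_apply hfk hv h'f le_top]
    calc ‖x‖ ^ p * ‖∑' k, iteratedFDeriv ℝ j (f k) x‖
        ≤ ‖x‖ ^ p * ∑' k, ‖iteratedFDeriv ℝ j (f k) x‖ := by
          apply mul_le_mul_of_nonneg_left (norm_tsum_le_tsum_norm (h_sum_norm j x))
            (by positivity)
      _ = ∑' k, ‖x‖ ^ p * ‖iteratedFDeriv ℝ j (f k) x‖ := by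
          rw [tsum_mul_left]
      _ ≤ ∑' k, b k * 2 ^ (k * p) * S p j := by
          apply Summable.tsum_le_tsum _ _ ((hb_sum p).mul_right (S p j))
          · intro k
            rw [Real.norm_eq_abs]
            exact hkey p j k x
          · apply Summable.of_nonneg_of_le (fun k => by positivity) _
              ((hb_sum p).mul_right (S p j))
            intro k
            rw [Real.norm_eq_abs]
            exact hkey p j k x
      _ = (∑' k, b k * 2 ^ (k * p)) * S p j := by rw [tsum_mul_right]
  set J : SchwartzMap ℝ ℝ := ⟨fun x => ∑' k, f k x, h_cd, h_decay⟩ with hJ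
  have hJ_apply : ∀ x, J x = ∑' k, f k x := fun x => rfl
  have hf_summable : ∀ x : ℝ, Summable (fun k => f k x) := by
    intro x
    refine Summable.of_nonneg_of_le (fun k => hf_nonneg k x) (fun k => ?_) hb_summable
    simp only [hf, smul_eq_mul]
    nth_rewrite 2 [← mul_one (b k)]
    apply mul_le_mul_of_nonneg_left _ (hb_pos k).le
    rw [Real.exp_le_one_iff]
    exact neg_nonpos.mpr (sq_nonneg _)
  have hJ_nonneg : ∀ x, 0 ≤ J x := by
    intro x
    rw [hJ_apply]
    exact tsum_nonneg (fun k => hf_nonneg k x)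
  refine ⟨J, hJ_nonneg, Real.exp 1, Real.exp_pos 1, fun x => ?_⟩
  -- find k with |x| ≤ 2^k ≤ 2(1+|x|)
  obtain ⟨k, hk1, hk2⟩ : ∃ k : ℕ, |x| ≤ 2 ^ k ∧ (2:ℝ) ^ k ≤ 2 * (1 + |x|) := by
    rcases le_or_gt |x| 1 with h | h
    · exact ⟨0, by simpa using h, by simp; linarith [abs_nonneg x]⟩
    · set k₀ := Nat.log 2 ⌊|x|⌋₊ with hk₀
      have hfl1 : 1 ≤ ⌊|x|⌋₊ := Nat.le_floor (by exact_mod_cast h.le)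
      have h1 : (2:ℕ) ^ k₀ ≤ ⌊|x|⌋₊ := Nat.pow_log_le_self 2 (by omega)
      have h2 : ⌊|x|⌋₊ < 2 ^ (k₀ + 1) := Nat.lt_pow_succ_log_self (by norm_num) _
      refine ⟨k₀ + 1, ?_, ?_⟩
      · have := Nat.lt_floor_add_one |x|
        have h2' : (⌊|x|⌋₊ : ℝ) + 1 ≤ (2:ℝ) ^ (k₀ + 1) := by
          exact_mod_cast Nat.succ_le_of_lt h2
        linarith
      · have h1' : (2:ℝ) ^ k₀ ≤ (⌊|x|⌋₊ : ℝ) := by exact_mod_cast h1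
        have hfl : (⌊|x|⌋₊ : ℝ) ≤ |x| := Nat.floor_le (abs_nonneg x)
        rw [pow_succ]
        nlinarith
  obtain ⟨n, hn_mem, hbk⟩ := Finset.exists_mem_eq_inf' (Finset.nonempty_range_add_one)
    (fun n => D n / 2 ^ (k * n))
  have hn_le : n ≤ k := Finset.mem_range_succ_iff.mp hn_mem
  refine ⟨n, ?_⟩
  have step1 : C n * ((1 + |x|) ^ n)⁻¹ ≤ b k := by
    have hbase : (2:ℝ) ^ k / 2 ≤ 1 + |x| := by linarith
    have hpow : ((2:ℝ) ^ k / 2) ^ n ≤ (1 + |x|) ^ n :=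
      pow_le_pow_left₀ (by positivity) hbase n
    have hpow' : ((2:ℝ) ^ k / 2) ^ n = 2 ^ (k * n) / 2 ^ n := by
      rw [div_pow, pow_mul]
    have hinv : ((1 + |x|) ^ n)⁻¹ ≤ 2 ^ n / 2 ^ (k * n) := by
      have h3 : (2:ℝ) ^ (k * n) ≤ (1 + |x|) ^ n * 2 ^ n := by
        rw [hpow'] at hpow
        rw [div_le_iff₀ (by positivity : (0:ℝ) < 2 ^ n)] at hpow
        exact hpow
      rw [← one_div, div_le_div_iff₀ (by positivity) (by positivity)]
      nlinarith
    calc C n * ((1 + |x|) ^ n)⁻¹ ≤ C n * (2 ^ n / 2 ^ (k * n)) :=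
          mul_le_mul_of_nonneg_left hinv (hC n).le
      _ = D n / 2 ^ (k * n) := by rw [hD]; ring
      _ = b k := by rw [hb]; exact hbk.symm
  have step2 : b k ≤ Real.exp 1 * J x := by
    have hterm : b k * Real.exp (-1) ≤ f k x := by
      simp only [hf, smul_eq_mul]
      apply mul_le_mul_of_nonneg_left _ (hb_pos k).le
      apply Real.exp_le_exp.mpr
      have hcx : |((2:ℝ) ^ k)⁻¹ * x| ≤ 1 := by
        rw [abs_mul, abs_of_pos (by positivity : (0:ℝ) < ((2:ℝ)^k)⁻¹)]
        rw [inv_mul_le_iff₀ (by positivity : (0:ℝ) < (2:ℝ)^k)]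
        simpa using hk1
      nlinarith [abs_nonneg (((2:ℝ) ^ k)⁻¹ * x), sq_abs (((2:ℝ) ^ k)⁻¹ * x)]
    have hle : f k x ≤ J x := by
      rw [hJ_apply]
      exact Summable.le_tsum (hf_summable x) k (fun j _ => hf_nonneg j x)
    have h2 := hterm.trans hle
    have he : Real.exp 1 * Real.exp (-1) = 1 := by
      rw [← Real.exp_add]; norm_num
    have h3 : Real.exp 1 * (b k * Real.exp (-1)) = b k := by
      rw [show Real.exp 1 * (b k * Real.exp (-1)) = b k * (Real.exp 1 * Real.exp (-1)) from by
        ring, he, mul_one]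
    linarith [mul_le_mul_of_nonneg_left h2 (Real.exp_pos 1).le]
  exact step1.trans step2


private lemma rpow_bound2 {ε β Nr u : ℝ} (hu : 0 < u) (hε : 0 < ε) (hεβ : ε ≤ β)
    (hβN : β + 1 ≤ Nr) : u ^ β * ((1 + u) ^ Nr)⁻¹ ≤ min (u ^ ε) u⁻¹ := by
  have h1u : (0:ℝ) < 1 + u := by linarith
  have hβ0 : 0 < β := lt_of_lt_of_le hε hεβ
  have hNr : 0 < Nr := by linarith
  have hpow_pos : (0:ℝ) < (1 + u) ^ Nr := Real.rpow_pos_of_pos h1u Nr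
  have hone_le : (1:ℝ) ≤ (1 + u) ^ Nr := by
    have := Real.rpow_le_rpow_of_exponent_le (by linarith : (1:ℝ) ≤ 1 + u) hNr.le
    rwa [Real.rpow_zero] at this
  rcases le_total u 1 with h | h
  · refine le_min ?_ ?_
    · calc u ^ β * ((1 + u) ^ Nr)⁻¹ ≤ u ^ β * 1 := by
            exact mul_le_mul_of_nonneg_left (inv_le_one_of_one_le₀ hone_le)
              (Real.rpow_nonneg hu.le β)
        _ = u ^ β := mul_one _
        _ ≤ u ^ ε := Real.rpow_le_rpow_of_exponent_ge hu h hεβ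
    · have h1 : u ^ β ≤ 1 := Real.rpow_le_one hu.le h hβ0.le
      have h2 : (1:ℝ) ≤ u⁻¹ := (one_le_inv₀ hu).mpr h
      calc u ^ β * ((1 + u) ^ Nr)⁻¹ ≤ 1 * 1 :=
            mul_le_mul h1 (inv_le_one_of_one_le₀ hone_le) (inv_nonneg.mpr hpow_pos.le)
              zero_le_one
        _ = 1 := one_mul _
        _ ≤ u⁻¹ := h2
  · have key : u ^ β * ((1 + u) ^ Nr)⁻¹ ≤ u ^ (β - Nr) := by
      have h1 : u ^ Nr ≤ (1 + u) ^ Nr :=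
        Real.rpow_le_rpow hu.le (by linarith) hNr.le
      have h2 : ((1 + u) ^ Nr)⁻¹ ≤ (u ^ Nr)⁻¹ :=
        inv_anti₀ (Real.rpow_pos_of_pos hu Nr) h1
      calc u ^ β * ((1 + u) ^ Nr)⁻¹ ≤ u ^ β * (u ^ Nr)⁻¹ :=
            mul_le_mul_of_nonneg_left h2 (Real.rpow_nonneg hu.le β)
        _ = u ^ (β - Nr) := by
            rw [Real.rpow_sub hu, div_eq_mul_inv]
    refine le_min (key.trans ?_) (key.trans ?_)
    · exact Real.rpow_le_rpow_of_exponent_le h (by linarith)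
    · rw [← Real.rpow_neg_one u]
      exact Real.rpow_le_rpow_of_exponent_le h (by linarith)

private lemma rpow_bound1 {ε γ Nr s t : ℝ} (hs : 0 < s) (ht : 0 < t) (hε : 0 < ε)
    (hγ : 1 + ε ≤ γ) (hγN : γ ≤ Nr) :
    s ^ γ * t ^ (γ - 1) * (((1 + s) ^ Nr)⁻¹ * ((1 + s * t) ^ Nr)⁻¹) ≤ min (t ^ ε) t⁻¹ := by
  have hγ0 : (0:ℝ) < γ := by linarith
  have hNr0 : (0:ℝ) < Nr := by linarith
  have hst : 0 < s * t := mul_pos hs ht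
  have h1s : (0:ℝ) < 1 + s := by linarith
  have h1st : (0:ℝ) < 1 + s * t := by linarith
  have hinv1 : ((1 + s) ^ Nr)⁻¹ ≤ 1 := by
    apply inv_le_one_of_one_le₀
    have := Real.rpow_le_rpow_of_exponent_le (by linarith : (1:ℝ) ≤ 1 + s) hNr0.le
    rwa [Real.rpow_zero] at this
  have hinv2 : ((1 + s * t) ^ Nr)⁻¹ ≤ 1 := by
    apply inv_le_one_of_one_le₀
    have := Real.rpow_le_rpow_of_exponent_le (by linarith : (1:ℝ) ≤ 1 + s * t) hNr0.le
    rwa [Real.rpow_zero] at this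
  have hA : s ^ γ * ((1 + s) ^ Nr)⁻¹ ≤ 1 := by
    rw [← div_eq_mul_inv, div_le_one (Real.rpow_pos_of_pos h1s Nr)]
    calc s ^ γ ≤ (1 + s) ^ γ := Real.rpow_le_rpow hs.le (by linarith) hγ0.le
      _ ≤ (1 + s) ^ Nr := Real.rpow_le_rpow_of_exponent_le (by linarith) hγN
  have hB : (s * t) ^ γ * ((1 + s * t) ^ Nr)⁻¹ ≤ 1 := by
    rw [← div_eq_mul_inv, div_le_one (Real.rpow_pos_of_pos h1st Nr)]
    calc (s * t) ^ γ ≤ (1 + s * t) ^ γ := Real.rpow_le_rpow hst.le (by linarith) hγ0.le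
      _ ≤ (1 + s * t) ^ Nr := Real.rpow_le_rpow_of_exponent_le (by linarith) hγN
  have hii : s ^ γ * t ^ (γ - 1) * (((1 + s) ^ Nr)⁻¹ * ((1 + s * t) ^ Nr)⁻¹) ≤ t⁻¹ := by
    have e : s ^ γ * t ^ (γ - 1) = (s * t) ^ γ * t⁻¹ := by
      rw [Real.mul_rpow hs.le ht.le, Real.rpow_sub ht, Real.rpow_one, div_eq_mul_inv]
      ring
    rw [e]
    calc (s * t) ^ γ * t⁻¹ * (((1 + s) ^ Nr)⁻¹ * ((1 + s * t) ^ Nr)⁻¹)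
        = ((s * t) ^ γ * ((1 + s * t) ^ Nr)⁻¹) * ((1 + s) ^ Nr)⁻¹ * t⁻¹ := by ring
      _ ≤ 1 * 1 * t⁻¹ := by
          apply mul_le_mul_of_nonneg_right _ (inv_nonneg.mpr ht.le)
          exact mul_le_mul hB hinv1 (inv_nonneg.mpr (Real.rpow_pos_of_pos h1s Nr).le)
            zero_le_one
      _ = t⁻¹ := by ring
  refine le_min ?_ hii
  rcases le_total t 1 with h | h
  · calc s ^ γ * t ^ (γ - 1) * (((1 + s) ^ Nr)⁻¹ * ((1 + s * t) ^ Nr)⁻¹)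
        = (s ^ γ * ((1 + s) ^ Nr)⁻¹) * ((1 + s * t) ^ Nr)⁻¹ * t ^ (γ - 1) := by ring
      _ ≤ 1 * 1 * t ^ (γ - 1) := by
          apply mul_le_mul_of_nonneg_right _ (Real.rpow_nonneg ht.le _)
          exact mul_le_mul hA hinv2 (inv_nonneg.mpr (Real.rpow_pos_of_pos h1st Nr).le)
            zero_le_one
      _ = t ^ (γ - 1) := by ring
      _ ≤ t ^ ε := Real.rpow_le_rpow_of_exponent_ge ht h (by linarith)
  · refine hii.trans ?_
    have h1 : t⁻¹ ≤ 1 := inv_le_one_of_one_le₀ h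
    have h2 : (1:ℝ) ≤ t ^ ε := by
      have := Real.rpow_le_rpow_of_exponent_le h hε.le
      rwa [Real.rpow_zero] at this
    linarith

private lemma inv_pow_decay {n : ℕ} {A B C' : ℝ} (hA : 0 ≤ A) (hB : 0 ≤ B) (hC : 0 ≤ C') :
    ((1 + A) ^ n)⁻¹ * (((1 + B) ^ n)⁻¹ * ((1 + C') ^ n)⁻¹) ≤ ((1 + A * B * C') ^ n)⁻¹ := by
  rw [← mul_inv, ← mul_inv, ← mul_pow, ← mul_pow]
  apply inv_anti₀ (pow_pos (by positivity) n)
  apply pow_le_pow_left₀ (by positivity)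
  nlinarith

private lemma core_bound
    (d₁ d₂ d₃ n N₀ m : ℕ) (hm : m = min d₁ (min d₂ d₃))
    (hd₁ : 4 ≤ d₁) (hd₂ : 4 ≤ d₂) (hd₃ : 4 ≤ d₃) (hN₀ : N₀ = d₁ + d₂ + d₃)
    {ε : ℝ} (hε0 : 0 < ε) (hε : ε < 1/2)
    {s t u v : ℝ} (hs : 0 < s) (ht : 0 < t) (hu : 0 < u) (hv : 0 < v) :
    s ^ ((d₁:ℝ)/2) * (t ^ ((d₁:ℝ)/2 - 1) * u ^ ((d₂:ℝ)/2 - 1) * v ^ ((d₃:ℝ)/2 - 1)) *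
      (((1+s) ^ (n + N₀))⁻¹ * ((1+s*t) ^ (n + N₀))⁻¹ * ((1+u) ^ (n + N₀))⁻¹ *
        ((1+v) ^ (n + N₀))⁻¹)
    ≤ ((1 + s*t*u*v) ^ n)⁻¹ * (s*t*u*v) ^ ((m:ℝ)/2 - 1 - ε) *
      (min (t ^ ε) t⁻¹ * (min (u ^ ε) u⁻¹ * min (v ^ ε) v⁻¹)) := by
  have h1s : (0:ℝ) < 1 + s := by linarith
  have h1st : (0:ℝ) < 1 + s * t := by nlinarith
  have h1u : (0:ℝ) < 1 + u := by linarith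
  have h1v : (0:ℝ) < 1 + v := by linarith
  have hmd₁ : (m:ℝ) ≤ (d₁:ℝ) := by
    have : m ≤ d₁ := hm ▸ min_le_left _ _
    exact_mod_cast this
  have hmd₂ : (m:ℝ) ≤ (d₂:ℝ) := by
    have : m ≤ d₂ := hm ▸ le_trans (min_le_right _ _) (min_le_left _ _)
    exact_mod_cast this
  have hmd₃ : (m:ℝ) ≤ (d₃:ℝ) := by
    have : m ≤ d₃ := hm ▸ le_trans (min_le_right _ _) (min_le_right _ _)
    exact_mod_cast this
  have hm4 : (4:ℝ) ≤ (m:ℝ) := by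
    have : 4 ≤ m := by omega
    exact_mod_cast this
  have hd₁' : (4:ℝ) ≤ (d₁:ℝ) := by exact_mod_cast hd₁
  have hd₂' : (4:ℝ) ≤ (d₂:ℝ) := by exact_mod_cast hd₂
  have hd₃' : (4:ℝ) ≤ (d₃:ℝ) := by exact_mod_cast hd₃
  have hN₀' : (N₀:ℝ) = (d₁:ℝ) + d₂ + d₃ := by rw [hN₀]; push_cast; ring
  set α := (m:ℝ)/2 - 1 - ε with hα
  set γ₁ := (d₁:ℝ)/2 - α with hγ₁
  set β₂ := (d₂:ℝ)/2 - 1 - α with hβ₂d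
  set β₃ := (d₃:ℝ)/2 - 1 - α with hβ₃d
  have hεγ : 1 + ε ≤ γ₁ := by rw [hγ₁, hα]; linarith
  have hγN : γ₁ ≤ (N₀:ℝ) := by rw [hγ₁, hα]; rw [hN₀']; linarith
  have hεβ₂ : ε ≤ β₂ := by rw [hβ₂d, hα]; linarith
  have hβ₂N : β₂ + 1 ≤ (N₀:ℝ) := by rw [hβ₂d, hα]; rw [hN₀']; linarith
  have hεβ₃ : ε ≤ β₃ := by rw [hβ₃d, hα]; linarith
  have hβ₃N : β₃ + 1 ≤ (N₀:ℝ) := by rw [hβ₃d, hα]; rw [hN₀']; linarith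
  -- rewrite the natural powers
  have c1 : ∀ y : ℝ, 0 < y → ((y ^ (n + N₀) : ℝ))⁻¹ = (y ^ n)⁻¹ * (y ^ ((N₀:ℕ):ℝ))⁻¹ := by
    intro y hy
    rw [pow_add, mul_inv, Real.rpow_natCast]
  have es : s ^ ((d₁:ℝ)/2) = s ^ α * s ^ γ₁ := by
    rw [← Real.rpow_add hs]; congr 1; rw [hγ₁]; ring
  have et : t ^ ((d₁:ℝ)/2 - 1) = t ^ α * t ^ (γ₁ - 1) := by
    rw [← Real.rpow_add ht]; congr 1; rw [hγ₁]; ring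
  have eu : u ^ ((d₂:ℝ)/2 - 1) = u ^ α * u ^ β₂ := by
    rw [← Real.rpow_add hu]; congr 1; rw [hβ₂d]; ring
  have ev : v ^ ((d₃:ℝ)/2 - 1) = v ^ α * v ^ β₃ := by
    rw [← Real.rpow_add hv]; congr 1; rw [hβ₃d]; ring
  have ep : (s*t*u*v) ^ α = s ^ α * t ^ α * u ^ α * v ^ α := by
    rw [Real.mul_rpow (by positivity) hv.le, Real.mul_rpow (by positivity) hu.le,
      Real.mul_rpow hs.le ht.le]
  have hL1 := rpow_bound1 (ε := ε) (γ := γ₁) (Nr := ((N₀:ℕ):ℝ)) hs ht hε0 hεγ hγN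
  have hL2 := rpow_bound2 (ε := ε) (β := β₂) (Nr := ((N₀:ℕ):ℝ)) hu hε0 hεβ₂ hβ₂N
  have hL3 := rpow_bound2 (ε := ε) (β := β₃) (Nr := ((N₀:ℕ):ℝ)) hv hε0 hεβ₃ hβ₃N
  have hD : ((1+s*t) ^ n)⁻¹ * (((1+u) ^ n)⁻¹ * ((1+v) ^ n)⁻¹) ≤ ((1 + s*t*u*v) ^ n)⁻¹ :=
    inv_pow_decay (by positivity) hu.le hv.le
  have he1 : ((1+s) ^ n)⁻¹ ≤ 1 := by
    apply inv_le_one_of_one_le₀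
    exact one_le_pow₀ (by linarith)
  have hmin_t : (0:ℝ) ≤ min (t ^ ε) t⁻¹ := le_min (by positivity) (by positivity)
  have hmin_u : (0:ℝ) ≤ min (u ^ ε) u⁻¹ := le_min (by positivity) (by positivity)
  have hmin_v : (0:ℝ) ≤ min (v ^ ε) v⁻¹ := le_min (by positivity) (by positivity)
  calc s ^ ((d₁:ℝ)/2) * (t ^ ((d₁:ℝ)/2 - 1) * u ^ ((d₂:ℝ)/2 - 1) * v ^ ((d₃:ℝ)/2 - 1)) *
      (((1+s) ^ (n + N₀))⁻¹ * ((1+s*t) ^ (n + N₀))⁻¹ * ((1+u) ^ (n + N₀))⁻¹ *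
        ((1+v) ^ (n + N₀))⁻¹)
      = (s ^ α * t ^ α * u ^ α * v ^ α) *
        ((s ^ γ₁ * t ^ (γ₁ - 1) * ((((1+s) ^ ((N₀:ℕ):ℝ))⁻¹) * (((1+s*t) ^ ((N₀:ℕ):ℝ))⁻¹))) *
          ((u ^ β₂ * ((1+u) ^ ((N₀:ℕ):ℝ))⁻¹) * (v ^ β₃ * ((1+v) ^ ((N₀:ℕ):ℝ))⁻¹))) *
        (((1+s) ^ n)⁻¹ * (((1+s*t) ^ n)⁻¹ * (((1+u) ^ n)⁻¹ * ((1+v) ^ n)⁻¹))) := by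
        rw [c1 _ h1s, c1 _ h1st, c1 _ h1u, c1 _ h1v, es, et, eu, ev]
        ring
    _ ≤ (s ^ α * t ^ α * u ^ α * v ^ α) *
        ((min (t ^ ε) t⁻¹) * ((min (u ^ ε) u⁻¹) * (min (v ^ ε) v⁻¹))) *
        (1 * ((1 + s*t*u*v) ^ n)⁻¹) := by
        apply mul_le_mul
        · apply mul_le_mul_of_nonneg_left _ (by positivity)
          apply mul_le_mul hL1 _ (by positivity) hmin_t
          exact mul_le_mul hL2 hL3 (by positivity) hmin_u
        · apply mul_le_mul he1 hD (by positivity) zero_le_one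
        · positivity
        · have : (0:ℝ) ≤ min (t ^ ε) t⁻¹ * (min (u ^ ε) u⁻¹ * min (v ^ ε) v⁻¹) := by
            exact mul_nonneg hmin_t (mul_nonneg hmin_u hmin_v)
          positivity
    _ = ((1 + s*t*u*v) ^ n)⁻¹ * (s*t*u*v) ^ α *
        (min (t ^ ε) t⁻¹ * (min (u ^ ε) u⁻¹ * min (v ^ ε) v⁻¹)) := by
        rw [ep]; ring


private def gfun (ε : ℝ) : ℝ → ℝ := fun x => min (|x| ^ ε) |x|⁻¹

private lemma gfun_measurable (ε : ℝ) : Measurable (gfun ε) :=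
  (measurable_abs.pow_const ε).min measurable_abs.inv

private lemma gfun_nonneg (ε : ℝ) (x : ℝ) : 0 ≤ gfun ε x :=
  le_min (by positivity) (by positivity)

private lemma integrable_g {ε : ℝ} (hε0 : 0 < ε) (hε : ε < 1/2) :
    Integrable (fun x : ℝ => |x|⁻¹ * min (|x| ^ ε) |x|⁻¹) := by
  have hπ := Real.pi_pos
  set θ : ℝ := (ε - 1) * π with hθ
  have hcos : 0 < 1 + Real.cos θ := by
    have h1 : Real.cos (θ / 2) ^ 2 = 1 / 2 + Real.cos θ / 2 := by
      have := Real.cos_sq (θ / 2)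
      rwa [show 2 * (θ / 2) = θ from by ring] at this
    have h2 : 0 < Real.cos (θ / 2) := by
      apply Real.cos_pos_of_mem_Ioo
      constructor
      · rw [hθ]; nlinarith
      · rw [hθ]; nlinarith
    nlinarith
  set inner : ℝ → ℝ := fun x => (1 + Real.cos θ)⁻¹ * (x ^ (ε-1) + (-x) ^ (ε-1)) with hinner
  have hiden : ∀ x : ℝ, x ≠ 0 → x ^ (ε-1) + (-x) ^ (ε-1) = (1 + Real.cos θ) * |x| ^ (ε-1) := by
    intro x hx
    rcases hx.lt_or_gt with hneg | hpos
    · have e1 : (-x) ^ (ε-1) = |x| ^ (ε-1) := by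
        rw [abs_of_neg hneg]
      have e2 : x ^ (ε-1) = Real.exp (Real.log x * (ε-1)) * Real.cos ((ε-1) * π) :=
        Real.rpow_def_of_neg hneg _
      have e3 : |x| ^ (ε-1) = Real.exp (Real.log x * (ε-1)) := by
        rw [abs_of_neg hneg, Real.rpow_def_of_pos (by linarith), Real.log_neg_eq_log]
      rw [e1, e2, e3, hθ]
      ring
    · have e1 : x ^ (ε-1) = |x| ^ (ε-1) := by rw [abs_of_pos hpos]
      have e2 : (-x) ^ (ε-1) = Real.exp (Real.log (-x) * (ε-1)) * Real.cos ((ε-1) * π) :=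
        Real.rpow_def_of_neg (by linarith) _
      have e3 : |x| ^ (ε-1) = Real.exp (Real.log (-x) * (ε-1)) := by
        rw [abs_of_pos hpos, Real.rpow_def_of_pos hpos, Real.log_neg_eq_log]
      rw [e1, e2, e3, hθ]
      ring
  have hinner_eq : ∀ x : ℝ, x ≠ 0 → inner x = |x| ^ (ε-1) := by
    intro x hx
    rw [hinner]
    simp only []
    rw [hiden x hx, ← mul_assoc, inv_mul_cancel₀ hcos.ne', one_mul]
  -- interval integrability
  have hII : IntervalIntegrable (fun x : ℝ => x ^ (ε-1) + (-x) ^ (ε-1)) volume (-1) 1 := by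
    apply IntervalIntegrable.add
    · exact intervalIntegral.intervalIntegrable_rpow' (by linarith)
    · have h := intervalIntegral.intervalIntegrable_rpow' (r := ε-1) (by linarith) (a := (1:ℝ)) (b := (-1:ℝ))
      rw [IntervalIntegrable.iff_comp_neg] at h
      simpa using h
  have hIOn : IntegrableOn inner (Ioc (-1:ℝ) 1) volume := by
    have := (hII.const_mul ((1 + Real.cos θ)⁻¹))
    rw [intervalIntegrable_iff, uIoc_of_le (by norm_num : (-1:ℝ) ≤ 1)] at this
    exact this
  have hInd : Integrable ((Ioc (-1:ℝ) 1).indicator inner) volume :=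
    (integrable_indicator_iff measurableSet_Ioc).mpr hIOn
  have hJap : Integrable (fun x : ℝ => 4 * (1 + |x|) ^ (-(2:ℝ))) volume := by
    have h := integrable_one_add_norm (E := ℝ) (μ := volume) (r := 2) (by simp)
    exact h.const_mul 4
  set ψ : ℝ → ℝ := fun x => 4 * (1 + |x|) ^ (-(2:ℝ)) + (Ioc (-1:ℝ) 1).indicator inner x with hψ
  have hψint : Integrable ψ volume := hJap.add hInd
  have hinner_nonneg : ∀ x, 0 ≤ inner x := by
    intro x
    by_cases hx : x = 0
    · rw [hinner]; simp only []
      rw [hx]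
      rw [Real.zero_rpow (by linarith), neg_zero, Real.zero_rpow (by linarith)]
      simp
    · rw [hinner_eq x hx]; positivity
  apply Integrable.mono' hψint
  · exact ((measurable_abs.inv).mul (gfun_measurable ε)).aestronglyMeasurable
  · filter_upwards with x
    have hf0_nonneg : 0 ≤ |x|⁻¹ * min (|x| ^ ε) |x|⁻¹ := by
      apply mul_nonneg (by positivity) (le_min (by positivity) (by positivity))
    rw [Real.norm_eq_abs, abs_of_nonneg hf0_nonneg]
    by_cases hx : x = 0
    · rw [hx]
      simp only [abs_zero, inv_zero, zero_mul]
      apply add_nonneg (by positivity)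
      exact indicator_nonneg (fun y _ => hinner_nonneg y) 0
    by_cases hmem : x ∈ Ioc (-1:ℝ) 1
    · have habs : |x| ≤ 1 := by
        rw [abs_le]
        exact ⟨hmem.1.le, hmem.2⟩
      have hxpos : 0 < |x| := abs_pos.mpr hx
      calc |x|⁻¹ * min (|x| ^ ε) |x|⁻¹ ≤ |x|⁻¹ * |x| ^ ε :=
            mul_le_mul_of_nonneg_left (min_le_left _ _) (by positivity)
        _ = |x| ^ (ε - 1) := by
            rw [← Real.rpow_neg_one |x|, ← Real.rpow_add hxpos]
            congr 1; ring
        _ = (Ioc (-1:ℝ) 1).indicator inner x := by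
            rw [indicator_of_mem hmem, hinner_eq x hx]
        _ ≤ ψ x := by
            rw [hψ]
            simp only []
            have : (0:ℝ) ≤ 4 * (1 + |x|) ^ (-(2:ℝ)) := by positivity
            linarith
    · have habs : 1 ≤ |x| := by
        rcases not_and_or.mp hmem with h | h
        · push_neg at h
          rw [abs_of_nonpos (by linarith)]
          linarith
        · push_neg at h
          rw [abs_of_pos (by linarith)]
          linarith
      have hxpos : (0:ℝ) < |x| := by linarith
      calc |x|⁻¹ * min (|x| ^ ε) |x|⁻¹ ≤ |x|⁻¹ * |x|⁻¹ :=
            mul_le_mul_of_nonneg_left (min_le_right _ _) (by positivity)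
        _ ≤ 4 * (1 + |x|) ^ (-(2:ℝ)) := by
            rw [Real.rpow_neg (by positivity),
              show ((2:ℝ)) = ((2:ℕ):ℝ) from by norm_cast, Real.rpow_natCast]
            rw [← mul_inv, ← one_div, ← div_eq_mul_inv]
            rw [div_le_div_iff₀ (by positivity) (by positivity)]
            nlinarith
        _ ≤ ψ x := by
            rw [hψ]
            simp only []
            rw [indicator_of_notMem hmem]
            linarith

instance : SigmaFinite mulHaar :=
  SigmaFinite.withDensity_of_ne_top' (fun _ => ENNReal.ofReal_ne_top)

private lemma K_lt_top {ε : ℝ} (hε0 : 0 < ε) (hε : ε < 1/2) :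
    ∫⁻ x, ENNReal.ofReal (gfun ε x) ∂mulHaar < ⊤ := by
  rw [mulHaar, lintegral_withDensity_eq_lintegral_mul _ (f := fun a : ℝ => ENNReal.ofReal |a|⁻¹)
    (measurable_abs.inv.ennreal_ofReal) ((gfun_measurable ε).ennreal_ofReal)]
  have hoR : ∀ a : ℝ, (ENNReal.ofReal |a|⁻¹ * ENNReal.ofReal (gfun ε a))
      = ENNReal.ofReal (|a|⁻¹ * min (|a| ^ ε) |a|⁻¹) := by
    intro a
    rw [ENNReal.ofReal_mul (by positivity)]
    rfl
  calc ∫⁻ a, ((fun a => ENNReal.ofReal |a|⁻¹) * fun x => ENNReal.ofReal (gfun ε x)) a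
      = ∫⁻ a, ENNReal.ofReal (|a|⁻¹ * min (|a| ^ ε) |a|⁻¹) := by
        apply lintegral_congr
        intro a
        simp only [Pi.mul_apply]
        exact hoR a
    _ < ⊤ := (integrable_g hε0 hε).lintegral_lt_top
set_option maxHeartbeats 2000000 in
/-- Lemma 9.6 (archimedean case `F = ℝ`). -/
theorem stmt10
    (d₁ d₂ d₃ : ℕ) (hd₁e : Even d₁) (hd₂e : Even d₂) (hd₃e : Even d₃)
    (hd₁ : 4 ≤ d₁) (hd₂ : 4 ≤ d₂) (hd₃ : 4 ≤ d₃)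
    (ε : ℝ) (hε0 : 0 < ε) (hε : ε < 1 / 2)
    (M₁ : SchwartzMap (ℝ × ℝ × ℝ × ℝ) ℂ) :
    ∃ J : SchwartzMap ℝ ℝ, (∀ x, 0 ≤ J x) ∧
      ∃ C : ℝ, 0 < C ∧
        ∀ c : ℝ, c ≠ 0 →
          (∫⁻ a : ℝ × ℝ × ℝ, ENNReal.ofReal
              (‖M₁ (c / (a.1 * a.2.1 * a.2.2), a.1 * c / (a.1 * a.2.1 * a.2.2),
                  a.2.1, a.2.2)‖ *
                |a.1 * a.2.1 * a.2.2 / c| ^ (-(d₁ : ℝ) / 2) *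
                (|a.1| ^ ((d₁ : ℝ) / 2 - 1) * |a.2.1| ^ ((d₂ : ℝ) / 2 - 1) *
                  |a.2.2| ^ ((d₃ : ℝ) / 2 - 1))) ∂mulHaar3)
          ≤ ENNReal.ofReal
              (C * J c * |c| ^ ((min d₁ (min d₂ d₃) : ℝ) / 2 - 1 - ε)) := by
  have hcast : (min (d₁:ℝ) (min (d₂:ℝ) (d₃:ℝ))) = ((min d₁ (min d₂ d₃) : ℕ) : ℝ) := by
    push_cast
    rfl
  set m : ℕ := min d₁ (min d₂ d₃) with hm
  set α : ℝ := (m : ℝ) / 2 - 1 - ε with hα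
  set N₀ : ℕ := d₁ + d₂ + d₃ with hN₀
  have hα_goal : (min (d₁:ℝ) (min (d₂:ℝ) (d₃:ℝ)) / 2 - 1 - ε) = α := by
    rw [hcast]
  have hαnn : 0 ≤ α := by
    have h4 : (4:ℝ) ≤ (m:ℝ) := by
      have : 4 ≤ m := by omega
      exact_mod_cast this
    rw [hα]; linarith
  -- finiteness of the Haar integral of g
  set K : ℝ≥0∞ := ∫⁻ x, ENNReal.ofReal (gfun ε x) ∂mulHaar with hKdef
  have hKlt : K < ⊤ := K_lt_top hε0 hε
  set KR : ℝ := (K * (K * K)).toReal + 1 with hKRdef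
  have hK3ne : K * (K * K) ≠ ⊤ := by
    exact ENNReal.mul_ne_top hKlt.ne (ENNReal.mul_ne_top hKlt.ne hKlt.ne)
  have hK3 : K * (K * K) ≤ ENNReal.ofReal KR := by
    rw [hKRdef]
    calc K * (K * K) = ENNReal.ofReal ((K * (K * K)).toReal) := (ENNReal.ofReal_toReal hK3ne).symm
      _ ≤ ENNReal.ofReal ((K * (K * K)).toReal + 1) := ENNReal.ofReal_le_ofReal (by linarith)
  have hKRpos : 0 < KR := by
    rw [hKRdef]
    have := ENNReal.toReal_nonneg (a := K * (K * K))
    linarith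
  have hFmeas : Measurable (fun x : ℝ => ENNReal.ofReal (gfun ε x)) :=
    (gfun_measurable ε).ennreal_ofReal
  -- the per-n bound
  have main : ∀ n : ℕ, ∃ Cn : ℝ, 0 < Cn ∧ ∀ c : ℝ, c ≠ 0 →
      (∫⁻ a : ℝ × ℝ × ℝ, ENNReal.ofReal
          (‖M₁ (c / (a.1 * a.2.1 * a.2.2), a.1 * c / (a.1 * a.2.1 * a.2.2),
              a.2.1, a.2.2)‖ *
            |a.1 * a.2.1 * a.2.2 / c| ^ (-(d₁ : ℝ) / 2) *
            (|a.1| ^ ((d₁ : ℝ) / 2 - 1) * |a.2.1| ^ ((d₂ : ℝ) / 2 - 1) *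
              |a.2.2| ^ ((d₃ : ℝ) / 2 - 1))) ∂mulHaar3)
      ≤ ENNReal.ofReal (Cn * (((1 + |c|) ^ n)⁻¹ * |c| ^ α)) := by
    intro n
    set B : ℝ := 2 ^ (4 * (n + N₀)) *
      ((Finset.Iic ((4 * (n + N₀), 0) : ℕ × ℕ)).sup
        (fun m' => SchwartzMap.seminorm ℝ m'.1 m'.2)) M₁ with hB
    have hBnn : 0 ≤ B := by
      rw [hB]
      positivity
    have hM : ∀ x : ℝ × ℝ × ℝ × ℝ, ‖M₁ x‖ *
        ((1 + |x.1|) * ((1 + |x.2.1|) * ((1 + |x.2.2.1|) * (1 + |x.2.2.2|)))) ^ (n + N₀) ≤ B := by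
      intro x
      have h0 := SchwartzMap.one_add_le_sup_seminorm_apply (𝕜 := ℝ)
        (m := ((4 * (n + N₀), 0) : ℕ × ℕ)) (k := 4 * (n + N₀)) (n := 0) le_rfl le_rfl M₁ x
      rw [norm_iteratedFDeriv_zero] at h0
      have h1 : |x.1| ≤ ‖x‖ := by
        rw [← Real.norm_eq_abs]; exact norm_fst_le x
      have h2 : |x.2.1| ≤ ‖x‖ := by
        rw [← Real.norm_eq_abs]; exact (norm_fst_le x.2).trans (norm_snd_le x)
      have h3 : |x.2.2.1| ≤ ‖x‖ := by
        rw [← Real.norm_eq_abs]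
        exact ((norm_fst_le x.2.2).trans (norm_snd_le x.2)).trans (norm_snd_le x)
      have h4 : |x.2.2.2| ≤ ‖x‖ := by
        rw [← Real.norm_eq_abs]
        exact ((norm_snd_le x.2.2).trans (norm_snd_le x.2)).trans (norm_snd_le x)
      have hxnn : (0:ℝ) ≤ ‖x‖ := norm_nonneg x
      have h5 : (1 + |x.1|) * ((1 + |x.2.1|) * ((1 + |x.2.2.1|) * (1 + |x.2.2.2|)))
          ≤ (1 + ‖x‖) ^ 4 := by
        have e : (1 + ‖x‖) ^ 4 = (1 + ‖x‖) * ((1 + ‖x‖) * ((1 + ‖x‖) * (1 + ‖x‖))) := by ring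
        rw [e]
        have p1 : (0:ℝ) ≤ 1 + |x.2.2.2| := by positivity
        have p2 : (0:ℝ) ≤ 1 + |x.2.2.1| := by positivity
        have p3 : (0:ℝ) ≤ 1 + |x.2.1| := by positivity
        have p4 : (0:ℝ) ≤ 1 + |x.1| := by positivity
        apply mul_le_mul (by linarith) _ (by positivity) (by linarith)
        apply mul_le_mul (by linarith) _ (by positivity) (by linarith)
        apply mul_le_mul (by linarith) (by linarith) (by positivity) (by linarith)
      have h6 : ((1 + |x.1|) * ((1 + |x.2.1|) * ((1 + |x.2.2.1|) * (1 + |x.2.2.2|)))) ^ (n + N₀)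
          ≤ (1 + ‖x‖) ^ (4 * (n + N₀)) := by
        calc ((1 + |x.1|) * ((1 + |x.2.1|) * ((1 + |x.2.2.1|) * (1 + |x.2.2.2|)))) ^ (n + N₀)
            ≤ ((1 + ‖x‖) ^ 4) ^ (n + N₀) := pow_le_pow_left₀ (by positivity) h5 _
          _ = (1 + ‖x‖) ^ (4 * (n + N₀)) := by rw [← pow_mul]
      calc ‖M₁ x‖ * ((1 + |x.1|) * ((1 + |x.2.1|) * ((1 + |x.2.2.1|) * (1 + |x.2.2.2|)))) ^ (n + N₀)
          ≤ ‖M₁ x‖ * (1 + ‖x‖) ^ (4 * (n + N₀)) :=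
            mul_le_mul_of_nonneg_left h6 (norm_nonneg _)
        _ = (1 + ‖x‖) ^ (4 * (n + N₀)) * ‖M₁ x‖ := by ring
        _ ≤ B := h0
    refine ⟨B * KR + 1, by positivity, fun c hc => ?_⟩
    have hc' : (0:ℝ) < |c| := abs_pos.mpr hc
    set CC : ℝ := B * (((1 + |c|) ^ n)⁻¹ * |c| ^ α) with hCC
    have hCCnn : 0 ≤ CC := by
      rw [hCC]
      positivity
    -- pointwise bound on the integrand
    have hpt : ∀ a : ℝ × ℝ × ℝ,
        ‖M₁ (c / (a.1 * a.2.1 * a.2.2), a.1 * c / (a.1 * a.2.1 * a.2.2), a.2.1, a.2.2)‖ *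
          |a.1 * a.2.1 * a.2.2 / c| ^ (-(d₁ : ℝ) / 2) *
          (|a.1| ^ ((d₁ : ℝ) / 2 - 1) * |a.2.1| ^ ((d₂ : ℝ) / 2 - 1) *
            |a.2.2| ^ ((d₃ : ℝ) / 2 - 1))
        ≤ CC * (gfun ε a.1 * (gfun ε a.2.1 * gfun ε a.2.2)) := by
      rintro ⟨a₁, a₂, a₃⟩
      dsimp only
      have hRHSnn : 0 ≤ CC * (gfun ε a₁ * (gfun ε a₂ * gfun ε a₃)) := by
        apply mul_nonneg hCCnn
        exact mul_nonneg (gfun_nonneg ε a₁) (mul_nonneg (gfun_nonneg ε a₂) (gfun_nonneg ε a₃))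
      by_cases h₁ : a₁ = 0
      · have hne : ((d₁ : ℝ) / 2 - 1) ≠ 0 := by
          have h4 : (4:ℝ) ≤ (d₁:ℝ) := by exact_mod_cast hd₁
          intro hcontr
          nlinarith
        have hz : |a₁| ^ ((d₁ : ℝ) / 2 - 1) = 0 := by
          rw [h₁, abs_zero, Real.zero_rpow hne]
        rw [hz]
        simp only [zero_mul, mul_zero]
        exact hRHSnn
      by_cases h₂ : a₂ = 0
      · have hne : ((d₂ : ℝ) / 2 - 1) ≠ 0 := by
          have h4 : (4:ℝ) ≤ (d₂:ℝ) := by exact_mod_cast hd₂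
          intro hcontr
          nlinarith
        have hz : |a₂| ^ ((d₂ : ℝ) / 2 - 1) = 0 := by
          rw [h₂, abs_zero, Real.zero_rpow hne]
        rw [hz]
        simp only [zero_mul, mul_zero]
        exact hRHSnn
      by_cases h₃ : a₃ = 0
      · have hne : ((d₃ : ℝ) / 2 - 1) ≠ 0 := by
          have h4 : (4:ℝ) ≤ (d₃:ℝ) := by exact_mod_cast hd₃
          intro hcontr
          nlinarith
        have hz : |a₃| ^ ((d₃ : ℝ) / 2 - 1) = 0 := by
          rw [h₃, abs_zero, Real.zero_rpow hne]
        rw [hz]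
        simp only [zero_mul, mul_zero]
        exact hRHSnn
      -- all coordinates nonzero
      have ht : (0:ℝ) < |a₁| := abs_pos.mpr h₁
      have hu : (0:ℝ) < |a₂| := abs_pos.mpr h₂
      have hv : (0:ℝ) < |a₃| := abs_pos.mpr h₃
      set s : ℝ := |c| / (|a₁| * |a₂| * |a₃|) with hsdef
      have hs : 0 < s := by rw [hsdef]; positivity
      have e₁ : |c / (a₁ * a₂ * a₃)| = s := by
        rw [hsdef, abs_div, abs_mul, abs_mul]
      have e₂ : |a₁ * c / (a₁ * a₂ * a₃)| = s * |a₁| := by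
        rw [hsdef, abs_div, abs_mul, abs_mul, abs_mul]
        field_simp
      have e₃ : |a₁ * a₂ * a₃ / c| ^ (-(d₁ : ℝ) / 2) = s ^ ((d₁ : ℝ) / 2) := by
        have eabs : |a₁ * a₂ * a₃ / c| = s⁻¹ := by
          rw [hsdef, inv_div, abs_div, abs_mul, abs_mul]
        rw [eabs, show -(d₁ : ℝ) / 2 = -((d₁ : ℝ) / 2) from by ring,
          Real.rpow_neg (by positivity), Real.inv_rpow hs.le, inv_inv]
      have estuv : s * |a₁| * |a₂| * |a₃| = |c| := by
        rw [hsdef]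
        field_simp
      -- Schwartz bound
      have hMx := hM (c / (a₁ * a₂ * a₃), a₁ * c / (a₁ * a₂ * a₃), a₂, a₃)
      dsimp only at hMx
      rw [e₁, e₂] at hMx
      have hpow_pos : (0:ℝ) < ((1 + s) * ((1 + s * |a₁|) * ((1 + |a₂|) * (1 + |a₃|)))) ^ (n + N₀) := by
        positivity
      have hMle : ‖M₁ (c / (a₁ * a₂ * a₃), a₁ * c / (a₁ * a₂ * a₃), a₂, a₃)‖ ≤
          B * (((1 + s) * ((1 + s * |a₁|) * ((1 + |a₂|) * (1 + |a₃|)))) ^ (n + N₀))⁻¹ := by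
        rw [← div_eq_mul_inv, le_div_iff₀ hpow_pos]
        exact hMx
      have hcore := core_bound d₁ d₂ d₃ n N₀ m hm hd₁ hd₂ hd₃ hN₀
        hε0 hε hs ht hu hv
      calc ‖M₁ (c / (a₁ * a₂ * a₃), a₁ * c / (a₁ * a₂ * a₃), a₂, a₃)‖ *
            |a₁ * a₂ * a₃ / c| ^ (-(d₁ : ℝ) / 2) *
            (|a₁| ^ ((d₁ : ℝ) / 2 - 1) * |a₂| ^ ((d₂ : ℝ) / 2 - 1) * |a₃| ^ ((d₃ : ℝ) / 2 - 1))
          ≤ (B * (((1 + s) * ((1 + s * |a₁|) * ((1 + |a₂|) * (1 + |a₃|)))) ^ (n + N₀))⁻¹) *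
            |a₁ * a₂ * a₃ / c| ^ (-(d₁ : ℝ) / 2) *
            (|a₁| ^ ((d₁ : ℝ) / 2 - 1) * |a₂| ^ ((d₂ : ℝ) / 2 - 1) * |a₃| ^ ((d₃ : ℝ) / 2 - 1)) := by
            apply mul_le_mul_of_nonneg_right _ (by positivity)
            exact mul_le_mul_of_nonneg_right hMle (by positivity)
        _ = B * (s ^ ((d₁:ℝ)/2) *
              (|a₁| ^ ((d₁:ℝ)/2 - 1) * |a₂| ^ ((d₂:ℝ)/2 - 1) * |a₃| ^ ((d₃:ℝ)/2 - 1)) *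
              (((1 + s) ^ (n + N₀))⁻¹ * ((1 + s * |a₁|) ^ (n + N₀))⁻¹ *
                ((1 + |a₂|) ^ (n + N₀))⁻¹ * ((1 + |a₃|) ^ (n + N₀))⁻¹)) := by
            rw [e₃, mul_pow, mul_pow, mul_pow, mul_inv, mul_inv, mul_inv]
            ring
        _ ≤ B * (((1 + s * |a₁| * |a₂| * |a₃|) ^ n)⁻¹ * (s * |a₁| * |a₂| * |a₃|) ^ α *
              (min (|a₁| ^ ε) |a₁|⁻¹ * (min (|a₂| ^ ε) |a₂|⁻¹ * min (|a₃| ^ ε) |a₃|⁻¹))) :=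
            mul_le_mul_of_nonneg_left hcore hBnn
        _ = CC * (gfun ε a₁ * (gfun ε a₂ * gfun ε a₃)) := by
            rw [estuv, hCC]
            simp only [gfun]
            ring
    -- integrate the pointwise bound
    calc (∫⁻ a : ℝ × ℝ × ℝ, ENNReal.ofReal
            (‖M₁ (c / (a.1 * a.2.1 * a.2.2), a.1 * c / (a.1 * a.2.1 * a.2.2),
                a.2.1, a.2.2)‖ *
              |a.1 * a.2.1 * a.2.2 / c| ^ (-(d₁ : ℝ) / 2) *
              (|a.1| ^ ((d₁ : ℝ) / 2 - 1) * |a.2.1| ^ ((d₂ : ℝ) / 2 - 1) *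
                |a.2.2| ^ ((d₃ : ℝ) / 2 - 1))) ∂mulHaar3)
        ≤ ∫⁻ a : ℝ × ℝ × ℝ, ENNReal.ofReal
            (CC * (gfun ε a.1 * (gfun ε a.2.1 * gfun ε a.2.2))) ∂mulHaar3 :=
          lintegral_mono fun a => ENNReal.ofReal_le_ofReal (hpt a)
      _ = ∫⁻ a : ℝ × ℝ × ℝ, ENNReal.ofReal CC * (ENNReal.ofReal (gfun ε a.1) *
            (ENNReal.ofReal (gfun ε a.2.1) * ENNReal.ofReal (gfun ε a.2.2))) ∂mulHaar3 := by
          apply lintegral_congr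
          intro a
          rw [ENNReal.ofReal_mul hCCnn, ENNReal.ofReal_mul (gfun_nonneg ε a.1),
            ENNReal.ofReal_mul (gfun_nonneg ε a.2.1)]
      _ = ENNReal.ofReal CC * ∫⁻ a : ℝ × ℝ × ℝ, (ENNReal.ofReal (gfun ε a.1) *
            (ENNReal.ofReal (gfun ε a.2.1) * ENNReal.ofReal (gfun ε a.2.2))) ∂mulHaar3 :=
          lintegral_const_mul' _ _ ENNReal.ofReal_ne_top
      _ = ENNReal.ofReal CC * (K * (K * K)) := by
          congr 1
          have hg2 : Measurable (fun y : ℝ × ℝ =>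
              ENNReal.ofReal (gfun ε y.1) * ENNReal.ofReal (gfun ε y.2)) :=
            (hFmeas.comp measurable_fst).mul (hFmeas.comp measurable_snd)
          rw [show mulHaar3 = mulHaar.prod (mulHaar.prod mulHaar) from rfl]
          rw [lintegral_prod_mul hFmeas.aemeasurable hg2.aemeasurable]
          rw [lintegral_prod_mul hFmeas.aemeasurable hFmeas.aemeasurable]
      _ ≤ ENNReal.ofReal CC * ENNReal.ofReal KR := mul_le_mul_right hK3 _
      _ = ENNReal.ofReal (CC * KR) := (ENNReal.ofReal_mul hCCnn).symm
      _ ≤ ENNReal.ofReal ((B * KR + 1) * (((1 + |c|) ^ n)⁻¹ * |c| ^ α)) := by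
          apply ENNReal.ofReal_le_ofReal
          rw [hCC]
          have hX : (0:ℝ) ≤ ((1 + |c|) ^ n)⁻¹ * |c| ^ α := by positivity
          nlinarith [hX, hKRpos, hBnn]
  choose Cfun hCfun using main
  obtain ⟨J, hJnn, Kc, hKc, hmaj⟩ := exists_schwartz_majorant_s10 Cfun (fun n => (hCfun n).1)
  refine ⟨J, hJnn, Kc, hKc, fun c hc => ?_⟩
  obtain ⟨n, hn⟩ := hmaj c
  rw [hα_goal]
  calc (∫⁻ a : ℝ × ℝ × ℝ, ENNReal.ofReal
          (‖M₁ (c / (a.1 * a.2.1 * a.2.2), a.1 * c / (a.1 * a.2.1 * a.2.2),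
              a.2.1, a.2.2)‖ *
            |a.1 * a.2.1 * a.2.2 / c| ^ (-(d₁ : ℝ) / 2) *
            (|a.1| ^ ((d₁ : ℝ) / 2 - 1) * |a.2.1| ^ ((d₂ : ℝ) / 2 - 1) *
              |a.2.2| ^ ((d₃ : ℝ) / 2 - 1))) ∂mulHaar3)
      ≤ ENNReal.ofReal (Cfun n * (((1 + |c|) ^ n)⁻¹ * |c| ^ α)) := (hCfun n).2 c hc
    _ ≤ ENNReal.ofReal (Kc * J c * |c| ^ α) := by
        apply ENNReal.ofReal_le_ofReal
        have h1 : Cfun n * ((1 + |c|) ^ n)⁻¹ ≤ Kc * J c := hn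
        calc Cfun n * (((1 + |c|) ^ n)⁻¹ * |c| ^ α)
            = (Cfun n * ((1 + |c|) ^ n)⁻¹) * |c| ^ α := by ring
          _ ≤ (Kc * J c) * |c| ^ α :=
              mul_le_mul_of_nonneg_right h1 (Real.rpow_nonneg (abs_nonneg c) α)
end
end
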